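/- arXiv:2204.08537 — 5 statements merged into one kernel-verified Lean document; each statement's English description precedes it below -/
import Mathlib

section
/- If a family F of subsets of an n-element set V has VC-dimension at most k, then any δ-separated subfamily of F (i.e., any subfamily in which every two distinct sets have symmetric difference of size greater than δ) has size at most c₁(n/δ)^k for some constant c₁ depending only on k. -/
open Finset

variable {V : Type*} [DecidableEq V]



/-- weighted edge sum of the unit-distance graph of the support of `w` inside ground set `T` -/
def hpES (T : Finset V) (w : Finset V → ℕ) : ℕ :=
  ∑ u ∈ T, ∑ C ∈ (T.erase u).powerset, min (w C) (w (insert u C))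

lemma hpES_le (T : Finset V) : ∀ (d : ℕ) (w : Finset V → ℕ),
    (∀ B, w B ≠ 0 → B ⊆ T) →
    (∀ X ⊆ T, (∀ Y ⊆ X, ∃ B, w B ≠ 0 ∧ B ∩ X = Y) → X.card ≤ d) →
    hpES T w ≤ d * ∑ B ∈ T.powerset, w B := by
  classical
  induction T using Finset.induction_on with
  | empty => intro d w _ _; simp [hpES]
  | @insert t T' ht IH =>
    intro d w hsupp hdim
    set w' : Finset V → ℕ := fun C => if t ∈ C then 0 else max (w C) (w (insert t C)) with hw'
    set w₂ : Finset V → ℕ := fun C => if t ∈ C then 0 else min (w C) (w (insert t C)) with hw₂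
    -- support facts
    have hsub : ∀ C : Finset V, t ∉ C → (w C ≠ 0 ∨ w (insert t C) ≠ 0) → C ⊆ T' := by
      intro C htC h x hx
      have hmem : x ∈ insert t T' := by
        rcases h with h | h
        · exact hsupp C h hx
        · exact hsupp _ h (mem_insert_of_mem hx)
      rcases mem_insert.1 hmem with rfl | h2
      · exact absurd hx htC
      · exact h2
    have hsupp' : ∀ B, w' B ≠ 0 → B ⊆ T' := by
      intro B hB
      by_cases htB : t ∈ B
      · simp [hw', htB] at hB
      · simp only [hw', if_neg htB] at hB
        exact hsub B htB (by omega)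
    have hsupp₂ : ∀ B, w₂ B ≠ 0 → B ⊆ T' := by
      intro B hB
      by_cases htB : t ∈ B
      · simp [hw₂, htB] at hB
      · simp only [hw₂, if_neg htB] at hB
        exact hsub B htB (by omega)
    -- dimension facts
    have hdim' : ∀ X ⊆ T', (∀ Y ⊆ X, ∃ B, w' B ≠ 0 ∧ B ∩ X = Y) → X.card ≤ d := by
      intro X hX hsh
      refine hdim X (hX.trans (subset_insert _ _)) ?_
      intro Y hY
      obtain ⟨B, hB, hBX⟩ := hsh Y hY
      by_cases htB : t ∈ B
      · simp [hw', htB] at hB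
      · simp only [hw', if_neg htB] at hB
        rcases (by omega : w B ≠ 0 ∨ w (insert t B) ≠ 0) with h | h
        · exact ⟨B, h, hBX⟩
        · refine ⟨insert t B, h, ?_⟩
          rw [insert_inter_of_notMem (fun h' => ht (hX h')), hBX]
    have hdim₂s : ∀ X ⊆ T', (∀ Y ⊆ X, ∃ B, w₂ B ≠ 0 ∧ B ∩ X = Y) → X.card + 1 ≤ d := by
      intro X hX hsh
      have htX : t ∉ X := fun h => ht (hX h)
      have h2 : ∀ Y ⊆ insert t X, ∃ B, w B ≠ 0 ∧ B ∩ insert t X = Y := by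
        intro Y hY
        by_cases htY : t ∈ Y
        · have hYX : Y.erase t ⊆ X := by
            intro x hx
            exact mem_of_mem_insert_of_ne (hY (erase_subset _ _ hx)) (ne_of_mem_erase hx)
          obtain ⟨B, hB, hBX⟩ := hsh (Y.erase t) hYX
          by_cases htB : t ∈ B
          · simp [hw₂, htB] at hB
          · simp only [hw₂, if_neg htB] at hB
            refine ⟨insert t B, by omega, ?_⟩
            rw [insert_inter_of_mem (mem_insert_self t X),
              inter_insert_of_notMem htB, hBX, insert_erase htY]
        · have hYX : Y ⊆ X := by
            intro x hx
            exact mem_of_mem_insert_of_ne (hY hx) (by rintro rfl; exact htY hx)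
          obtain ⟨B, hB, hBX⟩ := hsh Y hYX
          by_cases htB : t ∈ B
          · simp [hw₂, htB] at hB
          · simp only [hw₂, if_neg htB] at hB
            refine ⟨B, by omega, ?_⟩
            rw [inter_insert_of_notMem htB, hBX]
      have := hdim (insert t X) (insert_subset_insert _ hX) h2
      rwa [card_insert_of_notMem htX] at this
    -- totals
    have htot : ∑ B ∈ (insert t T').powerset, w B
        = (∑ C ∈ T'.powerset, w' C) + ∑ C ∈ T'.powerset, w₂ C := by
      rw [Finset.sum_powerset_insert ht w]
      rw [show (∑ C ∈ T'.powerset, w C) + ∑ C ∈ T'.powerset, w (insert t C)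
          = ∑ C ∈ T'.powerset, (w C + w (insert t C)) from Finset.sum_add_distrib.symm]
      rw [show (∑ C ∈ T'.powerset, w' C) + ∑ C ∈ T'.powerset, w₂ C
          = ∑ C ∈ T'.powerset, (w' C + w₂ C) from Finset.sum_add_distrib.symm]
      refine sum_congr rfl fun C hC => ?_
      have htC : t ∉ C := fun h => ht ((mem_powerset.1 hC) h)
      simp only [hw', hw₂, if_neg htC]
      omega
    -- edge sum split
    have hinner_t : ∑ C ∈ ((insert t T').erase t).powerset, min (w C) (w (insert t C))
        = ∑ C ∈ T'.powerset, w₂ C := by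
      rw [erase_insert ht]
      refine sum_congr rfl fun C hC => ?_
      have htC : t ∉ C := fun h => ht ((mem_powerset.1 hC) h)
      simp only [hw₂, if_neg htC]
    have hES : hpES (insert t T') w
        ≤ (∑ C ∈ T'.powerset, w₂ C) + (hpES T' w' + hpES T' w₂) := by
      rw [hpES, sum_insert ht, hinner_t]
      refine Nat.add_le_add_left ?_ _
      rw [hpES, hpES, ← Finset.sum_add_distrib]
      refine sum_le_sum fun u hu => ?_
      have htu : t ≠ u := fun h => ht (h ▸ hu)
      rw [erase_insert_of_ne htu,
        Finset.sum_powerset_insert (fun h => ht (erase_subset _ _ h))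
          (fun C => min (w C) (w (insert u C)))]
      rw [← Finset.sum_add_distrib]
      refine le_trans (sum_le_sum fun C hC => ?_) (le_of_eq Finset.sum_add_distrib)
      have hCsub : C ⊆ T'.erase u := mem_powerset.1 hC
      have htC : t ∉ C := fun h => ht (erase_subset _ _ (hCsub h))
      have huC : u ∉ C := fun h => notMem_erase u T' (hCsub h)
      have htuC : t ∉ insert u C := by
        simp only [mem_insert]
        rintro (rfl | h)
        · exact htu rfl
        · exact htC h
      simp only [hw', hw₂, if_neg htC, if_neg htuC, Finset.insert_comm u t C]
      omega
    -- apply IH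
    have hIH' : hpES T' w' ≤ d * ∑ C ∈ T'.powerset, w' C := IH d w' hsupp' hdim'
    by_cases h2 : ∀ B, w₂ B = 0
    · have hz : ∑ C ∈ T'.powerset, w₂ C = 0 := by
        refine sum_eq_zero fun C _ => h2 C
      have hz2 : hpES T' w₂ = 0 := by
        rw [hpES]
        refine sum_eq_zero fun u _ => sum_eq_zero fun C _ => by rw [h2 C]; simp
      rw [htot, hz, Nat.add_zero]
      have := hES
      rw [hz, hz2] at this
      simp only [Nat.zero_add, Nat.add_zero] at this
      exact this.trans hIH'
    · push_neg at h2
      obtain ⟨B₀, hB₀⟩ := h2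
      have hd1 : 1 ≤ d := by
        have := hdim₂s ∅ (empty_subset _) ?_
        · omega
        · intro Y hY
          rw [Finset.subset_empty] at hY
          subst hY
          exact ⟨B₀, hB₀, inter_empty _⟩
      have hdim₂ : ∀ X ⊆ T', (∀ Y ⊆ X, ∃ B, w₂ B ≠ 0 ∧ B ∩ X = Y) → X.card ≤ d - 1 := by
        intro X hX hsh
        have := hdim₂s X hX hsh
        omega
      have hIH₂ : hpES T' w₂ ≤ (d - 1) * ∑ C ∈ T'.powerset, w₂ C := IH (d-1) w₂ hsupp₂ hdim₂
      rw [htot]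
      obtain ⟨e, rfl⟩ : ∃ e, d = e + 1 := ⟨d - 1, by omega⟩
      simp only [Nat.add_sub_cancel] at hIH₂
      calc hpES (insert t T') w
          ≤ (∑ C ∈ T'.powerset, w₂ C) + (hpES T' w' + hpES T' w₂) := hES
        _ ≤ (∑ C ∈ T'.powerset, w₂ C) + ((e+1) * (∑ C ∈ T'.powerset, w' C)
              + e * ∑ C ∈ T'.powerset, w₂ C) := by
            exact Nat.add_le_add_left (add_le_add hIH' hIH₂) _
        _ = (e+1) * ((∑ C ∈ T'.powerset, w' C) + ∑ C ∈ T'.powerset, w₂ C) := by ring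

lemma hp_card_filter_le (S : Finset V) (k : ℕ) :
    (S.powerset.filter fun X => X.card ≤ k).card ≤ (S.card + 1) ^ k := by
  induction k with
  | zero =>
    simp only [pow_zero]
    refine card_le_one.2 ?_
    intro a ha b hb
    simp only [mem_filter, mem_powerset, Nat.le_zero, card_eq_zero] at ha hb
    rw [ha.2, hb.2]
  | succ k ih =>
    have hsub : (S.powerset.filter fun X => X.card ≤ k + 1)
        ⊆ (S.powerset.filter fun X => X.card ≤ k) ∪ S.powersetCard (k+1) := by
      intro X hX
      simp only [mem_filter, mem_powerset] at hX
      simp only [mem_union, mem_filter, mem_powerset, mem_powersetCard]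
      rcases Nat.lt_or_ge X.card (k+1) with h | h
      · exact Or.inl ⟨hX.1, by omega⟩
      · exact Or.inr ⟨hX.1, by omega⟩
    have h1 : S.card.choose k ≤ (S.powerset.filter fun X => X.card ≤ k).card := by
      rw [← card_powersetCard]
      refine card_le_card ?_
      intro X hX
      rw [mem_powersetCard] at hX
      rw [mem_filter, mem_powerset]
      exact ⟨hX.1, le_of_eq hX.2⟩
    have h2 : S.card.choose (k+1) ≤ S.card * S.card.choose k := by
      have := Nat.choose_succ_right_eq S.card k
      have h3 : S.card.choose (k+1) ≤ S.card.choose (k+1) * (k+1) := by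
        nlinarith [Nat.choose_pos (le_refl 0)]
      calc S.card.choose (k+1) ≤ S.card.choose (k+1) * (k+1) := Nat.le_mul_of_pos_right _ (by omega)
        _ = S.card.choose k * (S.card - k) := this
        _ ≤ S.card.choose k * S.card := Nat.mul_le_mul_left _ (by omega)
        _ = S.card * S.card.choose k := Nat.mul_comm _ _
    calc (S.powerset.filter fun X => X.card ≤ k + 1).card
        ≤ ((S.powerset.filter fun X => X.card ≤ k) ∪ S.powersetCard (k+1)).card :=
          card_le_card hsub
      _ ≤ (S.powerset.filter fun X => X.card ≤ k).card + (S.powersetCard (k+1)).card :=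
          card_union_le _ _
      _ = (S.powerset.filter fun X => X.card ≤ k).card + S.card.choose (k+1) := by
          rw [card_powersetCard]
      _ ≤ (S.powerset.filter fun X => X.card ≤ k).card
            + S.card * (S.powerset.filter fun X => X.card ≤ k).card := by
          have := h2.trans (Nat.mul_le_mul_left _ h1)
          omega
      _ = (S.card + 1) * (S.powerset.filter fun X => X.card ≤ k).card := by ring
      _ ≤ (S.card + 1) * (S.card + 1) ^ k := Nat.mul_le_mul_left _ ih
      _ = (S.card + 1) ^ (k + 1) := by ring

lemma hp_trace_le (k : ℕ) (𝒳 : Finset (Finset V)) (S : Finset V)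
    (hdim : ∀ X : Finset V, (∀ Y ⊆ X, ∃ A ∈ 𝒳, A ∩ X = Y) → X.card ≤ k) :
    (𝒳.image (· ∩ S)).card ≤ (S.card + 1) ^ k := by
  refine le_trans (card_le_card_shatterer _) (le_trans (card_le_card ?_) (hp_card_filter_le S k))
  intro X hX
  rw [mem_shatterer] at hX
  have hXS : X ⊆ S := by
    obtain ⟨u, hu, hXu⟩ := hX (Finset.Subset.refl X)
    obtain ⟨A, hA, rfl⟩ := mem_image.1 hu
    intro x hx
    have hxm : x ∈ X ∩ (A ∩ S) := hXu.symm ▸ hx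
    exact (mem_inter.1 (mem_inter.1 hxm).2).2
  rw [mem_filter, mem_powerset]
  refine ⟨hXS, hdim X ?_⟩
  intro Y hY
  obtain ⟨u, hu, hXu⟩ := hX hY
  obtain ⟨A, hA, rfl⟩ := mem_image.1 hu
  refine ⟨A, hA, ?_⟩
  rw [← hXu]
  ext x
  simp only [mem_inter]
  constructor
  · rintro ⟨hA, hX⟩; exact ⟨hX, hA, hXS hX⟩
  · rintro ⟨hX, hA, _⟩; exact ⟨hA, hX⟩

def hpwt (𝒳 : Finset (Finset V)) (S B : Finset V) : ℕ := (𝒳.filter fun A => A ∩ S = B).card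

def hpG [Fintype V] (𝒳 : Finset (Finset V)) (S' : Finset V) (y : V) : ℕ :=
  ∑ C ∈ S'.powerset, min (hpwt 𝒳 (insert y S') C) (hpwt 𝒳 (insert y S') (insert y C))

lemma hpwt_not (𝒳 : Finset (Finset V)) {S' C : Finset V} {y : V} (hy : y ∉ S') (hC : C ⊆ S') :
    hpwt 𝒳 (insert y S') C = ((𝒳.filter fun A => A ∩ S' = C).filter fun A => y ∉ A).card := by
  rw [hpwt, filter_filter]
  congr 1
  refine filter_congr fun A _ => ?_
  constructor
  · intro h
    have hyA : y ∉ A := by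
      intro hyA
      have : y ∈ C := h ▸ (mem_inter.2 ⟨hyA, mem_insert_self _ _⟩)
      exact hy (hC this)
    rw [inter_insert_of_notMem hyA] at h
    exact ⟨h, hyA⟩
  · rintro ⟨h1, h2⟩
    rw [inter_insert_of_notMem h2, h1]

lemma hpwt_mem (𝒳 : Finset (Finset V)) {S' C : Finset V} {y : V} (hy : y ∉ S') (hC : C ⊆ S') :
    hpwt 𝒳 (insert y S') (insert y C)
      = ((𝒳.filter fun A => A ∩ S' = C).filter fun A => y ∈ A).card := by
  rw [hpwt, filter_filter]
  congr 1
  refine filter_congr fun A _ => ?_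
  have hyC : y ∉ C := fun h => hy (hC h)
  constructor
  · intro h
    have hyA : y ∈ A := by
      by_contra hyA
      rw [inter_insert_of_notMem hyA] at h
      have : y ∈ A ∩ S' := h ▸ mem_insert_self _ _
      exact hy (mem_inter.1 this).2
    refine ⟨?_, hyA⟩
    have h2 : insert y (S' ∩ A) = insert y C := by
      rw [← insert_inter_of_mem hyA, inter_comm]
      exact h
    have hyS'A : y ∉ S' ∩ A := fun h => hy (mem_inter.1 h).1
    calc A ∩ S' = S' ∩ A := inter_comm _ _
      _ = (insert y (S' ∩ A)).erase y := (erase_insert hyS'A).symm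
      _ = (insert y C).erase y := by rw [h2]
      _ = C := erase_insert hyC
  · rintro ⟨h1, h2⟩
    calc A ∩ insert y S' = insert y S' ∩ A := inter_comm _ _
      _ = insert y (S' ∩ A) := insert_inter_of_mem h2
      _ = insert y (A ∩ S') := by rw [inter_comm]
      _ = insert y C := by rw [h1]

lemma hp_class_lower [Fintype V] (K : Finset (Finset V)) (S' : Finset V) (δ : ℝ) (hδ : 0 ≤ δ)
    (hagree : ∀ A ∈ K, ∀ B ∈ K, A ∩ S' = B ∩ S')
    (hsep : ∀ A ∈ K, ∀ B ∈ K, A ≠ B → δ < ((symmDiff A B).card : ℝ)) :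
    (K.card : ℝ) * ((K.card : ℝ) - 1) * δ / 2
      ≤ (K.card : ℝ) * ∑ y ∈ S'ᶜ,
          ((min ((K.filter fun A => y ∉ A).card) ((K.filter fun A => y ∈ A).card) : ℕ) : ℝ) := by
  classical
  -- Step 2 (ℕ): ∑_y a_y b_y = ∑_A ∑_B |B \ A|
  have hstep2 : ∑ y ∈ S'ᶜ, ((K.filter fun A => y ∉ A).card) * ((K.filter fun A => y ∈ A).card)
      = ∑ A ∈ K, ∑ B ∈ K, (B \ A).card := by
    have hab : ∀ y : V, ((K.filter fun A => y ∉ A).card) * ((K.filter fun A => y ∈ A).card)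
        = ∑ A ∈ K, ∑ B ∈ K, (if y ∉ A ∧ y ∈ B then 1 else 0) := by
      intro y
      rw [Finset.card_filter, Finset.card_filter, Finset.sum_mul_sum]
      refine sum_congr rfl fun A _ => sum_congr rfl fun B _ => ?_
      split_ifs <;> simp_all
    calc ∑ y ∈ S'ᶜ, ((K.filter fun A => y ∉ A).card) * ((K.filter fun A => y ∈ A).card)
        = ∑ y ∈ S'ᶜ, ∑ A ∈ K, ∑ B ∈ K, (if y ∉ A ∧ y ∈ B then 1 else 0) := by
          exact sum_congr rfl fun y _ => hab y
      _ = ∑ A ∈ K, ∑ B ∈ K, ∑ y ∈ S'ᶜ, (if y ∉ A ∧ y ∈ B then 1 else 0) := by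
          rw [Finset.sum_comm]
          exact sum_congr rfl fun A _ => Finset.sum_comm
      _ = ∑ A ∈ K, ∑ B ∈ K, (B \ A).card := by
          refine sum_congr rfl fun A hA => sum_congr rfl fun B hB => ?_
          rw [← Finset.card_filter]
          congr 1
          ext y
          simp only [mem_filter, mem_compl, mem_sdiff]
          constructor
          · rintro ⟨_, h1, h2⟩; exact ⟨h2, h1⟩
          · rintro ⟨h2, h1⟩
            refine ⟨fun hyS' => ?_, h1, h2⟩
            have : y ∈ B ∩ S' := mem_inter.2 ⟨h2, hyS'⟩
            rw [hagree B hB A hA] at this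
            exact h1 (mem_inter.1 this).1
  -- Step 1: a*b ≤ K.card * min a b pointwise
  have hstep1 : ∑ y ∈ S'ᶜ, ((K.filter fun A => y ∉ A).card) * ((K.filter fun A => y ∈ A).card)
      ≤ K.card * ∑ y ∈ S'ᶜ,
          min ((K.filter fun A => y ∉ A).card) ((K.filter fun A => y ∈ A).card) := by
    rw [Finset.mul_sum]
    refine sum_le_sum fun y _ => ?_
    have hcard : ((K.filter fun A => y ∈ A).card) + ((K.filter fun A => ¬ y ∈ A).card) = K.card :=
      card_filter_add_card_filter_not _
    set a := (K.filter fun A => y ∉ A).card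
    set b := (K.filter fun A => y ∈ A).card
    have hab : a + b = K.card := by omega
    rcases Nat.le_total a b with h | h
    · rw [min_eq_left h, ← hab]; nlinarith
    · rw [min_eq_right h, ← hab]; nlinarith
  -- Step 3 (ℝ): ∑_A ∑_B |B \ A| ≥ K.card (K.card - 1) δ / 2
  have hsd : ∀ A ∈ K, ∀ B ∈ K, ((A \ B).card : ℝ) + ((B \ A).card : ℝ)
      = ((symmDiff A B).card : ℝ) := by
    intro A _ B _
    rw [symmDiff_def, Finset.sup_eq_union, card_union_of_disjoint disjoint_sdiff_sdiff]
    push_cast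
    ring
  have hstep3 : (K.card : ℝ) * ((K.card : ℝ) - 1) * δ
      ≤ 2 * ∑ A ∈ K, ∑ B ∈ K, ((B \ A).card : ℝ) := by
    have hsymm : ∑ A ∈ K, ∑ B ∈ K, ((B \ A).card : ℝ)
        = ∑ A ∈ K, ∑ B ∈ K, ((A \ B).card : ℝ) := Finset.sum_comm
    have h2 : 2 * ∑ A ∈ K, ∑ B ∈ K, ((B \ A).card : ℝ)
        = ∑ A ∈ K, ∑ B ∈ K, ((symmDiff A B).card : ℝ) := by
      rw [two_mul]
      nth_rewrite 1 [hsymm]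
      rw [← Finset.sum_add_distrib]
      refine sum_congr rfl fun A hA => ?_
      rw [← Finset.sum_add_distrib]
      exact sum_congr rfl fun B hB => hsd A hA B hB
    rw [h2]
    have hinner : ∀ A ∈ K, ((K.card : ℝ) - 1) * δ ≤ ∑ B ∈ K, ((symmDiff A B).card : ℝ) := by
      intro A hA
      calc ((K.card : ℝ) - 1) * δ = ∑ _B ∈ K.erase A, δ := by
            rw [sum_const, card_erase_of_mem hA, nsmul_eq_mul]
            have h1 : 1 ≤ K.card := card_pos.2 ⟨A, hA⟩
            push_cast [Nat.cast_sub h1]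
            ring
        _ ≤ ∑ B ∈ K.erase A, ((symmDiff A B).card : ℝ) := by
            refine sum_le_sum fun B hB => ?_
            exact le_of_lt (hsep A hA B (mem_of_mem_erase hB) (Ne.symm (ne_of_mem_erase hB)))
        _ ≤ ∑ B ∈ K, ((symmDiff A B).card : ℝ) := by
            refine sum_le_sum_of_subset_of_nonneg (erase_subset _ _) fun B _ _ => by positivity
    calc (K.card : ℝ) * ((K.card : ℝ) - 1) * δ = ∑ _A ∈ K, ((K.card : ℝ) - 1) * δ := by
          rw [sum_const, nsmul_eq_mul]; ring
      _ ≤ ∑ A ∈ K, ∑ B ∈ K, ((symmDiff A B).card : ℝ) := sum_le_sum hinner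
  -- combine
  have hcast : (∑ A ∈ K, ∑ B ∈ K, ((B \ A).card : ℝ))
      ≤ (K.card : ℝ) * ∑ y ∈ S'ᶜ,
          ((min ((K.filter fun A => y ∉ A).card) ((K.filter fun A => y ∈ A).card) : ℕ) : ℝ) := by
    have := hstep2 ▸ hstep1
    calc (∑ A ∈ K, ∑ B ∈ K, ((B \ A).card : ℝ))
        = ((∑ A ∈ K, ∑ B ∈ K, (B \ A).card : ℕ) : ℝ) := by push_cast; rfl
      _ ≤ ((K.card * ∑ y ∈ S'ᶜ,
            min ((K.filter fun A => y ∉ A).card) ((K.filter fun A => y ∈ A).card) : ℕ) : ℝ) := by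
          exact_mod_cast this
      _ = (K.card : ℝ) * ∑ y ∈ S'ᶜ,
            ((min ((K.filter fun A => y ∉ A).card) ((K.filter fun A => y ∈ A).card) : ℕ) : ℝ) := by
          push_cast; rfl
  linarith

lemma hp_lower_S' [Fintype V] (𝒳 : Finset (Finset V)) (δ : ℝ) (hδ : 0 ≤ δ)
    (hsep : ∀ A ∈ 𝒳, ∀ B ∈ 𝒳, A ≠ B → δ < ((symmDiff A B).card : ℝ)) (S' : Finset V) :
    ((𝒳.card : ℝ) - ((𝒳.image (· ∩ S')).card : ℝ)) * δ / 2 ≤ ∑ y ∈ S'ᶜ, (hpG 𝒳 S' y : ℝ) := by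
  classical
  set T := 𝒳.image (· ∩ S') with hT
  have hTsub : T ⊆ S'.powerset := by
    intro C hC
    obtain ⟨A, _, rfl⟩ := mem_image.1 hC
    exact mem_powerset.2 (inter_subset_right)
  -- restrict the powerset sum to T
  have h1 : ∀ y, ∑ C ∈ T, (min (hpwt 𝒳 (insert y S') C) (hpwt 𝒳 (insert y S') (insert y C)) : ℝ)
      ≤ (hpG 𝒳 S' y : ℝ) := by
    intro y
    rw [hpG]
    push_cast
    exact sum_le_sum_of_subset_of_nonneg hTsub fun C _ _ => by positivity
  have h2 : ∑ y ∈ S'ᶜ, ∑ C ∈ T,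
        (min (hpwt 𝒳 (insert y S') C) (hpwt 𝒳 (insert y S') (insert y C)) : ℝ)
      ≤ ∑ y ∈ S'ᶜ, (hpG 𝒳 S' y : ℝ) := sum_le_sum fun y _ => h1 y
  -- per trace class
  have h3 : ∀ C ∈ T, (((𝒳.filter fun A => A ∩ S' = C).card : ℝ) - 1) * δ / 2
      ≤ ∑ y ∈ S'ᶜ, (min (hpwt 𝒳 (insert y S') C) (hpwt 𝒳 (insert y S') (insert y C)) : ℝ) := by
    intro C hC
    set K := 𝒳.filter fun A => A ∩ S' = C with hK
    have hCsub : C ⊆ S' := mem_powerset.1 (hTsub hC)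
    have hKpos : 0 < K.card := by
      obtain ⟨A, hA, hAC⟩ := mem_image.1 hC
      exact card_pos.2 ⟨A, mem_filter.2 ⟨hA, hAC⟩⟩
    have hagree : ∀ A ∈ K, ∀ B ∈ K, A ∩ S' = B ∩ S' := by
      intro A hA B hB
      rw [(mem_filter.1 hA).2, (mem_filter.1 hB).2]
    have hsepK : ∀ A ∈ K, ∀ B ∈ K, A ≠ B → δ < ((symmDiff A B).card : ℝ) := by
      intro A hA B hB
      exact hsep A (mem_filter.1 hA).1 B (mem_filter.1 hB).1
    have hcl := hp_class_lower K S' δ hδ hagree hsepK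
    have hrw : ∀ y ∈ S'ᶜ,
        ((min ((K.filter fun A => y ∉ A).card) ((K.filter fun A => y ∈ A).card) : ℕ) : ℝ)
        = (min (hpwt 𝒳 (insert y S') C) (hpwt 𝒳 (insert y S') (insert y C)) : ℝ) := by
      intro y hy
      rw [hpwt_not 𝒳 (mem_compl.1 hy) hCsub, hpwt_mem 𝒳 (mem_compl.1 hy) hCsub]
      push_cast
      rfl
    rw [Finset.sum_congr rfl hrw] at hcl
    have hKR : (0 : ℝ) < (K.card : ℝ) := by exact_mod_cast hKpos
    rw [show (K.card : ℝ) * ((K.card : ℝ) - 1) * δ / 2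
        = (K.card : ℝ) * (((K.card : ℝ) - 1) * δ / 2) from by ring] at hcl
    exact le_of_mul_le_mul_left hcl hKR
  -- sum over trace classes
  have h4 : ∑ C ∈ T, ((((𝒳.filter fun A => A ∩ S' = C).card : ℝ) - 1) * δ / 2)
      ≤ ∑ y ∈ S'ᶜ, (hpG 𝒳 S' y : ℝ) := by
    refine le_trans (sum_le_sum h3) (le_trans (le_of_eq Finset.sum_comm) h2)
  have h5 : ∑ C ∈ T, ((((𝒳.filter fun A => A ∩ S' = C).card : ℝ) - 1) * δ / 2)
      = ((𝒳.card : ℝ) - (T.card : ℝ)) * δ / 2 := by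
    have hfib : (𝒳.card : ℕ) = ∑ C ∈ T, (𝒳.filter fun A => A ∩ S' = C).card :=
      card_eq_sum_card_fiberwise fun A hA => mem_image.2 ⟨A, hA, rfl⟩
    have : ∑ C ∈ T, ((((𝒳.filter fun A => A ∩ S' = C).card : ℝ)) - 1)
        = (𝒳.card : ℝ) - T.card := by
      rw [Finset.sum_sub_distrib, sum_const, nsmul_eq_mul, mul_one]
      congr 1
      rw [hfib]
      push_cast
      rfl
    calc ∑ C ∈ T, ((((𝒳.filter fun A => A ∩ S' = C).card : ℝ) - 1) * δ / 2)
        = (∑ C ∈ T, (((𝒳.filter fun A => A ∩ S' = C).card : ℝ) - 1)) * δ / 2 := by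
          rw [← Finset.sum_div, ← Finset.sum_mul]
      _ = ((𝒳.card : ℝ) - (T.card : ℝ)) * δ / 2 := by rw [this]
  linarith [h5 ▸ h4]

lemma hp_double_count [Fintype V] (r : ℕ) (g : Finset V → V → ℕ) :
    ∑ S' ∈ powersetCard r (univ : Finset V), ∑ y ∈ S'ᶜ, g S' y
      = ∑ S ∈ powersetCard (r+1) (univ : Finset V), ∑ y ∈ S, g (S.erase y) y := by
  classical
  rw [Finset.sum_sigma' (powersetCard r (univ : Finset V)) (fun S' => S'ᶜ) (fun S' y => g S' y),
    Finset.sum_sigma' (powersetCard (r+1) (univ : Finset V)) (fun S => S) (fun S y => g (S.erase y) y)]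
  refine Finset.sum_bij' (fun p _ => ⟨insert p.2 p.1, p.2⟩) (fun p _ => ⟨p.1.erase p.2, p.2⟩)
    ?_ ?_ ?_ ?_ ?_
  · rintro ⟨S', y⟩ hp
    rw [mem_sigma] at hp
    obtain ⟨h1, h2⟩ := hp
    rw [mem_powersetCard_univ] at h1
    rw [mem_compl] at h2
    rw [mem_sigma, mem_powersetCard_univ]
    exact ⟨by rw [card_insert_of_notMem h2, h1], mem_insert_self _ _⟩
  · rintro ⟨S, y⟩ hp
    rw [mem_sigma] at hp
    obtain ⟨h1, h2⟩ := hp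
    rw [mem_powersetCard_univ] at h1
    rw [mem_sigma, mem_powersetCard_univ]
    refine ⟨by rw [card_erase_of_mem h2, h1]; omega, mem_compl.2 (notMem_erase _ _)⟩
  · rintro ⟨S', y⟩ hp
    rw [mem_sigma] at hp
    have h2 := mem_compl.1 hp.2
    show (⟨(insert y S').erase y, y⟩ : Σ _ : Finset V, V) = ⟨S', y⟩
    rw [erase_insert h2]
  · rintro ⟨S, y⟩ hp
    rw [mem_sigma] at hp
    show (⟨insert y (S.erase y), y⟩ : Σ _ : Finset V, V) = ⟨S, y⟩
    rw [insert_erase hp.2]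
  · rintro ⟨S', y⟩ hp
    rw [mem_sigma] at hp
    have h2 := mem_compl.1 hp.2
    show g S' y = g ((insert y S').erase y) y
    rw [erase_insert h2]

lemma hp_sum_G_eq [Fintype V] (𝒳 : Finset (Finset V)) (S : Finset V) :
    ∑ y ∈ S, hpG 𝒳 (S.erase y) y = hpES S (hpwt 𝒳 S) := by
  rw [hpES]
  refine sum_congr rfl fun y hy => ?_
  rw [hpG, insert_erase hy]

set_option maxHeartbeats 2000000 in
/-- Haussler's packing lemma: if a family `F` of subsets of an `n`-element set has
VC-dimension at most `k`, then any `δ`-separated subfamily of `F` has size at most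
`c₁ (n/δ)^k` for a constant `c₁` depending only on `k`. -/
theorem haussler_packing (k : ℕ) :
    ∃ c₁ : ℝ, 0 < c₁ ∧
      ∀ (V : Type) [Fintype V] [DecidableEq V] [Nonempty V]
        (F : Finset (Finset V)) (δ : ℝ),
        0 < δ → δ ≤ (Fintype.card V : ℝ) →
        (∀ X : Finset V, (∀ Y ⊆ X, ∃ A ∈ F, A ∩ X = Y) → X.card ≤ k) →
        ∀ 𝒳 ⊆ F,
          (∀ A ∈ 𝒳, ∀ B ∈ 𝒳, A ≠ B → δ < ((symmDiff A B).card : ℝ)) →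
          (𝒳.card : ℝ) ≤ c₁ * ((Fintype.card V : ℝ) / δ) ^ k := by
  refine ⟨2 * (16 * (k : ℝ) + 16) ^ k + 1, by positivity, ?_⟩
  intro V _ _ _ F δ hδ0 hδn hF 𝒳 h𝒳F hsep
  classical
  set n := Fintype.card V with hn
  have hn1 : 1 ≤ n := Fintype.card_pos
  have hnR : (0 : ℝ) < (n : ℝ) := by exact_mod_cast hn1
  have hδ0' : (0 : ℝ) ≤ δ := le_of_lt hδ0
  have hn1R : (1 : ℝ) ≤ ((Fintype.card V : ℕ) : ℝ) := by exact_mod_cast Fintype.card_pos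
  have hδne : δ ≠ 0 := ne_of_gt hδ0
  have hratio : (1 : ℝ) ≤ (n : ℝ) / δ := (one_le_div hδ0).2 hδn
  have hratio0 : (0 : ℝ) ≤ (n : ℝ) / δ := by positivity
  have hdim𝒳 : ∀ X : Finset V, (∀ Y ⊆ X, ∃ A ∈ 𝒳, A ∩ X = Y) → X.card ≤ k := by
    intro X h
    refine hF X fun Y hY => ?_
    obtain ⟨A, hA, hAX⟩ := h Y hY
    exact ⟨A, h𝒳F hA, hAX⟩
  rcases Nat.eq_zero_or_pos k with hk0 | hk
  · -- k = 0 : 𝒳 has at most one element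
    subst hk0
    have hcard : 𝒳.card ≤ 1 := by
      rw [card_le_one]
      intro A hA B hB
      by_contra hne
      have hlt := hsep A hA B hB hne
      have hpos : 0 < (symmDiff A B).card := by
        have : (0 : ℝ) < ((symmDiff A B).card : ℝ) := lt_trans hδ0 hlt
        exact_mod_cast this
      obtain ⟨x, hx⟩ := card_pos.1 hpos
      have h1 : ({x} : Finset V).card ≤ 0 := by
        refine hF {x} ?_
        intro Y hY
        rw [Finset.subset_singleton_iff] at hY
        rcases Finset.mem_symmDiff.1 hx with ⟨hxA, hxB⟩ | ⟨hxB, hxA⟩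
        · rcases hY with rfl | rfl
          · exact ⟨B, h𝒳F hB, by rw [inter_comm]; exact singleton_inter_of_notMem hxB⟩
          · exact ⟨A, h𝒳F hA, by rw [inter_comm]; exact singleton_inter_of_mem hxA⟩
        · rcases hY with rfl | rfl
          · exact ⟨A, h𝒳F hA, by rw [inter_comm]; exact singleton_inter_of_notMem hxA⟩
          · exact ⟨B, h𝒳F hB, by rw [inter_comm]; exact singleton_inter_of_mem hxB⟩
      simp at h1
    have : (𝒳.card : ℝ) ≤ 1 := by exact_mod_cast hcard
    rw [pow_zero, mul_one]
    norm_num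
    linarith
  · -- k ≥ 1
    have hkR : (1 : ℝ) ≤ (k : ℝ) := by exact_mod_cast hk
    set m := 𝒳.card with hm
    have hmR : (0 : ℝ) ≤ (m : ℝ) := by positivity
    -- Sauer bound on the whole family
    have hSauer : (m : ℝ) ≤ ((n : ℝ) + 1) ^ k := by
      have himg : 𝒳.image (· ∩ univ) = 𝒳 := by
        simp [inter_univ]
      have h := hp_trace_le k 𝒳 univ hdim𝒳
      rw [himg, card_univ] at h
      calc (m : ℝ) ≤ (((n + 1) ^ k : ℕ) : ℝ) := by exact_mod_cast h
        _ = ((n : ℝ) + 1) ^ k := by push_cast; ring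
    rcases le_or_gt δ (8 * (k : ℝ)) with hδ8 | hδ8
    · -- small δ : direct Sauer
      have h2n : ((n : ℝ) + 1) ^ k ≤ (2 * (n : ℝ)) ^ k := by
        refine pow_le_pow_left₀ (by positivity) (by linarith) k
      have heq : 2 * (n : ℝ) = (2 * δ) * ((n : ℝ) / δ) := by
        field_simp
      have h3 : (2 * δ) * ((n : ℝ) / δ) ≤ (16 * (k : ℝ) + 16) * ((n : ℝ) / δ) := by
        refine mul_le_mul_of_nonneg_right (by linarith) hratio0
      calc (m : ℝ) ≤ ((n : ℝ) + 1) ^ k := hSauer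
        _ ≤ (2 * (n : ℝ)) ^ k := h2n
        _ = ((2 * δ) * ((n : ℝ) / δ)) ^ k := by rw [heq]
        _ ≤ ((16 * (k : ℝ) + 16) * ((n : ℝ) / δ)) ^ k := by
            refine pow_le_pow_left₀ (by positivity) h3 k
        _ = (16 * (k : ℝ) + 16) ^ k * ((n : ℝ) / δ) ^ k := mul_pow _ _ _
        _ ≤ (2 * (16 * (k : ℝ) + 16) ^ k + 1) * ((n : ℝ) / δ) ^ k := by
            refine mul_le_mul_of_nonneg_right ?_ (by positivity)
            have hp0 : (0:ℝ) ≤ (16 * (k : ℝ) + 16) ^ k := by positivity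
            linarith
    · -- main case : δ > 8k
      set r := ⌈4 * (k : ℝ) * (n : ℝ) / δ⌉₊ with hr
      have hkpos : (0 : ℝ) < (k : ℝ) := by linarith
      have hx0 : (0 : ℝ) < 4 * (k : ℝ) * (n : ℝ) / δ := by positivity
      have hr0 : 0 < r := Nat.ceil_pos.2 hx0
      have hrge : 4 * (k : ℝ) * (n : ℝ) / δ ≤ (r : ℝ) := Nat.le_ceil _
      have hrn : r ≤ n := by
        rw [hr, Nat.ceil_le]
        rw [div_le_iff₀ hδ0]
        nlinarith
      obtain ⟨r', hr'⟩ : ∃ r', r = r' + 1 := ⟨r - 1, by omega⟩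
      have hr'n : r' ≤ n := by omega
      -- the ES upper bound for each r-subset
      have hES_le : ∀ S : Finset V, hpES S (hpwt 𝒳 S) ≤ k * m := by
        intro S
        have hsupp : ∀ B, hpwt 𝒳 S B ≠ 0 → B ⊆ S := by
          intro B hB
          obtain ⟨A, hA⟩ := card_pos.1 (Nat.pos_of_ne_zero hB)
          rw [← (mem_filter.1 hA).2]
          exact inter_subset_right
        have hdimS : ∀ X ⊆ S, (∀ Y ⊆ X, ∃ B, hpwt 𝒳 S B ≠ 0 ∧ B ∩ X = Y) → X.card ≤ k := by
          intro X hXS hsh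
          refine hdim𝒳 X fun Y hY => ?_
          obtain ⟨B, hB, hBX⟩ := hsh Y hY
          obtain ⟨A, hA⟩ := card_pos.1 (Nat.pos_of_ne_zero hB)
          obtain ⟨hA𝒳, hAS⟩ := mem_filter.1 hA
          refine ⟨A, hA𝒳, ?_⟩
          rw [← hBX, ← hAS]
          ext x
          simp only [mem_inter]
          exact ⟨fun h => ⟨⟨h.1, hXS h.2⟩, h.2⟩, fun h => ⟨h.1.1, h.2⟩⟩
        have htotal : ∑ B ∈ S.powerset, hpwt 𝒳 S B = m := by
          rw [hm]
          exact (card_eq_sum_card_fiberwise fun A _ => mem_powerset.2 inter_subset_right).symm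
        have h := hpES_le S k (hpwt 𝒳 S) hsupp hdimS
        rwa [htotal] at h
      -- lower bound per r'-subset
      have hΦ : ∀ S' ∈ powersetCard r' (univ : Finset V),
          ((m : ℝ) - (r : ℝ) ^ k) * δ / 2 ≤ ∑ y ∈ S'ᶜ, (hpG 𝒳 S' y : ℝ) := by
        intro S' hS'
        have hcard : S'.card = r' := mem_powersetCard_univ.1 hS'
        have hN : ((𝒳.image (· ∩ S')).card : ℝ) ≤ (r : ℝ) ^ k := by
          have h := hp_trace_le k 𝒳 S' hdim𝒳
          rw [hcard] at h
          calc ((𝒳.image (· ∩ S')).card : ℝ) ≤ (((r' + 1) ^ k : ℕ) : ℝ) := by exact_mod_cast h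
            _ = (r : ℝ) ^ k := by rw [hr']; push_cast; ring
        have hlow := hp_lower_S' 𝒳 δ hδ0' hsep S'
        have hmono : ((m : ℝ) - (r : ℝ) ^ k) * δ / 2
            ≤ ((m : ℝ) - ((𝒳.image (· ∩ S')).card : ℝ)) * δ / 2 := by nlinarith
        linarith
      -- double counting
      have hchainN : ∑ S' ∈ powersetCard r' (univ : Finset V), ∑ y ∈ S'ᶜ, hpG 𝒳 S' y
          ≤ n.choose r * (k * m) := by
        rw [hp_double_count r' (hpG 𝒳), ← hr']
        calc ∑ S ∈ powersetCard r (univ : Finset V), ∑ y ∈ S, hpG 𝒳 (S.erase y) y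
            = ∑ S ∈ powersetCard r (univ : Finset V), hpES S (hpwt 𝒳 S) :=
              sum_congr rfl fun S _ => hp_sum_G_eq 𝒳 S
          _ ≤ ∑ S ∈ powersetCard r (univ : Finset V), k * m :=
              sum_le_sum fun S _ => hES_le S
          _ = n.choose r * (k * m) := by
              rw [sum_const, card_powersetCard, card_univ, smul_eq_mul]
      have hchainR : (n.choose r' : ℝ) * (((m : ℝ) - (r : ℝ) ^ k) * δ / 2)
          ≤ (n.choose r : ℝ) * ((k : ℝ) * m) := by
        calc (n.choose r' : ℝ) * (((m : ℝ) - (r : ℝ) ^ k) * δ / 2)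
            = ∑ _S' ∈ powersetCard r' (univ : Finset V), (((m : ℝ) - (r : ℝ) ^ k) * δ / 2) := by
              rw [sum_const, card_powersetCard, card_univ, nsmul_eq_mul]
          _ ≤ ∑ S' ∈ powersetCard r' (univ : Finset V), ∑ y ∈ S'ᶜ, (hpG 𝒳 S' y : ℝ) :=
              sum_le_sum hΦ
          _ = ((∑ S' ∈ powersetCard r' (univ : Finset V), ∑ y ∈ S'ᶜ, hpG 𝒳 S' y : ℕ) : ℝ) := by
              push_cast; rfl
          _ ≤ ((n.choose r * (k * m) : ℕ) : ℝ) := by exact_mod_cast hchainN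
          _ = (n.choose r : ℝ) * ((k : ℝ) * m) := by push_cast; ring
      have hCpos : (0 : ℝ) < (n.choose r' : ℝ) := by exact_mod_cast Nat.choose_pos hr'n
      have hrRpos : (0 : ℝ) < (r : ℝ) := by exact_mod_cast hr0
      have hchooseN : n.choose r * r = n.choose r' * (n - r') := by
        rw [hr']
        exact Nat.choose_succ_right_eq n r'
      have hchoose : (n.choose r : ℝ) * (r : ℝ) = (n.choose r' : ℝ) * ((n - r' : ℕ) : ℝ) := by
        exact_mod_cast hchooseN
      have hsubn : ((n - r' : ℕ) : ℝ) ≤ (n : ℝ) := by exact_mod_cast Nat.sub_le n r'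
      have hCr_le : (n.choose r : ℝ) ≤ (n.choose r' : ℝ) * (n : ℝ) / (r : ℝ) := by
        rw [le_div_iff₀ hrRpos, hchoose]
        exact mul_le_mul_of_nonneg_left hsubn (le_of_lt hCpos)
      have hmain : ((m : ℝ) - (r : ℝ) ^ k) * δ / 2 ≤ (k : ℝ) * m * (n : ℝ) / (r : ℝ) := by
        have h1 : (n.choose r' : ℝ) * (((m : ℝ) - (r : ℝ) ^ k) * δ / 2)
            ≤ (n.choose r' : ℝ) * ((k : ℝ) * m * (n : ℝ) / (r : ℝ)) := by
          calc (n.choose r' : ℝ) * (((m : ℝ) - (r : ℝ) ^ k) * δ / 2)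
              ≤ (n.choose r : ℝ) * ((k : ℝ) * m) := hchainR
            _ ≤ ((n.choose r' : ℝ) * (n : ℝ) / (r : ℝ)) * ((k : ℝ) * m) :=
                mul_le_mul_of_nonneg_right hCr_le (by positivity)
            _ = (n.choose r' : ℝ) * ((k : ℝ) * m * (n : ℝ) / (r : ℝ)) := by ring
        exact le_of_mul_le_mul_left h1 hCpos
      have hq : (k : ℝ) * m * (n : ℝ) / (r : ℝ) ≤ δ * m / 4 := by
        rw [div_le_div_iff₀ hrRpos (by norm_num : (0:ℝ) < 4)]
        have h4 : 4 * (k : ℝ) * (n : ℝ) ≤ δ * (r : ℝ) := by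
          rw [div_le_iff₀ hδ0] at hrge
          linarith
        nlinarith
      have hm2 : (m : ℝ) ≤ 2 * (r : ℝ) ^ k := by
        have h5 := hmain.trans hq
        have h9 : (m : ℝ) - (r : ℝ) ^ k ≤ (m : ℝ) / 2 := by
          have h10 := mul_le_mul_of_nonneg_left h5 (by positivity : (0:ℝ) ≤ 2 / δ)
          calc (m : ℝ) - (r : ℝ) ^ k = (2 / δ) * (((m : ℝ) - (r : ℝ) ^ k) * δ / 2) := by
                field_simp
            _ ≤ (2 / δ) * (δ * (m : ℝ) / 4) := h10
            _ = (m : ℝ) / 2 := by field_simp; ring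
        linarith
      have hrle : (r : ℝ) ≤ 5 * (k : ℝ) * ((n : ℝ) / δ) := by
        have hceil : (r : ℝ) < 4 * (k : ℝ) * (n : ℝ) / δ + 1 := Nat.ceil_lt_add_one (le_of_lt hx0)
        have h1k : (1 : ℝ) ≤ (k : ℝ) * ((n : ℝ) / δ) := by nlinarith
        have heq4 : 4 * (k : ℝ) * (n : ℝ) / δ = 4 * ((k : ℝ) * ((n : ℝ) / δ)) := by ring
        nlinarith
      calc (m : ℝ) ≤ 2 * (r : ℝ) ^ k := hm2
        _ ≤ 2 * (5 * (k : ℝ) * ((n : ℝ) / δ)) ^ k := by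
            exact mul_le_mul_of_nonneg_left (pow_le_pow_left₀ (by positivity) hrle k) (by norm_num)
        _ = 2 * (5 * (k : ℝ)) ^ k * ((n : ℝ) / δ) ^ k := by rw [mul_pow]; ring
        _ ≤ (2 * (16 * (k : ℝ) + 16) ^ k + 1) * ((n : ℝ) / δ) ^ k := by
            refine mul_le_mul_of_nonneg_right ?_ (by positivity)
            have hple : (5 * (k : ℝ)) ^ k ≤ (16 * (k : ℝ) + 16) ^ k :=
              pow_le_pow_left₀ (by positivity) (by linarith) k
            linarith
end

section
/- For all 0 < ε < 1/4 and sufficiently large bipartite graphs: let G = (U ∪ W, E) be bipartite with |U|, |W| ≥ n(ε), and suppose there exist U' ⊆ U, W' ⊆ W with |U'| ≥ (1−ε)|U|, |W'| ≥ (1−ε)|W|, such that every u ∈ U' satisfies max{|N(u) ∩ W|, |W \ N(u)|} ≥ (1−ε)|W| and every w ∈ W' satisfies max{|N(w) ∩ U|, |U \ N(w)|} ≥ (1−ε)|U|. Then the edge density |E|/(|U||W|) lies in [0, 2√ε) ∪ (1 − 2√ε, 1]. -/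
open Finset
open scoped Classical

set_option maxHeartbeats 1000000 in
set_option maxRecDepth 4000 in
/-- Symmetry lemma: if in a large bipartite graph almost every vertex has nearly full
or nearly empty neighborhood, then the edge density is near 0 or near 1. -/
theorem symmetry_lemma :
    ∀ ε : ℝ, 0 < ε → ε < 1/4 →
    ∃ n : ℕ, ∀ (U W : Type) [Fintype U] [Fintype W]
      (E : U → W → Prop) [∀ u w, Decidable (E u w)],
      n ≤ Fintype.card U → n ≤ Fintype.card W →
      ∀ (U' : Finset U) (W' : Finset W),
        (1 - ε) * (Fintype.card U : ℝ) ≤ (U'.card : ℝ) →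
        (1 - ε) * (Fintype.card W : ℝ) ≤ (W'.card : ℝ) →
        (∀ u ∈ U', (1 - ε) * (Fintype.card W : ℝ) ≤
          max ((univ.filter (fun w => E u w)).card : ℝ)
              ((univ.filter (fun w => ¬ E u w)).card : ℝ)) →
        (∀ w ∈ W', (1 - ε) * (Fintype.card U : ℝ) ≤
          max ((univ.filter (fun u => E u w)).card : ℝ)
              ((univ.filter (fun u => ¬ E u w)).card : ℝ)) →
        (((univ.filter (fun p : U × W => E p.1 p.2)).card : ℝ) /
            ((Fintype.card U : ℝ) * (Fintype.card W : ℝ)) < 2 * Real.sqrt ε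
          ∨ 1 - 2 * Real.sqrt ε <
            ((univ.filter (fun p : U × W => E p.1 p.2)).card : ℝ) /
              ((Fintype.card U : ℝ) * (Fintype.card W : ℝ))) := by
  intro ε hε hε4
  refine ⟨1, ?_⟩
  intro U W _ _ E _ hU1 hW1 U' W' hU' hW' hUdeg hWdeg
  set s : ℝ := Real.sqrt ε with hs_def
  have hs2 : s ^ 2 = ε := Real.sq_sqrt hε.le
  have hs0 : 0 < s := Real.sqrt_pos.mpr hε
  have hs12 : s < 1/2 := by nlinarith
  set cU : ℝ := (Fintype.card U : ℝ) with hcU_def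
  set cW : ℝ := (Fintype.card W : ℝ) with hcW_def
  have hcU0 : (0:ℝ) < cU := by
    have : (1:ℕ) ≤ Fintype.card U := hU1
    rw [hcU_def]; exact_mod_cast this
  have hcW0 : (0:ℝ) < cW := by
    have : (1:ℕ) ≤ Fintype.card W := hW1
    rw [hcW_def]; exact_mod_cast this
  -- degrees
  set degR : U → ℝ := fun u => ((univ.filter (fun w => E u w)).card : ℝ) with hdegR
  set degW : W → ℝ := fun w => ((univ.filter (fun u => E u w)).card : ℝ) with hdegW
  have hdeg_split : ∀ u : U, degR u + ((univ.filter (fun w => ¬ E u w)).card : ℝ) = cW := by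
    intro u
    have h := Finset.card_filter_add_card_filter_not
      (s := (univ : Finset W)) (p := fun w => E u w)
    rw [Finset.card_univ] at h
    have h2 : (((univ : Finset W).filter (fun w => E u w)).card : ℝ)
        + (((univ : Finset W).filter (fun w => ¬ E u w)).card : ℝ)
        = ((Fintype.card W : ℕ) : ℝ) := by exact_mod_cast h
    exact h2
  have hdegW_split : ∀ w : W, degW w + ((univ.filter (fun u => ¬ E u w)).card : ℝ) = cU := by
    intro w
    have h := Finset.card_filter_add_card_filter_not
      (s := (univ : Finset U)) (p := fun u => E u w)
    rw [Finset.card_univ] at h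
    have h2 : (((univ : Finset U).filter (fun u => E u w)).card : ℝ)
        + (((univ : Finset U).filter (fun u => ¬ E u w)).card : ℝ)
        = ((Fintype.card U : ℕ) : ℝ) := by exact_mod_cast h
    exact h2
  have hdeg_nonneg : ∀ u, 0 ≤ degR u := fun u => Nat.cast_nonneg _
  have hdegW_nonneg : ∀ w, 0 ≤ degW w := fun w => Nat.cast_nonneg _
  have hdeg_le : ∀ u, degR u ≤ cW := by
    intro u
    have := hdeg_split u
    have h2 : (0:ℝ) ≤ ((univ.filter (fun w => ¬ E u w)).card : ℝ) := Nat.cast_nonneg _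
    linarith
  have hdegW_le : ∀ w, degW w ≤ cU := by
    intro w
    have := hdegW_split w
    have h2 : (0:ℝ) ≤ ((univ.filter (fun u => ¬ E u w)).card : ℝ) := Nat.cast_nonneg _
    linarith
  set e : ℝ := ((univ.filter (fun p : U × W => E p.1 p.2)).card : ℝ) with he_def
  have he_u : e = ∑ u, degR u := by
    have h : (univ.filter (fun p : U × W => E p.1 p.2)).card
        = ∑ u, (univ.filter (fun w => E u w)).card := by
      rw [Finset.card_filter, Fintype.sum_prod_type]
      exact Finset.sum_congr rfl fun u _ => (Finset.card_filter _ _).symm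
    rw [he_def, h]
    push_cast
    rfl
  have he_w : e = ∑ w, degW w := by
    have h : (univ.filter (fun p : U × W => E p.1 p.2)).card
        = ∑ w, (univ.filter (fun u => E u w)).card := by
      rw [Finset.card_filter, Fintype.sum_prod_type]
      rw [Finset.sum_comm]
      exact Finset.sum_congr rfl fun w _ => (Finset.card_filter _ _).symm
    rw [he_def, h]
    push_cast
    rfl
  -- the set of high-degree vertices of U'
  set A : Finset U := U'.filter (fun u => (1 - ε) * cW ≤ degR u) with hA_def
  have hA_high : ∀ u ∈ A, (1 - ε) * cW ≤ degR u := by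
    intro u hu; exact (Finset.mem_filter.mp hu).2
  have hA_low : ∀ u ∈ U', u ∉ A → degR u ≤ ε * cW := by
    intro u hu hnA
    have hmax := hUdeg u hu
    have hn : ¬ ((1 - ε) * cW ≤ degR u) := by
      intro h; exact hnA (Finset.mem_filter.mpr ⟨hu, h⟩)
    have hcod : (1 - ε) * cW ≤ ((univ.filter (fun w => ¬ E u w)).card : ℝ) := by
      rcases le_max_iff.mp hmax with h | h
      · exact absurd h hn
      · exact h
    have := hdeg_split u
    linarith
  have hcomplU : ((U'ᶜ : Finset U).card : ℝ) ≤ ε * cU := by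
    have h := Finset.card_compl U'
    have h2 : ((U'ᶜ : Finset U).card : ℝ) = cU - (U'.card : ℝ) := by
      rw [h, Nat.cast_sub (Finset.card_le_univ U')]
    rw [h2]; linarith
  have hcomplW : ((W'ᶜ : Finset W).card : ℝ) ≤ ε * cW := by
    have h := Finset.card_compl W'
    have h2 : ((W'ᶜ : Finset W).card : ℝ) = cW - (W'.card : ℝ) := by
      rw [h, Nat.cast_sub (Finset.card_le_univ W')]
    rw [h2]; linarith
  by_cases hA : (A.card : ℝ) ≤ s * cU
  · -- density is small
    left
    -- bound e
    have hsplit1 : ∑ u, degR u = ∑ u ∈ U', degR u + ∑ u ∈ U'ᶜ, degR u :=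
      (Finset.sum_add_sum_compl U' degR).symm
    have hsplit2 : ∑ u ∈ U', degR u
        = ∑ u ∈ A, degR u + ∑ u ∈ U'.filter (fun u => ¬ (1 - ε) * cW ≤ degR u), degR u := by
      rw [hA_def]
      exact (Finset.sum_filter_add_sum_filter_not U' _ degR).symm
    have hb1 : ∑ u ∈ A, degR u ≤ (A.card : ℝ) * cW := by
      calc ∑ u ∈ A, degR u ≤ ∑ u ∈ A, cW := Finset.sum_le_sum (fun u _ => hdeg_le u)
      _ = (A.card : ℝ) * cW := by rw [Finset.sum_const, nsmul_eq_mul]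
    have hb2 : ∑ u ∈ U'.filter (fun u => ¬ (1 - ε) * cW ≤ degR u), degR u ≤ cU * (ε * cW) := by
      calc ∑ u ∈ U'.filter (fun u => ¬ (1 - ε) * cW ≤ degR u), degR u
          ≤ ∑ u ∈ U'.filter (fun u => ¬ (1 - ε) * cW ≤ degR u), ε * cW := by
            apply Finset.sum_le_sum
            intro u hu
            have hu' := Finset.mem_filter.mp hu
            exact hA_low u hu'.1 (by
              intro h
              exact hu'.2 (Finset.mem_filter.mp h).2)
        _ = ((U'.filter (fun u => ¬ (1 - ε) * cW ≤ degR u)).card : ℝ) * (ε * cW) := by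
            rw [Finset.sum_const, nsmul_eq_mul]
        _ ≤ cU * (ε * cW) := by
            apply mul_le_mul_of_nonneg_right _ (by positivity)
            rw [hcU_def]
            exact_mod_cast (Finset.card_le_univ _).trans_eq Finset.card_univ
    have hb3 : ∑ u ∈ U'ᶜ, degR u ≤ ε * cU * cW := by
      calc ∑ u ∈ U'ᶜ, degR u ≤ ∑ u ∈ U'ᶜ, cW := Finset.sum_le_sum (fun u _ => hdeg_le u)
      _ = ((U'ᶜ : Finset U).card : ℝ) * cW := by rw [Finset.sum_const, nsmul_eq_mul]
      _ ≤ ε * cU * cW := mul_le_mul_of_nonneg_right hcomplU hcW0.le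
    have hebound : e ≤ (s + 2 * ε) * (cU * cW) := by
      rw [he_u, hsplit1, hsplit2]
      nlinarith [mul_le_mul_of_nonneg_right hA hcW0.le]
    rw [div_lt_iff₀ (by positivity)]
    have hpos : (0:ℝ) < s * (1 - 2 * s) * (cU * cW) := by
      apply mul_pos (mul_pos hs0 (by linarith)) (mul_pos hcU0 hcW0)
    nlinarith [hpos, hs2]
  · push_neg at hA
    right
    have hAcard0 : (0:ℝ) < (A.card : ℝ) := lt_trans (by positivity) hA
    -- set of high-degree vertices of W'
    set B : Finset W := W'.filter (fun w => (1 - ε) * cU ≤ degW w) with hB_def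
    have hB_low : ∀ w ∈ W', w ∉ B → degW w ≤ ε * cU := by
      intro w hw hnB
      have hmax := hWdeg w hw
      have hn : ¬ ((1 - ε) * cU ≤ degW w) := by
        intro h; exact hnB (Finset.mem_filter.mpr ⟨hw, h⟩)
      have hcod : (1 - ε) * cU ≤ ((univ.filter (fun u => ¬ E u w)).card : ℝ) := by
        rcases le_max_iff.mp hmax with h | h
        · exact absurd h hn
        · exact h
      have := hdegW_split w
      linarith
    -- double counting
    set F : U → W → ℝ := fun u w => if E u w then (1:ℝ) else 0 with hF_def
    have hF_nonneg : ∀ u w, 0 ≤ F u w := by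
      intro u w; rw [hF_def]; dsimp only; split <;> norm_num
    have hF_le1 : ∀ u w, F u w ≤ 1 := by
      intro u w; rw [hF_def]; dsimp only; split <;> norm_num
    have hFrow : ∀ u, ∑ w, F u w = degR u := by
      intro u
      show (∑ w, if E u w then (1:ℝ) else 0) = ((univ.filter (fun w => E u w)).card : ℝ)
      rw [Finset.sum_boole]
    have hFcol : ∀ w, ∑ u, F u w = degW w := by
      intro w
      show (∑ u, if E u w then (1:ℝ) else 0) = ((univ.filter (fun u => E u w)).card : ℝ)
      rw [Finset.sum_boole]
    set K : ℝ := ∑ u ∈ A, ∑ w ∈ W', F u w with hK_def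
    -- lower bound on K
    have hKlow : (A.card : ℝ) * ((1 - 2 * ε) * cW) ≤ K := by
      rw [hK_def]
      have : ∀ u ∈ A, (1 - 2 * ε) * cW ≤ ∑ w ∈ W', F u w := by
        intro u hu
        have hsum : ∑ w ∈ W', F u w + ∑ w ∈ W'ᶜ, F u w = degR u := by
          rw [← hFrow u]; exact Finset.sum_add_sum_compl W' (F u)
        have hcb : ∑ w ∈ W'ᶜ, F u w ≤ ε * cW := by
          calc ∑ w ∈ W'ᶜ, F u w ≤ ∑ w ∈ W'ᶜ, 1 :=
                Finset.sum_le_sum (fun w _ => hF_le1 u w)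
            _ = ((W'ᶜ : Finset W).card : ℝ) := by rw [Finset.sum_const, nsmul_eq_mul, mul_one]
            _ ≤ ε * cW := hcomplW
        have := hA_high u hu
        linarith
      calc (A.card : ℝ) * ((1 - 2 * ε) * cW) = ∑ _u ∈ A, (1 - 2 * ε) * cW := by
            rw [Finset.sum_const, nsmul_eq_mul]
        _ ≤ ∑ u ∈ A, ∑ w ∈ W', F u w := Finset.sum_le_sum this
    -- upper bound on K
    have hKcomm : K = ∑ w ∈ W', ∑ u ∈ A, F u w := Finset.sum_comm
    have hKup : K ≤ (B.card : ℝ) * (A.card : ℝ) + cW * (ε * cU) := by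
      rw [hKcomm]
      have hsplit : ∑ w ∈ W', ∑ u ∈ A, F u w
          = ∑ w ∈ B, ∑ u ∈ A, F u w
            + ∑ w ∈ W'.filter (fun w => ¬ (1 - ε) * cU ≤ degW w), ∑ u ∈ A, F u w := by
        rw [hB_def]
        exact (Finset.sum_filter_add_sum_filter_not W' _ _).symm
      rw [hsplit]
      have hb1 : ∑ w ∈ B, ∑ u ∈ A, F u w ≤ (B.card : ℝ) * (A.card : ℝ) := by
        calc ∑ w ∈ B, ∑ u ∈ A, F u w ≤ ∑ w ∈ B, (A.card : ℝ) := by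
              apply Finset.sum_le_sum
              intro w _
              calc ∑ u ∈ A, F u w ≤ ∑ u ∈ A, 1 :=
                    Finset.sum_le_sum (fun u _ => hF_le1 u w)
                _ = (A.card : ℝ) := by rw [Finset.sum_const, nsmul_eq_mul, mul_one]
          _ = (B.card : ℝ) * (A.card : ℝ) := by rw [Finset.sum_const, nsmul_eq_mul]
      have hb2 : ∑ w ∈ W'.filter (fun w => ¬ (1 - ε) * cU ≤ degW w), ∑ u ∈ A, F u w
          ≤ cW * (ε * cU) := by
        calc ∑ w ∈ W'.filter (fun w => ¬ (1 - ε) * cU ≤ degW w), ∑ u ∈ A, F u w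
            ≤ ∑ w ∈ W'.filter (fun w => ¬ (1 - ε) * cU ≤ degW w), ε * cU := by
              apply Finset.sum_le_sum
              intro w hw
              have hw' := Finset.mem_filter.mp hw
              have h1 : ∑ u ∈ A, F u w ≤ ∑ u, F u w :=
                Finset.sum_le_sum_of_subset_of_nonneg (Finset.subset_univ A)
                  (fun u _ _ => hF_nonneg u w)
              have h2 : degW w ≤ ε * cU := hB_low w hw'.1 (by
                intro h
                exact hw'.2 (Finset.mem_filter.mp h).2)
              rw [hFcol w] at h1
              linarith
          _ = ((W'.filter (fun w => ¬ (1 - ε) * cU ≤ degW w)).card : ℝ) * (ε * cU) := by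
              rw [Finset.sum_const, nsmul_eq_mul]
          _ ≤ cW * (ε * cU) := by
              apply mul_le_mul_of_nonneg_right _ (by positivity)
              rw [hcW_def]
              exact_mod_cast (Finset.card_le_univ _).trans_eq Finset.card_univ
      linarith
    -- deduce B is big
    have hBbig : (1 - 2 * ε - s) * cW < (B.card : ℝ) := by
      have hεcU : ε * cU < s * (A.card : ℝ) := by
        have : s * (s * cU) < s * (A.card : ℝ) := by
          exact mul_lt_mul_of_pos_left hA hs0
        nlinarith
      have hkey : (A.card : ℝ) * ((1 - 2 * ε) * cW)
          < (B.card : ℝ) * (A.card : ℝ) + cW * (s * (A.card : ℝ)) := by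
        have : cW * (ε * cU) < cW * (s * (A.card : ℝ)) :=
          mul_lt_mul_of_pos_left hεcU hcW0
        linarith
      nlinarith
    -- lower bound for e
    have heB : (B.card : ℝ) * ((1 - ε) * cU) ≤ e := by
      rw [he_w]
      have h1 : ∑ w ∈ B, degW w ≤ ∑ w, degW w :=
        Finset.sum_le_sum_of_subset_of_nonneg (Finset.subset_univ B)
          (fun w _ _ => hdegW_nonneg w)
      have h2 : (B.card : ℝ) * ((1 - ε) * cU) ≤ ∑ w ∈ B, degW w := by
        calc (B.card : ℝ) * ((1 - ε) * cU) = ∑ _w ∈ B, (1 - ε) * cU := by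
              rw [Finset.sum_const, nsmul_eq_mul]
          _ ≤ ∑ w ∈ B, degW w := Finset.sum_le_sum (fun w hw => (Finset.mem_filter.mp hw).2)
      linarith
    have helow : (1 - 2 * ε - s) * cW * ((1 - ε) * cU) < e := by
      have hpos : (0:ℝ) < (1 - ε) * cU := by nlinarith
      have := mul_lt_mul_of_pos_right hBbig hpos
      linarith
    rw [lt_div_iff₀ (by positivity)]
    have h12s : (0:ℝ) ≤ 1 - 2 * s := by linarith
    have h1ss : (0:ℝ) ≤ 1 - s - s ^ 2 := by nlinarith
    have hkey2 : (1 - 2 * ε - s) * (1 - ε) - (1 - 2 * s) = s * (1 - 2 * s) * (1 - s - s ^ 2) := by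
      rw [← hs2]; ring
    have hd : (1 - 2 * s) ≤ (1 - 2 * ε - s) * (1 - ε) := by
      nlinarith [mul_nonneg (mul_nonneg hs0.le h12s) h1ss, hkey2]
    have hfinal : (1 - 2 * s) * (cU * cW) ≤ ((1 - 2 * ε - s) * (1 - ε)) * (cU * cW) :=
      mul_le_mul_of_nonneg_right hd (by positivity)
    nlinarith [hfinal, helow]
end

section
/- For all 0 < ε < 1/4 and sufficiently large bipartite graphs: if G = (U ∪ W, E) has |U|, |W| ≥ n(ε) and density |E|/(|U||W|) ∈ (2√ε, 1 − 2√ε), then either there is U' ⊆ U with |U'| ≥ ε|U| such that every u ∈ U' has |N(u) ∩ W|/|W| ∈ (ε, 1−ε), or there is W' ⊆ W with |W'| ≥ ε|W| such that every w ∈ W' has |N(w) ∩ U|/|U| ∈ (ε, 1−ε). -/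
open Finset
open scoped Classical
set_option maxHeartbeats 1000000

/-- Corollary of the symmetry lemma: a large bipartite graph of medium density
has a substantial set of vertices on one side all of whose degrees are medium. -/
theorem symmetry_corollary :
    ∀ ε : ℝ, 0 < ε → ε < 1/4 →
    ∃ n : ℕ, ∀ (U W : Type) [Fintype U] [Fintype W]
      (E : U → W → Prop) [∀ u w, Decidable (E u w)],
      n ≤ Fintype.card U → n ≤ Fintype.card W →
      2 * Real.sqrt ε <
        ((univ.filter (fun p : U × W => E p.1 p.2)).card : ℝ) /
          ((Fintype.card U : ℝ) * (Fintype.card W : ℝ)) →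
      ((univ.filter (fun p : U × W => E p.1 p.2)).card : ℝ) /
          ((Fintype.card U : ℝ) * (Fintype.card W : ℝ)) < 1 - 2 * Real.sqrt ε →
      (∃ U' : Finset U, ε * (Fintype.card U : ℝ) ≤ (U'.card : ℝ) ∧
          ∀ u ∈ U',
            ε < ((univ.filter (fun w => E u w)).card : ℝ) / (Fintype.card W : ℝ) ∧
            ((univ.filter (fun w => E u w)).card : ℝ) / (Fintype.card W : ℝ) < 1 - ε) ∨
      (∃ W' : Finset W, ε * (Fintype.card W : ℝ) ≤ (W'.card : ℝ) ∧
          ∀ w ∈ W',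
            ε < ((univ.filter (fun u => E u w)).card : ℝ) / (Fintype.card U : ℝ) ∧
            ((univ.filter (fun u => E u w)).card : ℝ) / (Fintype.card U : ℝ) < 1 - ε) := by
  intro ε hε hε4
  refine ⟨1, ?_⟩
  intro U W _ _ E _ hU hW hd1 hd2
  set m : ℕ := Fintype.card U with hmdef
  set k : ℕ := Fintype.card W with hkdef
  have hm0 : (0:ℝ) < m := by exact_mod_cast Nat.lt_of_lt_of_le Nat.zero_lt_one hU
  have hk0 : (0:ℝ) < k := by exact_mod_cast Nat.lt_of_lt_of_le Nat.zero_lt_one hW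
  set s := Real.sqrt ε with hsdef
  have hs0 : 0 < s := Real.sqrt_pos.mpr hε
  have hs2 : s ^ 2 = ε := Real.sq_sqrt hε.le
  have hshalf : s < 1/2 := (Real.sqrt_lt' (by norm_num)).mpr (by nlinarith)
  -- degrees
  set dU : U → ℕ := fun u => (univ.filter (fun w => E u w)).card with hdU
  set dW : W → ℕ := fun w => (univ.filter (fun u => E u w)).card with hdW
  set e : ℕ := (univ.filter (fun p : U × W => E p.1 p.2)).card with hedef
  have he1 : e = ∑ u, dU u := by
    rw [hedef, Finset.card_filter, Fintype.sum_prod_type]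
    simp only [hdU, Finset.card_filter]
  have he2 : e = ∑ w, dW w := by
    rw [hedef, Finset.card_filter, Fintype.sum_prod_type_right]
    simp only [hdW, Finset.card_filter]
  -- edge bounds from density
  have hmk0 : (0:ℝ) < (m:ℝ) * k := mul_pos hm0 hk0
  have hel : 2 * s * ((m:ℝ) * k) < e := (lt_div_iff₀ hmk0).mp hd1
  have heu : (e:ℝ) < (1 - 2*s) * ((m:ℝ) * k) := (div_lt_iff₀ hmk0).mp hd2
  -- medium sets
  set MU : Finset U := univ.filter (fun u => ε < (dU u : ℝ) / k ∧ (dU u : ℝ) / k < 1 - ε) with hMU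
  set MW : Finset W := univ.filter (fun w => ε < (dW w : ℝ) / m ∧ (dW w : ℝ) / m < 1 - ε) with hMWdef
  by_cases hcU : ε * m ≤ (MU.card : ℝ)
  · exact Or.inl ⟨MU, hcU, fun u hu => (Finset.mem_filter.mp hu).2⟩
  by_cases hcW : ε * k ≤ (MW.card : ℝ)
  · exact Or.inr ⟨MW, hcW, fun w hw => (Finset.mem_filter.mp hw).2⟩
  push_neg at hcU hcW
  exfalso
  -- low/high sets
  set AU : Finset U := univ.filter (fun u => (dU u : ℝ) ≤ ε * k) with hAU
  set BU : Finset U := univ.filter (fun u => (1-ε) * k ≤ (dU u : ℝ)) with hBU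
  set AW : Finset W := univ.filter (fun w => (dW w : ℝ) ≤ ε * m) with hAW
  set BW : Finset W := univ.filter (fun w => (1-ε) * m ≤ (dW w : ℝ)) with hBW
  -- cover facts
  have hcoverU : ∀ u : U, u ∈ AU ∨ u ∈ BU ∨ u ∈ MU := by
    intro u
    rcases le_or_gt ((dU u : ℝ)) (ε * k) with h | h
    · exact Or.inl (Finset.mem_filter.mpr ⟨Finset.mem_univ _, h⟩)
    rcases le_or_gt ((1-ε) * k) ((dU u : ℝ)) with h' | h'
    · exact Or.inr (Or.inl (Finset.mem_filter.mpr ⟨Finset.mem_univ _, h'⟩))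
    · refine Or.inr (Or.inr (Finset.mem_filter.mpr ⟨Finset.mem_univ _, ?_, ?_⟩))
      · exact (lt_div_iff₀ hk0).mpr (by linarith)
      · exact (div_lt_iff₀ hk0).mpr (by linarith)
  have hcoverW : ∀ w : W, w ∈ AW ∨ w ∈ BW ∨ w ∈ MW := by
    intro w
    rcases le_or_gt ((dW w : ℝ)) (ε * m) with h | h
    · exact Or.inl (Finset.mem_filter.mpr ⟨Finset.mem_univ _, h⟩)
    rcases le_or_gt ((1-ε) * m) ((dW w : ℝ)) with h' | h'
    · exact Or.inr (Or.inl (Finset.mem_filter.mpr ⟨Finset.mem_univ _, h'⟩))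
    · refine Or.inr (Or.inr (Finset.mem_filter.mpr ⟨Finset.mem_univ _, ?_, ?_⟩))
      · exact (lt_div_iff₀ hm0).mpr (by linarith)
      · exact (div_lt_iff₀ hm0).mpr (by linarith)
  -- disjointness
  have hABdisjU : Disjoint AU BU := by
    rw [Finset.disjoint_left]
    intro u h1 h2
    have ha := (Finset.mem_filter.mp h1).2
    have hb := (Finset.mem_filter.mp h2).2
    nlinarith
  have hABMdisjU : Disjoint (AU ∪ BU) MU := by
    rw [Finset.disjoint_left]
    intro u h1 h2
    have h2' := (Finset.mem_filter.mp h2).2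
    have h2a : ε * k < (dU u : ℝ) := (lt_div_iff₀ hk0).mp h2'.1
    have h2b : (dU u : ℝ) < (1-ε) * k := (div_lt_iff₀ hk0).mp h2'.2
    rcases Finset.mem_union.mp h1 with h | h
    · have := (Finset.mem_filter.mp h).2; linarith
    · have := (Finset.mem_filter.mp h).2; linarith
  have hABdisjW : Disjoint AW BW := by
    rw [Finset.disjoint_left]
    intro w h1 h2
    have ha := (Finset.mem_filter.mp h1).2
    have hb := (Finset.mem_filter.mp h2).2
    nlinarith
  have hABMdisjW : Disjoint (AW ∪ BW) MW := by
    rw [Finset.disjoint_left]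
    intro w h1 h2
    have h2' := (Finset.mem_filter.mp h2).2
    have h2a : ε * m < (dW w : ℝ) := (lt_div_iff₀ hm0).mp h2'.1
    have h2b : (dW w : ℝ) < (1-ε) * m := (div_lt_iff₀ hm0).mp h2'.2
    rcases Finset.mem_union.mp h1 with h | h
    · have := (Finset.mem_filter.mp h).2; linarith
    · have := (Finset.mem_filter.mp h).2; linarith
  have hUcover : (univ : Finset U) = AU ∪ BU ∪ MU := by
    refine (Finset.eq_univ_iff_forall.mpr ?_).symm
    intro u
    rcases hcoverU u with h | h | h
    · exact Finset.mem_union.mpr (Or.inl (Finset.mem_union.mpr (Or.inl h)))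
    · exact Finset.mem_union.mpr (Or.inl (Finset.mem_union.mpr (Or.inr h)))
    · exact Finset.mem_union.mpr (Or.inr h)
  have hWcover : (univ : Finset W) = AW ∪ BW ∪ MW := by
    refine (Finset.eq_univ_iff_forall.mpr ?_).symm
    intro w
    rcases hcoverW w with h | h | h
    · exact Finset.mem_union.mpr (Or.inl (Finset.mem_union.mpr (Or.inl h)))
    · exact Finset.mem_union.mpr (Or.inl (Finset.mem_union.mpr (Or.inr h)))
    · exact Finset.mem_union.mpr (Or.inr h)
  -- degree upper bounds
  have hdUk : ∀ u : U, (dU u : ℝ) ≤ k := by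
    intro u
    have : dU u ≤ k := by
      simpa [hkdef] using Finset.card_filter_le (univ : Finset W) (fun w => E u w)
    exact_mod_cast this
  -- upper bound on e
  have hesplit : (e:ℝ) ≤ (AU.card : ℝ) * (ε * k) + (BU.card : ℝ) * k + (MU.card : ℝ) * k := by
    have h1 : (e:ℝ) = ∑ u ∈ AU, (dU u : ℝ) + ∑ u ∈ BU, (dU u : ℝ) + ∑ u ∈ MU, (dU u : ℝ) := by
      have : (e:ℝ) = ∑ u, (dU u : ℝ) := by rw [he1]; push_cast; ring
      rw [this, show (univ : Finset U) = AU ∪ BU ∪ MU from hUcover,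
        Finset.sum_union hABMdisjU, Finset.sum_union hABdisjU]
    have bA : ∑ u ∈ AU, (dU u : ℝ) ≤ (AU.card : ℝ) * (ε * k) := by
      calc ∑ u ∈ AU, (dU u : ℝ) ≤ ∑ _u ∈ AU, ε * k :=
            Finset.sum_le_sum (fun u hu => (Finset.mem_filter.mp hu).2)
        _ = (AU.card : ℝ) * (ε * k) := by rw [Finset.sum_const, nsmul_eq_mul]
    have bB : ∑ u ∈ BU, (dU u : ℝ) ≤ (BU.card : ℝ) * k := by
      calc ∑ u ∈ BU, (dU u : ℝ) ≤ ∑ _u ∈ BU, (k:ℝ) :=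
            Finset.sum_le_sum (fun u _ => hdUk u)
        _ = (BU.card : ℝ) * k := by rw [Finset.sum_const, nsmul_eq_mul]
    have bM : ∑ u ∈ MU, (dU u : ℝ) ≤ (MU.card : ℝ) * k := by
      calc ∑ u ∈ MU, (dU u : ℝ) ≤ ∑ _u ∈ MU, (k:ℝ) :=
            Finset.sum_le_sum (fun u _ => hdUk u)
        _ = (MU.card : ℝ) * k := by rw [Finset.sum_const, nsmul_eq_mul]
    linarith
  -- lower bound on mk - e
  have hnesplit : (m:ℝ) * k - e ≤ (AW.card : ℝ) * m + (BW.card : ℝ) * (ε * m)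
      + (MW.card : ℝ) * m := by
    have h1 : (m:ℝ) * k - e = ∑ w ∈ AW, ((m:ℝ) - dW w) + ∑ w ∈ BW, ((m:ℝ) - dW w)
        + ∑ w ∈ MW, ((m:ℝ) - dW w) := by
      have h0 : (m:ℝ) * k - e = ∑ w, ((m:ℝ) - (dW w : ℝ)) := by
        rw [Finset.sum_sub_distrib, he2]
        push_cast
        simp [Finset.card_univ, mul_comm]
        exact Or.inl hkdef
      rw [h0, show (univ : Finset W) = AW ∪ BW ∪ MW from hWcover,
        Finset.sum_union hABMdisjW, Finset.sum_union hABdisjW]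
    have hdWm : ∀ w : W, (0:ℝ) ≤ (dW w : ℝ) := fun w => Nat.cast_nonneg _
    have bA : ∑ w ∈ AW, ((m:ℝ) - dW w) ≤ (AW.card : ℝ) * m := by
      calc ∑ w ∈ AW, ((m:ℝ) - dW w) ≤ ∑ _w ∈ AW, (m:ℝ) :=
            Finset.sum_le_sum (fun w _ => by linarith [hdWm w])
        _ = (AW.card : ℝ) * m := by rw [Finset.sum_const, nsmul_eq_mul]
    have bB : ∑ w ∈ BW, ((m:ℝ) - dW w) ≤ (BW.card : ℝ) * (ε * m) := by
      calc ∑ w ∈ BW, ((m:ℝ) - dW w) ≤ ∑ _w ∈ BW, ε * m :=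
            Finset.sum_le_sum (fun w hw => by
              have := (Finset.mem_filter.mp hw).2; linarith)
        _ = (BW.card : ℝ) * (ε * m) := by rw [Finset.sum_const, nsmul_eq_mul]
    have bM : ∑ w ∈ MW, ((m:ℝ) - dW w) ≤ (MW.card : ℝ) * m := by
      calc ∑ w ∈ MW, ((m:ℝ) - dW w) ≤ ∑ _w ∈ MW, (m:ℝ) :=
            Finset.sum_le_sum (fun w _ => by linarith [hdWm w])
        _ = (MW.card : ℝ) * m := by rw [Finset.sum_const, nsmul_eq_mul]
    linarith
  -- card bounds
  have hAUm : (AU.card : ℝ) ≤ m := by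
    exact_mod_cast (Finset.card_le_univ AU)
  have hBWk : (BW.card : ℝ) ≤ k := by
    exact_mod_cast (Finset.card_le_univ BW)
  -- derive: BU large, AW large
  have hBUlarge : (2*s - 2*ε) * m < (BU.card : ℝ) := by
    nlinarith [hel, hesplit, hcU, hk0, hm0]
  have hAWlarge : (2*s - 2*ε) * k < (AW.card : ℝ) := by
    nlinarith [heu, hnesplit, hcW, hk0, hm0]
  -- double counting edges between BU and AW
  set F : Finset (U × W) := (BU ×ˢ AW).filter (fun p : U × W => E p.1 p.2) with hF
  have hF1 : F.card = ∑ u ∈ BU, (AW.filter (fun w => E u w)).card := by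
    rw [hF, Finset.card_filter, Finset.sum_product]
    simp only [Finset.card_filter]
  have hF2 : F.card = ∑ w ∈ AW, (BU.filter (fun u => E u w)).card := by
    rw [hF, Finset.card_filter, Finset.sum_product_right]
    simp only [Finset.card_filter]
  have hFup : (F.card : ℝ) ≤ (AW.card : ℝ) * (ε * m) := by
    rw [hF2]
    push_cast
    calc ∑ w ∈ AW, ((BU.filter (fun u => E u w)).card : ℝ)
        ≤ ∑ w ∈ AW, ε * m := by
          apply Finset.sum_le_sum
          intro w hw
          have hle : (BU.filter (fun u => E u w)).card ≤ dW w := by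
            apply Finset.card_le_card
            intro u hu
            exact Finset.mem_filter.mpr ⟨Finset.mem_univ _, (Finset.mem_filter.mp hu).2⟩
          have := (Finset.mem_filter.mp hw).2
          calc ((BU.filter (fun u => E u w)).card : ℝ) ≤ (dW w : ℝ) := by exact_mod_cast hle
            _ ≤ ε * m := this
      _ = (AW.card : ℝ) * (ε * m) := by rw [Finset.sum_const, nsmul_eq_mul]
  have hFlow : (BU.card : ℝ) * ((AW.card : ℝ) - ε * k) ≤ (F.card : ℝ) := by
    rw [hF1]
    push_cast
    have hstep : ∀ u ∈ BU, (AW.card : ℝ) - ε * k ≤ ((AW.filter (fun w => E u w)).card : ℝ) := by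
      intro u hu
      have hmiss : (AW.filter (fun w => ¬ E u w)).card ≤ (univ.filter (fun w => ¬ E u w)).card :=
        Finset.card_le_card (Finset.filter_subset_filter _ (Finset.subset_univ _))
      have hsplitA : (AW.filter (fun w => E u w)).card + (AW.filter (fun w => ¬ E u w)).card
          = AW.card := Finset.card_filter_add_card_filter_not _
      have hsplitU : dU u + (univ.filter (fun w => ¬ E u w)).card = k := by
        simpa [hdU, hkdef, Finset.card_univ] using
          Finset.card_filter_add_card_filter_not (s := (univ : Finset W))
            (p := fun w => E u w)
      have hBu : (1-ε) * k ≤ (dU u : ℝ) := (Finset.mem_filter.mp hu).2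
      have h1 : ((univ.filter (fun w => ¬ E u w)).card : ℝ) ≤ ε * k := by
        have : (dU u : ℝ) + ((univ.filter (fun w => ¬ E u w)).card : ℝ) = k := by
          exact_mod_cast hsplitU
        linarith
      have h2 : ((AW.filter (fun w => E u w)).card : ℝ)
          + ((AW.filter (fun w => ¬ E u w)).card : ℝ) = AW.card := by exact_mod_cast hsplitA
      have h3 : ((AW.filter (fun w => ¬ E u w)).card : ℝ)
          ≤ ((univ.filter (fun w => ¬ E u w)).card : ℝ) := by exact_mod_cast hmiss
      linarith
    calc (BU.card : ℝ) * ((AW.card : ℝ) - ε * k)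
        = ∑ _u ∈ BU, ((AW.card : ℝ) - ε * k) := by rw [Finset.sum_const, nsmul_eq_mul]
      _ ≤ ∑ u ∈ BU, ((AW.filter (fun w => E u w)).card : ℝ) := Finset.sum_le_sum hstep
  -- final contradiction
  have hkey : (BU.card : ℝ) * ((AW.card : ℝ) - ε * k) ≤ (AW.card : ℝ) * (ε * m) :=
    le_trans hFlow hFup
  set b := (BU.card : ℝ)
  set a := (AW.card : ℝ)
  have hc2 : 2 * ε < 2*s - 2*ε := by nlinarith
  have haek : ε * k < a - ε * k := by nlinarith
  have hbpos : (2*s - 2*ε) * m < b := hBUlarge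
  nlinarith [mul_lt_mul_of_pos_right hbpos (by linarith : (0:ℝ) < a - ε * k),
    mul_lt_mul_of_pos_left hAWlarge (by nlinarith : (0:ℝ) < (2*s - 2*ε - ε) * m),
    mul_pos hm0 hk0, mul_pos hs0 hm0, mul_pos hs0 hk0]
end

section
/- For all 0 < ε < 1/2, d₂ > 0, 0 < δ ≤ (d₂/2)⁴⁸, and sufficiently large n: let H = (V₁ ∪ V₂ ∪ V₃, R) be a 3-partite 3-graph on n vertices with ||V_i| − |V_j|| ≤ δ|V_i| for all i,j, and let G = (V₁ ∪ V₂ ∪ V₃, E) be a 3-partite graph with each G[V_i, V_j] having dev₂(δ, d₂). If |R ∩ K₃⁽²⁾(G)| ≤ ε|K₃⁽²⁾(G)|, then (H|G, G) has dev_{2,3}(δ, 6ε). -/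
open Finset
open scoped Classical

/-- Edge density of a bipartite graph. -/
noncomputable def density {α β : Type*} [Fintype α] [Fintype β] (E : Finset (α × β)) : ℝ :=
  (E.card : ℝ) / ((Fintype.card α : ℝ) * (Fintype.card β : ℝ))

/-- `g(u,w) = 1 - d_B` if `uw ∈ E`, `-d_B` otherwise. -/
noncomputable def gfun {α β : Type*} [Fintype α] [Fintype β] [DecidableEq α] [DecidableEq β]
    (E : Finset (α × β)) (u : α) (w : β) : ℝ :=
  if (u, w) ∈ E then 1 - density E else - density E

/-- The bipartite graph with edge set `E` has `dev₂(ε, d)`. -/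
def dev2 {α β : Type*} [Fintype α] [Fintype β] [DecidableEq α] [DecidableEq β]
    (E : Finset (α × β)) (ε d : ℝ) : Prop :=
  |density E - d| < ε ∧
    ∑ u₀ : α, ∑ u₁ : α, ∑ w₀ : β, ∑ w₁ : β,
        gfun E u₀ w₀ * gfun E u₀ w₁ * gfun E u₁ w₀ * gfun E u₁ w₁
      ≤ ε * (Fintype.card α : ℝ) ^ 2 * (Fintype.card β : ℝ) ^ 2

/-- The set of triangles `K₃⁽²⁾(G)` of the 3-partite graph with bipartite pieces
`E12`, `E13`, `E23`. -/
def triangles {V₁ V₂ V₃ : Type*} [Fintype V₁] [Fintype V₂] [Fintype V₃]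
    [DecidableEq V₁] [DecidableEq V₂] [DecidableEq V₃]
    (E12 : Finset (V₁ × V₂)) (E13 : Finset (V₁ × V₃)) (E23 : Finset (V₂ × V₃)) :
    Finset (V₁ × V₂ × V₃) :=
  univ.filter (fun x => (x.1, x.2.1) ∈ E12 ∧ (x.1, x.2.2) ∈ E13 ∧ (x.2.1, x.2.2) ∈ E23)

/-- The function `h_{H,G}`: `1 - d₃` on `R ∩ K₃⁽²⁾(G)`, `-d₃` on `K₃⁽²⁾(G) \ R`, `0` otherwise,
where `RT = R ∩ T` and `T = K₃⁽²⁾(G)`. -/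
noncomputable def hfun {V₁ V₂ V₃ : Type*} [DecidableEq V₁] [DecidableEq V₂] [DecidableEq V₃]
    (RT T : Finset (V₁ × V₂ × V₃)) (d₃ : ℝ) (x : V₁) (y : V₂) (z : V₃) : ℝ :=
  if (x, y, z) ∈ RT then 1 - d₃ else if (x, y, z) ∈ T then - d₃ else 0



section AuxLemmas

private lemma cs_sum {X : Type} [Fintype X] (f g : X → ℝ) :
    (∑ x, f x * g x)^2 ≤ (∑ x, f x^2) * (∑ x, g x^2) :=
  Finset.sum_mul_sq_le_sq_mul_sq univ f g

private lemma cs_sum2 {X Y : Type} [Fintype X] [Fintype Y] (f g : X → Y → ℝ) :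
    (∑ x, ∑ y, f x y * g x y)^2 ≤ (∑ x, ∑ y, (f x y)^2) * (∑ x, ∑ y, (g x y)^2) := by
  have h1 : ∑ x, ∑ y, f x y * g x y = ∑ p : X × Y, f p.1 p.2 * g p.1 p.2 := by
    rw [Fintype.sum_prod_type]
  have h2 : ∑ x, ∑ y, (f x y)^2 = ∑ p : X × Y, (f p.1 p.2)^2 := by
    rw [Fintype.sum_prod_type]
  have h3 : ∑ x, ∑ y, (g x y)^2 = ∑ p : X × Y, (g p.1 p.2)^2 := by
    rw [Fintype.sum_prod_type]
  rw [h1, h2, h3]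
  exact Finset.sum_mul_sq_le_sq_mul_sq univ _ _

private lemma bilin {X Y : Type} [Fintype X] [Fintype Y]
    (g : X → Y → ℝ) (A : X → ℝ) (B : Y → ℝ) (a b S : ℝ)
    (hA : ∑ x, (A x)^2 ≤ a) (hB : ∑ y, (B y)^2 ≤ b)
    (hS : ∑ y₀, ∑ y₁, (∑ x, g x y₀ * g x y₁)^2 ≤ S) (hb : 0 ≤ b) (hS0 : 0 ≤ S) :
    ∑ x, ∑ y, A x * B y * g x y ≤ Real.sqrt (a*b) * Real.sqrt (Real.sqrt S) := by
  have ha : 0 ≤ a := le_trans (Finset.sum_nonneg fun x _ => sq_nonneg _) hA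
  set C : ℝ := ∑ x, (∑ y, B y * g x y)^2 with hCdef
  have hC0 : 0 ≤ C := Finset.sum_nonneg fun x _ => sq_nonneg _
  have hL : (∑ x, ∑ y, A x * B y * g x y) = ∑ x, A x * (∑ y, B y * g x y) := by
    refine Finset.sum_congr rfl fun x _ => ?_
    rw [Finset.mul_sum]
    exact Finset.sum_congr rfl fun y _ => by ring
  have h1 : (∑ x, ∑ y, A x * B y * g x y)^2 ≤ (∑ x, (A x)^2) * C := by
    rw [hL]; exact cs_sum A _
  have hC : C = ∑ y₀, ∑ y₁, (B y₀ * B y₁) * (∑ x, g x y₀ * g x y₁) := by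
    rw [hCdef]
    have hsq : ∀ x, (∑ y, B y * g x y)^2 = ∑ y₀, ∑ y₁, (B y₀ * g x y₀) * (B y₁ * g x y₁) := by
      intro x; rw [sq, Finset.sum_mul_sum]
    rw [Finset.sum_congr rfl fun x _ => hsq x]
    rw [Finset.sum_comm]
    refine Finset.sum_congr rfl fun y₀ _ => ?_
    rw [Finset.sum_comm]
    refine Finset.sum_congr rfl fun y₁ _ => ?_
    rw [Finset.mul_sum]
    exact Finset.sum_congr rfl fun x _ => by ring
  have h2 : C^2 ≤ (∑ y₀, ∑ y₁, (B y₀ * B y₁)^2) * (∑ y₀, ∑ y₁, (∑ x, g x y₀ * g x y₁)^2) := by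
    rw [hC]; exact cs_sum2 _ _
  have h3 : (∑ y₀, ∑ y₁, (B y₀ * B y₁)^2) = (∑ y, (B y)^2)^2 := by
    rw [sq, Finset.sum_mul_sum]
    exact Finset.sum_congr rfl fun y₀ _ => Finset.sum_congr rfl fun y₁ _ => by ring
  have hBs : 0 ≤ ∑ y, (B y)^2 := Finset.sum_nonneg fun y _ => sq_nonneg _
  have h4 : C^2 ≤ b^2 * S := by
    calc C^2 ≤ (∑ y, (B y)^2)^2 * (∑ y₀, ∑ y₁, (∑ x, g x y₀ * g x y₁)^2) := by
          rw [← h3]; exact h2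
    _ ≤ b^2 * S := by
          apply mul_le_mul (by nlinarith) (by linarith [hS]) ?_ (by positivity)
          · positivity
  have h5 : C ≤ b * Real.sqrt S := by
    have hCC : C = Real.sqrt (C^2) := (Real.sqrt_sq hC0).symm
    rw [hCC]
    calc Real.sqrt (C^2) ≤ Real.sqrt (b^2 * S) := Real.sqrt_le_sqrt h4
    _ = b * Real.sqrt S := by rw [Real.sqrt_mul (by positivity), Real.sqrt_sq hb]
  have h6 : (∑ x, ∑ y, A x * B y * g x y)^2 ≤ a * (b * Real.sqrt S) := by
    calc (∑ x, ∑ y, A x * B y * g x y)^2 ≤ (∑ x, (A x)^2) * C := h1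
    _ ≤ a * (b * Real.sqrt S) := mul_le_mul hA h5 hC0 ha
  calc ∑ x, ∑ y, A x * B y * g x y ≤ |∑ x, ∑ y, A x * B y * g x y| := le_abs_self _
  _ = Real.sqrt ((∑ x, ∑ y, A x * B y * g x y)^2) := (Real.sqrt_sq_eq_abs _).symm
  _ ≤ Real.sqrt (a * (b * Real.sqrt S)) := Real.sqrt_le_sqrt h6
  _ = Real.sqrt (a*b) * Real.sqrt (Real.sqrt S) := by
      rw [← Real.sqrt_mul (by positivity)]
      ring_nf

private lemma sum_sqrt_le {O₁ O₂ : Type} [Fintype O₁] [Fintype O₂]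
    (D : O₁ → O₂ → ℝ) (RA : ℝ) (hD : ∀ o1 o2, 0 ≤ D o1 o2)
    (hRA : ∑ o1, ∑ o2, D o1 o2 ≤ RA) :
    ∑ o1, ∑ o2, Real.sqrt (D o1 o2)
      ≤ Real.sqrt ((Fintype.card O₁ : ℝ) * (Fintype.card O₂ : ℝ) * RA) := by
  have h0 : 0 ≤ ∑ o1, ∑ o2, Real.sqrt (D o1 o2) :=
    Finset.sum_nonneg fun _ _ => Finset.sum_nonneg fun _ _ => Real.sqrt_nonneg _
  have h1 : (∑ o1, ∑ o2, Real.sqrt (D o1 o2))^2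
      ≤ (∑ o1 : O₁, ∑ o2 : O₂, Real.sqrt (D o1 o2)^2) * (∑ o1 : O₁, ∑ o2 : O₂, (1:ℝ)^2) := by
    have := cs_sum2 (fun o1 o2 => Real.sqrt (D o1 o2)) (fun _ _ => (1:ℝ))
    simpa using this
  have h2 : (∑ o1 : O₁, ∑ o2 : O₂, Real.sqrt (D o1 o2)^2) = ∑ o1, ∑ o2, D o1 o2 := by
    refine Finset.sum_congr rfl fun o1 _ => Finset.sum_congr rfl fun o2 _ => ?_
    rw [Real.sq_sqrt (hD o1 o2)]
  have h3 : (∑ o1 : O₁, ∑ o2 : O₂, (1:ℝ)^2) = (Fintype.card O₁ : ℝ) * (Fintype.card O₂ : ℝ) := by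
    simp [Finset.card_univ, mul_comm]
  have h4 : (∑ o1, ∑ o2, Real.sqrt (D o1 o2))^2
      ≤ (Fintype.card O₁ : ℝ) * (Fintype.card O₂ : ℝ) * RA := by
    rw [h2, h3] at h1
    calc (∑ o1, ∑ o2, Real.sqrt (D o1 o2))^2
        ≤ (∑ o1, ∑ o2, D o1 o2) * ((Fintype.card O₁ : ℝ) * (Fintype.card O₂ : ℝ)) := h1
      _ ≤ RA * ((Fintype.card O₁ : ℝ) * (Fintype.card O₂ : ℝ)) :=
          mul_le_mul_of_nonneg_right hRA (by positivity)
      _ = (Fintype.card O₁ : ℝ) * (Fintype.card O₂ : ℝ) * RA := by ring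
  calc ∑ o1, ∑ o2, Real.sqrt (D o1 o2) = Real.sqrt ((∑ o1, ∑ o2, Real.sqrt (D o1 o2))^2) :=
        (Real.sqrt_sq h0).symm
    _ ≤ _ := Real.sqrt_le_sqrt h4

private lemma werr {X Y O₁ O₂ O₃ O₄ : Type} [Fintype X] [Fintype Y] [Fintype O₁] [Fintype O₂]
    [Fintype O₃] [Fintype O₄]
    (g : X → Y → ℝ) (F : O₁ → O₂ → O₃ → O₄ → X → Y → ℝ)
    (A : O₁ → O₂ → O₃ → O₄ → X → ℝ) (B : O₁ → O₂ → O₃ → O₄ → Y → ℝ)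
    (DA : O₁ → O₂ → ℝ) (DB : O₃ → O₄ → ℝ) (RA RB S : ℝ)
    (hpoint : ∀ o1 o2 o3 o4 x y, F o1 o2 o3 o4 x y = A o1 o2 o3 o4 x * B o1 o2 o3 o4 y * g x y)
    (hA : ∀ o1 o2 o3 o4, ∑ x, (A o1 o2 o3 o4 x)^2 ≤ DA o1 o2)
    (hB : ∀ o1 o2 o3 o4, ∑ y, (B o1 o2 o3 o4 y)^2 ≤ DB o3 o4)
    (hDA : ∀ o1 o2, 0 ≤ DA o1 o2) (hDB : ∀ o3 o4, 0 ≤ DB o3 o4)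
    (hRA : ∑ o1, ∑ o2, DA o1 o2 ≤ RA) (hRB : ∑ o3, ∑ o4, DB o3 o4 ≤ RB)
    (hS : ∑ y₀, ∑ y₁, (∑ x, g x y₀ * g x y₁)^2 ≤ S) (hS0 : 0 ≤ S) :
    (∑ o1, ∑ o2, ∑ o3, ∑ o4, ∑ x, ∑ y, F o1 o2 o3 o4 x y)
      ≤ Real.sqrt ((Fintype.card O₁ : ℝ) * (Fintype.card O₂ : ℝ) * RA)
        * Real.sqrt ((Fintype.card O₃ : ℝ) * (Fintype.card O₄ : ℝ) * RB)
        * Real.sqrt (Real.sqrt S) := by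
  set K := Real.sqrt (Real.sqrt S) with hK
  have hK0 : 0 ≤ K := Real.sqrt_nonneg _
  have hinner : ∀ o1 o2 o3 o4, (∑ x, ∑ y, F o1 o2 o3 o4 x y)
      ≤ Real.sqrt (DA o1 o2) * Real.sqrt (DB o3 o4) * K := by
    intro o1 o2 o3 o4
    have he : (∑ x, ∑ y, F o1 o2 o3 o4 x y)
        = ∑ x, ∑ y, A o1 o2 o3 o4 x * B o1 o2 o3 o4 y * g x y :=
      Finset.sum_congr rfl fun x _ => Finset.sum_congr rfl fun y _ => hpoint o1 o2 o3 o4 x y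
    rw [he]
    calc ∑ x, ∑ y, A o1 o2 o3 o4 x * B o1 o2 o3 o4 y * g x y
        ≤ Real.sqrt (DA o1 o2 * DB o3 o4) * K :=
          bilin g _ _ _ _ S (hA o1 o2 o3 o4) (hB o1 o2 o3 o4) hS (hDB o3 o4) hS0
      _ = Real.sqrt (DA o1 o2) * Real.sqrt (DB o3 o4) * K := by
          rw [Real.sqrt_mul (hDA o1 o2)]
  calc (∑ o1, ∑ o2, ∑ o3, ∑ o4, ∑ x, ∑ y, F o1 o2 o3 o4 x y)
      ≤ ∑ o1, ∑ o2, ∑ o3, ∑ o4, Real.sqrt (DA o1 o2) * Real.sqrt (DB o3 o4) * K := by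
        refine Finset.sum_le_sum fun o1 _ => Finset.sum_le_sum fun o2 _ =>
          Finset.sum_le_sum fun o3 _ => Finset.sum_le_sum fun o4 _ => hinner o1 o2 o3 o4
    _ = ∑ o1, ∑ o2, (∑ o3, ∑ o4, Real.sqrt (DB o3 o4)) * (Real.sqrt (DA o1 o2) * K) := by
        refine Finset.sum_congr rfl fun o1 _ => Finset.sum_congr rfl fun o2 _ => ?_
        rw [Finset.sum_mul]
        refine Finset.sum_congr rfl fun o3 _ => ?_
        rw [Finset.sum_mul]
        exact Finset.sum_congr rfl fun o4 _ => by ring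
    _ = (∑ o1, ∑ o2, Real.sqrt (DA o1 o2)) * (∑ o3, ∑ o4, Real.sqrt (DB o3 o4)) * K := by
        rw [Finset.sum_mul, Finset.sum_mul]
        refine Finset.sum_congr rfl fun o1 _ => ?_
        rw [Finset.sum_mul, Finset.sum_mul]
        exact Finset.sum_congr rfl fun o2 _ => by ring
    _ ≤ Real.sqrt ((Fintype.card O₁ : ℝ) * (Fintype.card O₂ : ℝ) * RA)
        * Real.sqrt ((Fintype.card O₃ : ℝ) * (Fintype.card O₄ : ℝ) * RB) * K := by
        have h1 := sum_sqrt_le DA RA hDA hRA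
        have h2 := sum_sqrt_le DB RB hDB hRB
        have m1 : 0 ≤ ∑ o1, ∑ o2, Real.sqrt (DA o1 o2) :=
          Finset.sum_nonneg fun _ _ => Finset.sum_nonneg fun _ _ => Real.sqrt_nonneg _
        have m2 : 0 ≤ ∑ o3, ∑ o4, Real.sqrt (DB o3 o4) :=
          Finset.sum_nonneg fun _ _ => Finset.sum_nonneg fun _ _ => Real.sqrt_nonneg _
        exact mul_le_mul_of_nonneg_right (mul_le_mul h1 h2 m2 (Real.sqrt_nonneg _)) hK0

private lemma serr {X Y O : Type} [Fintype X] [Fintype Y] [Fintype O]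
    (g : X → Y → ℝ) (F : O → X → Y → ℝ) (A : O → X → ℝ) (B : O → Y → ℝ) (S : ℝ)
    (hpoint : ∀ o x y, F o x y = A o x * B o y * g x y)
    (hA : ∀ o x, (A o x)^2 ≤ 1) (hB : ∀ o y, (B o y)^2 ≤ 1)
    (hS : ∑ y₀, ∑ y₁, (∑ x, g x y₀ * g x y₁)^2 ≤ S) (hS0 : 0 ≤ S) :
    (∑ o, ∑ x, ∑ y, F o x y)
      ≤ (Fintype.card O : ℝ) *
          (Real.sqrt ((Fintype.card X : ℝ) * (Fintype.card Y : ℝ)) * Real.sqrt (Real.sqrt S)) := by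
  have hinner : ∀ o, (∑ x, ∑ y, F o x y)
      ≤ Real.sqrt ((Fintype.card X : ℝ) * (Fintype.card Y : ℝ)) * Real.sqrt (Real.sqrt S) := by
    intro o
    have he : (∑ x, ∑ y, F o x y) = ∑ x, ∑ y, A o x * B o y * g x y :=
      Finset.sum_congr rfl fun x _ => Finset.sum_congr rfl fun y _ => hpoint o x y
    rw [he]
    refine bilin g _ _ _ _ S ?_ ?_ hS (by positivity) hS0
    · calc ∑ x, (A o x)^2 ≤ ∑ x : X, (1:ℝ) := Finset.sum_le_sum fun x _ => hA o x
      _ = (Fintype.card X : ℝ) := by simp [Finset.card_univ]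
    · calc ∑ y, (B o y)^2 ≤ ∑ y : Y, (1:ℝ) := Finset.sum_le_sum fun y _ => hB o y
      _ = (Fintype.card Y : ℝ) := by simp [Finset.card_univ]
  calc (∑ o, ∑ x, ∑ y, F o x y)
      ≤ ∑ _o : O, Real.sqrt ((Fintype.card X : ℝ) * (Fintype.card Y : ℝ)) * Real.sqrt (Real.sqrt S) :=
        Finset.sum_le_sum fun o _ => hinner o
    _ = _ := by simp [Finset.card_univ]

private lemma alg1 (A B E₁ E₂ R δ Q : ℝ) (hA : 0 ≤ A) (hB : 0 ≤ B) (hE : 0 ≤ E₁ * E₂)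
    (hR : 0 ≤ R) (hδ : 0 ≤ δ) (hQ : 0 ≤ Q) (hABE : A * B * (E₁ * E₂) = Q^2) :
    Real.sqrt (A*R) * Real.sqrt (B*R) * Real.sqrt (Real.sqrt (δ * E₁^2 * E₂^2))
      = Real.sqrt (Real.sqrt δ) * (R * Q) := by
  rw [show δ * E₁^2 * E₂^2 = δ * (E₁*E₂)^2 by ring]
  have h1 : Real.sqrt (δ * (E₁*E₂)^2) = Real.sqrt δ * (E₁*E₂) := by
    rw [Real.sqrt_mul hδ, Real.sqrt_sq hE]
  rw [h1, Real.sqrt_mul (Real.sqrt_nonneg δ)]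
  have h2 : Real.sqrt (A*R) * Real.sqrt (B*R) * Real.sqrt (E₁*E₂) = R * Q := by
    rw [← Real.sqrt_mul (by positivity), ← Real.sqrt_mul (by positivity)]
    rw [show A*R*(B*R)*(E₁*E₂) = (R*Q)^2 by linear_combination R^2 * hABE]
    exact Real.sqrt_sq (by positivity)
  calc Real.sqrt (A*R) * Real.sqrt (B*R) * (Real.sqrt (Real.sqrt δ) * Real.sqrt (E₁*E₂))
      = (Real.sqrt (A*R) * Real.sqrt (B*R) * Real.sqrt (E₁*E₂)) * Real.sqrt (Real.sqrt δ) := by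
        ring
    _ = Real.sqrt (Real.sqrt δ) * (R * Q) := by rw [h2]; ring

private lemma alg2 (δ n m : ℝ) (hδ : 0 ≤ δ) (hn : 0 ≤ n) (hm : 0 ≤ m) :
    Real.sqrt (n*m) * Real.sqrt (Real.sqrt (δ * n^2 * m^2))
      = Real.sqrt (Real.sqrt δ) * (n*m) := by
  have h0 : δ * n^2 * m^2 = δ * (n*m)^2 := by ring
  rw [h0]
  have h1 : Real.sqrt (δ * (n*m)^2) = Real.sqrt δ * (n*m) := by
    rw [Real.sqrt_mul hδ, Real.sqrt_sq (by positivity)]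
  rw [h1, Real.sqrt_mul (Real.sqrt_nonneg δ)]
  calc Real.sqrt (n*m) * (Real.sqrt (Real.sqrt δ) * Real.sqrt (n*m))
      = Real.sqrt (Real.sqrt δ) * (Real.sqrt (n*m) * Real.sqrt (n*m)) := by ring
    _ = Real.sqrt (Real.sqrt δ) * (n*m) := by rw [Real.mul_self_sqrt (by positivity)]

private lemma sq_le_self01 {x c : ℝ} (hx0 : 0 ≤ x) (hx1 : x ≤ 1) (hc0 : 0 ≤ c) (hc1 : c ≤ 1) :
    (x*c)^2 ≤ x := by
  have h1 : x*c ≤ x := mul_le_of_le_one_right hx0 hc1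
  have h2 : 0 ≤ x*c := mul_nonneg hx0 hc0
  calc (x*c)^2 ≤ x^2 := by nlinarith
  _ ≤ x := by nlinarith


variable {V₁ V₂ V₃ : Type} [Fintype V₁] [Fintype V₂] [Fintype V₃]


private lemma mul01 {a b : ℝ} (ha : 0 ≤ a ∧ a ≤ 1) (hb : 0 ≤ b ∧ b ≤ 1) :
    0 ≤ a*b ∧ a*b ≤ 1 :=
  ⟨mul_nonneg ha.1 hb.1, by nlinarith [ha.1, ha.2, hb.1, hb.2]⟩

private lemma sum3_mul (f : V₁ → V₂ → V₃ → ℝ) (c : ℝ) :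
    (∑ u : V₁, ∑ w : V₂, ∑ z : V₃, f u w z * c)
      = (∑ u : V₁, ∑ w : V₂, ∑ z : V₃, f u w z) * c := by
  rw [Finset.sum_mul]
  refine Finset.sum_congr rfl fun u _ => ?_
  rw [Finset.sum_mul]
  refine Finset.sum_congr rfl fun w _ => ?_
  rw [Finset.sum_mul]
private lemma r3a (f : V₁ → V₂ → V₃ → ℝ) :
    ∑ w : V₂, ∑ z : V₃, ∑ u : V₁, f u w z = ∑ u : V₁, ∑ w : V₂, ∑ z : V₃, f u w z :=
  (Finset.sum_congr rfl fun _ _ => Finset.sum_comm).trans Finset.sum_comm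

private lemma r3b (f : V₁ → V₂ → V₃ → ℝ) :
    ∑ u : V₁, ∑ z : V₃, ∑ w : V₂, f u w z = ∑ u : V₁, ∑ w : V₂, ∑ z : V₃, f u w z :=
  Finset.sum_congr rfl fun _ _ => Finset.sum_comm

private lemma r3c (f : V₁ → V₂ → V₃ → ℝ) :
    ∑ z : V₃, ∑ u : V₁, ∑ w : V₂, f u w z = ∑ u : V₁, ∑ w : V₂, ∑ z : V₃, f u w z := by
  rw [Finset.sum_comm]
  exact Finset.sum_congr rfl fun _ _ => Finset.sum_comm

private lemma r3d (f : V₁ → V₂ → V₃ → ℝ) :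
    ∑ w : V₂, ∑ u : V₁, ∑ z : V₃, f u w z = ∑ u : V₁, ∑ w : V₂, ∑ z : V₃, f u w z :=
  Finset.sum_comm

private lemma r6A (f : V₁ → V₁ → V₂ → V₂ → V₃ → V₃ → ℝ) :
    (∑ u₀ : V₁, ∑ u₁ : V₁, ∑ w₀ : V₂, ∑ w₁ : V₂, ∑ z₀ : V₃, ∑ z₁ : V₃, f u₀ u₁ w₀ w₁ z₀ z₁)
    = ∑ w₀ : V₂, ∑ z₀ : V₃, ∑ u₁ : V₁, ∑ z₁ : V₃, ∑ u₀ : V₁, ∑ w₁ : V₂, f u₀ u₁ w₀ w₁ z₀ z₁ := by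
  have h1 : (∑ u₀ : V₁, ∑ u₁ : V₁, ∑ w₀ : V₂, ∑ w₁ : V₂, ∑ z₀ : V₃, ∑ z₁ : V₃, f u₀ u₁ w₀ w₁ z₀ z₁)
      = ∑ p : V₁ × V₁ × V₂ × V₂ × V₃ × V₃, f p.1 p.2.1 p.2.2.1 p.2.2.2.1 p.2.2.2.2.1 p.2.2.2.2.2 := by
    simp only [Fintype.sum_prod_type]
  have h2 : (∑ q : V₂ × V₃ × V₁ × V₃ × V₁ × V₂, f q.2.2.2.2.1 q.2.2.1 q.1 q.2.2.2.2.2 q.2.1 q.2.2.2.1)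
      = ∑ w₀ : V₂, ∑ z₀ : V₃, ∑ u₁ : V₁, ∑ z₁ : V₃, ∑ u₀ : V₁, ∑ w₁ : V₂, f u₀ u₁ w₀ w₁ z₀ z₁ := by
    simp only [Fintype.sum_prod_type]
  rw [h1, ← h2]
  exact Fintype.sum_equiv
    ⟨fun p => (p.2.2.1, p.2.2.2.2.1, p.2.1, p.2.2.2.2.2, p.1, p.2.2.2.1),
     fun q => (q.2.2.2.2.1, q.2.2.1, q.1, q.2.2.2.2.2, q.2.1, q.2.2.2.1),
     fun ⟨a,b,c,d,e,g⟩ => rfl, fun ⟨a,b,c,d,e,g⟩ => rfl⟩ _ _ (fun ⟨a,b,c,d,e,g⟩ => rfl)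

private lemma r6B (f : V₁ → V₁ → V₂ → V₂ → V₃ → V₃ → ℝ) :
    (∑ u₀ : V₁, ∑ u₁ : V₁, ∑ w₀ : V₂, ∑ w₁ : V₂, ∑ z₀ : V₃, ∑ z₁ : V₃, f u₀ u₁ w₀ w₁ z₀ z₁)
    = ∑ w₁ : V₂, ∑ z₁ : V₃, ∑ u₀ : V₁, ∑ z₀ : V₃, ∑ u₁ : V₁, ∑ w₀ : V₂, f u₀ u₁ w₀ w₁ z₀ z₁ := by
  have h1 : (∑ u₀ : V₁, ∑ u₁ : V₁, ∑ w₀ : V₂, ∑ w₁ : V₂, ∑ z₀ : V₃, ∑ z₁ : V₃, f u₀ u₁ w₀ w₁ z₀ z₁)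
      = ∑ p : V₁ × V₁ × V₂ × V₂ × V₃ × V₃, f p.1 p.2.1 p.2.2.1 p.2.2.2.1 p.2.2.2.2.1 p.2.2.2.2.2 := by
    simp only [Fintype.sum_prod_type]
  have h2 : (∑ q : V₂ × V₃ × V₁ × V₃ × V₁ × V₂, f q.2.2.1 q.2.2.2.2.1 q.2.2.2.2.2 q.1 q.2.2.2.1 q.2.1)
      = ∑ w₁ : V₂, ∑ z₁ : V₃, ∑ u₀ : V₁, ∑ z₀ : V₃, ∑ u₁ : V₁, ∑ w₀ : V₂, f u₀ u₁ w₀ w₁ z₀ z₁ := by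
    simp only [Fintype.sum_prod_type]
  rw [h1, ← h2]
  exact Fintype.sum_equiv
    ⟨fun p => (p.2.2.2.1, p.2.2.2.2.2, p.1, p.2.2.2.2.1, p.2.1, p.2.2.1),
     fun q => (q.2.2.1, q.2.2.2.2.1, q.2.2.2.2.2, q.1, q.2.2.2.1, q.2.1),
     fun ⟨a,b,c,d,e,g⟩ => rfl, fun ⟨a,b,c,d,e,g⟩ => rfl⟩ _ _ (fun ⟨a,b,c,d,e,g⟩ => rfl)

private lemma r6C (f : V₁ → V₁ → V₂ → V₂ → V₃ → V₃ → ℝ) :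
    (∑ u₀ : V₁, ∑ u₁ : V₁, ∑ w₀ : V₂, ∑ w₁ : V₂, ∑ z₀ : V₃, ∑ z₁ : V₃, f u₀ u₁ w₀ w₁ z₀ z₁)
    = ∑ w₀ : V₂, ∑ z₀ : V₃, ∑ u₁ : V₁, ∑ w₁ : V₂, ∑ u₀ : V₁, ∑ z₁ : V₃, f u₀ u₁ w₀ w₁ z₀ z₁ := by
  have h1 : (∑ u₀ : V₁, ∑ u₁ : V₁, ∑ w₀ : V₂, ∑ w₁ : V₂, ∑ z₀ : V₃, ∑ z₁ : V₃, f u₀ u₁ w₀ w₁ z₀ z₁)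
      = ∑ p : V₁ × V₁ × V₂ × V₂ × V₃ × V₃, f p.1 p.2.1 p.2.2.1 p.2.2.2.1 p.2.2.2.2.1 p.2.2.2.2.2 := by
    simp only [Fintype.sum_prod_type]
  have h2 : (∑ q : V₂ × V₃ × V₁ × V₂ × V₁ × V₃, f q.2.2.2.2.1 q.2.2.1 q.1 q.2.2.2.1 q.2.1 q.2.2.2.2.2)
      = ∑ w₀ : V₂, ∑ z₀ : V₃, ∑ u₁ : V₁, ∑ w₁ : V₂, ∑ u₀ : V₁, ∑ z₁ : V₃, f u₀ u₁ w₀ w₁ z₀ z₁ := by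
    simp only [Fintype.sum_prod_type]
  rw [h1, ← h2]
  exact Fintype.sum_equiv
    ⟨fun p => (p.2.2.1, p.2.2.2.2.1, p.2.1, p.2.2.2.1, p.1, p.2.2.2.2.2),
     fun q => (q.2.2.2.2.1, q.2.2.1, q.1, q.2.2.2.1, q.2.1, q.2.2.2.2.2),
     fun ⟨a,b,c,d,e,g⟩ => rfl, fun ⟨a,b,c,d,e,g⟩ => rfl⟩ _ _ (fun ⟨a,b,c,d,e,g⟩ => rfl)

private lemma r6D (f : V₁ → V₁ → V₂ → V₂ → V₃ → V₃ → ℝ) :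
    (∑ u₀ : V₁, ∑ u₁ : V₁, ∑ w₀ : V₂, ∑ w₁ : V₂, ∑ z₀ : V₃, ∑ z₁ : V₃, f u₀ u₁ w₀ w₁ z₀ z₁)
    = ∑ w₁ : V₂, ∑ z₁ : V₃, ∑ u₀ : V₁, ∑ w₀ : V₂, ∑ u₁ : V₁, ∑ z₀ : V₃, f u₀ u₁ w₀ w₁ z₀ z₁ := by
  have h1 : (∑ u₀ : V₁, ∑ u₁ : V₁, ∑ w₀ : V₂, ∑ w₁ : V₂, ∑ z₀ : V₃, ∑ z₁ : V₃, f u₀ u₁ w₀ w₁ z₀ z₁)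
      = ∑ p : V₁ × V₁ × V₂ × V₂ × V₃ × V₃, f p.1 p.2.1 p.2.2.1 p.2.2.2.1 p.2.2.2.2.1 p.2.2.2.2.2 := by
    simp only [Fintype.sum_prod_type]
  have h2 : (∑ q : V₂ × V₃ × V₁ × V₂ × V₁ × V₃, f q.2.2.1 q.2.2.2.2.1 q.2.2.2.1 q.1 q.2.2.2.2.2 q.2.1)
      = ∑ w₁ : V₂, ∑ z₁ : V₃, ∑ u₀ : V₁, ∑ w₀ : V₂, ∑ u₁ : V₁, ∑ z₀ : V₃, f u₀ u₁ w₀ w₁ z₀ z₁ := by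
    simp only [Fintype.sum_prod_type]
  rw [h1, ← h2]
  exact Fintype.sum_equiv
    ⟨fun p => (p.2.2.2.1, p.2.2.2.2.2, p.1, p.2.2.1, p.2.1, p.2.2.2.2.1),
     fun q => (q.2.2.1, q.2.2.2.2.1, q.2.2.2.1, q.1, q.2.2.2.2.2, q.2.1),
     fun ⟨a,b,c,d,e,g⟩ => rfl, fun ⟨a,b,c,d,e,g⟩ => rfl⟩ _ _ (fun ⟨a,b,c,d,e,g⟩ => rfl)

private lemma r6E (f : V₁ → V₁ → V₂ → V₂ → V₃ → V₃ → ℝ) :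
    (∑ u₀ : V₁, ∑ u₁ : V₁, ∑ w₀ : V₂, ∑ w₁ : V₂, ∑ z₀ : V₃, ∑ z₁ : V₃, f u₀ u₁ w₀ w₁ z₀ z₁)
    = ∑ u₀ : V₁, ∑ z₀ : V₃, ∑ u₁ : V₁, ∑ w₁ : V₂, ∑ w₀ : V₂, ∑ z₁ : V₃, f u₀ u₁ w₀ w₁ z₀ z₁ := by
  have h1 : (∑ u₀ : V₁, ∑ u₁ : V₁, ∑ w₀ : V₂, ∑ w₁ : V₂, ∑ z₀ : V₃, ∑ z₁ : V₃, f u₀ u₁ w₀ w₁ z₀ z₁)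
      = ∑ p : V₁ × V₁ × V₂ × V₂ × V₃ × V₃, f p.1 p.2.1 p.2.2.1 p.2.2.2.1 p.2.2.2.2.1 p.2.2.2.2.2 := by
    simp only [Fintype.sum_prod_type]
  have h2 : (∑ q : V₁ × V₃ × V₁ × V₂ × V₂ × V₃, f q.1 q.2.2.1 q.2.2.2.2.1 q.2.2.2.1 q.2.1 q.2.2.2.2.2)
      = ∑ u₀ : V₁, ∑ z₀ : V₃, ∑ u₁ : V₁, ∑ w₁ : V₂, ∑ w₀ : V₂, ∑ z₁ : V₃, f u₀ u₁ w₀ w₁ z₀ z₁ := by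
    simp only [Fintype.sum_prod_type]
  rw [h1, ← h2]
  exact Fintype.sum_equiv
    ⟨fun p => (p.1, p.2.2.2.2.1, p.2.1, p.2.2.2.1, p.2.2.1, p.2.2.2.2.2),
     fun q => (q.1, q.2.2.1, q.2.2.2.2.1, q.2.2.2.1, q.2.1, q.2.2.2.2.2),
     fun ⟨a,b,c,d,e,g⟩ => rfl, fun ⟨a,b,c,d,e,g⟩ => rfl⟩ _ _ (fun ⟨a,b,c,d,e,g⟩ => rfl)

private lemma r6F (f : V₁ → V₁ → V₂ → V₂ → V₃ → V₃ → ℝ) :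
    (∑ u₀ : V₁, ∑ u₁ : V₁, ∑ w₀ : V₂, ∑ w₁ : V₂, ∑ z₀ : V₃, ∑ z₁ : V₃, f u₀ u₁ w₀ w₁ z₀ z₁)
    = ∑ u₁ : V₁, ∑ z₁ : V₃, ∑ u₀ : V₁, ∑ w₀ : V₂, ∑ w₁ : V₂, ∑ z₀ : V₃, f u₀ u₁ w₀ w₁ z₀ z₁ := by
  have h1 : (∑ u₀ : V₁, ∑ u₁ : V₁, ∑ w₀ : V₂, ∑ w₁ : V₂, ∑ z₀ : V₃, ∑ z₁ : V₃, f u₀ u₁ w₀ w₁ z₀ z₁)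
      = ∑ p : V₁ × V₁ × V₂ × V₂ × V₃ × V₃, f p.1 p.2.1 p.2.2.1 p.2.2.2.1 p.2.2.2.2.1 p.2.2.2.2.2 := by
    simp only [Fintype.sum_prod_type]
  have h2 : (∑ q : V₁ × V₃ × V₁ × V₂ × V₂ × V₃, f q.2.2.1 q.1 q.2.2.2.1 q.2.2.2.2.1 q.2.2.2.2.2 q.2.1)
      = ∑ u₁ : V₁, ∑ z₁ : V₃, ∑ u₀ : V₁, ∑ w₀ : V₂, ∑ w₁ : V₂, ∑ z₀ : V₃, f u₀ u₁ w₀ w₁ z₀ z₁ := by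
    simp only [Fintype.sum_prod_type]
  rw [h1, ← h2]
  exact Fintype.sum_equiv
    ⟨fun p => (p.2.1, p.2.2.2.2.2, p.1, p.2.2.1, p.2.2.2.1, p.2.2.2.2.1),
     fun q => (q.2.2.1, q.1, q.2.2.2.1, q.2.2.2.2.1, q.2.2.2.2.2, q.2.1),
     fun ⟨a,b,c,d,e,g⟩ => rfl, fun ⟨a,b,c,d,e,g⟩ => rfl⟩ _ _ (fun ⟨a,b,c,d,e,g⟩ => rfl)

private lemma r6G (f : V₁ → V₁ → V₂ → V₂ → V₃ → V₃ → ℝ) :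
    (∑ u₀ : V₁, ∑ u₁ : V₁, ∑ w₀ : V₂, ∑ w₁ : V₂, ∑ z₀ : V₃, ∑ z₁ : V₃, f u₀ u₁ w₀ w₁ z₀ z₁)
    = ∑ u₀ : V₁, ∑ w₀ : V₂, ∑ z₀ : V₃, ∑ u₁ : V₁, ∑ w₁ : V₂, ∑ z₁ : V₃, f u₀ u₁ w₀ w₁ z₀ z₁ := by
  have h1 : (∑ u₀ : V₁, ∑ u₁ : V₁, ∑ w₀ : V₂, ∑ w₁ : V₂, ∑ z₀ : V₃, ∑ z₁ : V₃, f u₀ u₁ w₀ w₁ z₀ z₁)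
      = ∑ p : V₁ × V₁ × V₂ × V₂ × V₃ × V₃, f p.1 p.2.1 p.2.2.1 p.2.2.2.1 p.2.2.2.2.1 p.2.2.2.2.2 := by
    simp only [Fintype.sum_prod_type]
  have h2 : (∑ q : V₁ × V₂ × V₃ × V₁ × V₂ × V₃, f q.1 q.2.2.2.1 q.2.1 q.2.2.2.2.1 q.2.2.1 q.2.2.2.2.2)
      = ∑ u₀ : V₁, ∑ w₀ : V₂, ∑ z₀ : V₃, ∑ u₁ : V₁, ∑ w₁ : V₂, ∑ z₁ : V₃, f u₀ u₁ w₀ w₁ z₀ z₁ := by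
    simp only [Fintype.sum_prod_type]
  rw [h1, ← h2]
  exact Fintype.sum_equiv
    ⟨fun p => (p.1, p.2.2.1, p.2.2.2.2.1, p.2.1, p.2.2.2.1, p.2.2.2.2.2),
     fun q => (q.1, q.2.2.2.1, q.2.1, q.2.2.2.2.1, q.2.2.1, q.2.2.2.2.2),
     fun ⟨a,b,c,d,e,g⟩ => rfl, fun ⟨a,b,c,d,e,g⟩ => rfl⟩ _ _ (fun ⟨a,b,c,d,e,g⟩ => rfl)


private lemma sum6_factor (ρ : V₁ → V₂ → V₃ → ℝ) (c : ℝ) :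
    (∑ u₀ : V₁, ∑ u₁ : V₁, ∑ w₀ : V₂, ∑ w₁ : V₂, ∑ z₀ : V₃, ∑ z₁ : V₃,
        ρ u₀ w₀ z₀ * ρ u₁ w₁ z₁ * c)
      = (∑ u : V₁, ∑ w : V₂, ∑ z : V₃, ρ u w z)^2 * c := by
  calc (∑ u₀ : V₁, ∑ u₁ : V₁, ∑ w₀ : V₂, ∑ w₁ : V₂, ∑ z₀ : V₃, ∑ z₁ : V₃,
        ρ u₀ w₀ z₀ * ρ u₁ w₁ z₁ * c)
      = ∑ u₀ : V₁, ∑ w₀ : V₂, ∑ z₀ : V₃, ∑ u₁ : V₁, ∑ w₁ : V₂, ∑ z₁ : V₃,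
        ρ u₀ w₀ z₀ * ρ u₁ w₁ z₁ * c := r6G _
    _ = ∑ u₀ : V₁, ∑ w₀ : V₂, ∑ z₀ : V₃,
          (∑ u₁ : V₁, ∑ w₁ : V₂, ∑ z₁ : V₃, ρ u₁ w₁ z₁) * (ρ u₀ w₀ z₀ * c) := by
        refine Finset.sum_congr rfl fun u₀ _ => Finset.sum_congr rfl fun w₀ _ =>
          Finset.sum_congr rfl fun z₀ _ => ?_
        rw [← sum3_mul]
        exact Finset.sum_congr rfl fun u₁ _ => Finset.sum_congr rfl fun w₁ _ =>
          Finset.sum_congr rfl fun z₁ _ => by ring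
    _ = (∑ u : V₁, ∑ w : V₂, ∑ z : V₃,
          ρ u w z * ((∑ u₁ : V₁, ∑ w₁ : V₂, ∑ z₁ : V₃, ρ u₁ w₁ z₁) * c)) := by
        refine Finset.sum_congr rfl fun u₀ _ => Finset.sum_congr rfl fun w₀ _ =>
          Finset.sum_congr rfl fun z₀ _ => by ring
    _ = (∑ u : V₁, ∑ w : V₂, ∑ z : V₃, ρ u w z)^2 * c := by
        rw [sum3_mul ρ ((∑ u₁ : V₁, ∑ w₁ : V₂, ∑ z₁ : V₃, ρ u₁ w₁ z₁) * c)]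
        ring

private lemma sum6_split (F G H : V₁ → V₁ → V₂ → V₂ → V₃ → V₃ → ℝ)
    (h : ∀ u₀ u₁ w₀ w₁ z₀ z₁, F u₀ u₁ w₀ w₁ z₀ z₁
      = G u₀ u₁ w₀ w₁ z₀ z₁ + H u₀ u₁ w₀ w₁ z₀ z₁) :
    (∑ u₀ : V₁, ∑ u₁ : V₁, ∑ w₀ : V₂, ∑ w₁ : V₂, ∑ z₀ : V₃, ∑ z₁ : V₃, F u₀ u₁ w₀ w₁ z₀ z₁)
      = (∑ u₀ : V₁, ∑ u₁ : V₁, ∑ w₀ : V₂, ∑ w₁ : V₂, ∑ z₀ : V₃, ∑ z₁ : V₃, G u₀ u₁ w₀ w₁ z₀ z₁)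
        + ∑ u₀ : V₁, ∑ u₁ : V₁, ∑ w₀ : V₂, ∑ w₁ : V₂, ∑ z₀ : V₃, ∑ z₁ : V₃,
            H u₀ u₁ w₀ w₁ z₀ z₁ := by
  have : (∑ u₀ : V₁, ∑ u₁ : V₁, ∑ w₀ : V₂, ∑ w₁ : V₂, ∑ z₀ : V₃, ∑ z₁ : V₃, F u₀ u₁ w₀ w₁ z₀ z₁)
      = ∑ u₀ : V₁, ∑ u₁ : V₁, ∑ w₀ : V₂, ∑ w₁ : V₂, ∑ z₀ : V₃, ∑ z₁ : V₃,
          (G u₀ u₁ w₀ w₁ z₀ z₁ + H u₀ u₁ w₀ w₁ z₀ z₁) :=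
    Finset.sum_congr rfl fun u₀ _ => Finset.sum_congr rfl fun u₁ _ =>
      Finset.sum_congr rfl fun w₀ _ => Finset.sum_congr rfl fun w₁ _ =>
        Finset.sum_congr rfl fun z₀ _ => Finset.sum_congr rfl fun z₁ _ => h u₀ u₁ w₀ w₁ z₀ z₁
  rw [this]
  simp only [Finset.sum_add_distrib]


private lemma cross_bound
    (f12 g12 : V₁ → V₂ → ℝ) (f13 g13 : V₁ → V₃ → ℝ) (f23 g23 : V₂ → V₃ → ℝ)
    (d12 d13 d23 δ : ℝ) (ρ : V₁ → V₂ → V₃ → ℝ)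
    (hf12 : ∀ u w, f12 u w = d12 + g12 u w)
    (hf13 : ∀ u z, f13 u z = d13 + g13 u z)
    (hf23 : ∀ w z, f23 w z = d23 + g23 w z)
    (hb12 : ∀ u w, 0 ≤ f12 u w ∧ f12 u w ≤ 1)
    (hb13 : ∀ u z, 0 ≤ f13 u z ∧ f13 u z ≤ 1)
    (hb23 : ∀ w z, 0 ≤ f23 w z ∧ f23 w z ≤ 1)
    (hd12 : 0 ≤ d12 ∧ d12 ≤ 1) (hd13 : 0 ≤ d13 ∧ d13 ≤ 1) (hd23 : 0 ≤ d23 ∧ d23 ≤ 1)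
    (hρ : ∀ u w z, 0 ≤ ρ u w z ∧ ρ u w z ≤ 1) (hδ : 0 ≤ δ)
    (hS12 : ∑ w₀ : V₂, ∑ w₁ : V₂, (∑ u : V₁, g12 u w₀ * g12 u w₁)^2
        ≤ δ * (Fintype.card V₁ : ℝ)^2 * (Fintype.card V₂ : ℝ)^2)
    (hS13 : ∑ z₀ : V₃, ∑ z₁ : V₃, (∑ u : V₁, g13 u z₀ * g13 u z₁)^2
        ≤ δ * (Fintype.card V₁ : ℝ)^2 * (Fintype.card V₃ : ℝ)^2)
    (hS23 : ∑ z₀ : V₃, ∑ z₁ : V₃, (∑ w : V₂, g23 w z₀ * g23 w z₁)^2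
        ≤ δ * (Fintype.card V₂ : ℝ)^2 * (Fintype.card V₃ : ℝ)^2) :
    (∑ u₀ : V₁, ∑ u₁ : V₁, ∑ w₀ : V₂, ∑ w₁ : V₂, ∑ z₀ : V₃, ∑ z₁ : V₃,
        ρ u₀ w₀ z₀ * ρ u₁ w₁ z₁ * f12 u₀ w₁ * f12 u₁ w₀ * f13 u₀ z₁ * f13 u₁ z₀ * f23 w₀ z₁ * f23 w₁ z₀)
      ≤ d12^2 * d13^2 * d23^2 * (∑ u : V₁, ∑ w : V₂, ∑ z : V₃, ρ u w z)^2
        + 6 * Real.sqrt (Real.sqrt δ) * (∑ u : V₁, ∑ w : V₂, ∑ z : V₃, ρ u w z)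
            * ((Fintype.card V₁ : ℝ) * (Fintype.card V₂ : ℝ) * (Fintype.card V₃ : ℝ)) := by
  set n1 : ℝ := (Fintype.card V₁ : ℝ) with hn1
  set n2 : ℝ := (Fintype.card V₂ : ℝ) with hn2
  set n3 : ℝ := (Fintype.card V₃ : ℝ) with hn3
  have hn1' : 0 ≤ n1 := by rw [hn1]; positivity
  have hn2' : 0 ≤ n2 := by rw [hn2]; positivity
  have hn3' : 0 ≤ n3 := by rw [hn3]; positivity
  set R : ℝ := ∑ u : V₁, ∑ w : V₂, ∑ z : V₃, ρ u w z with hRdef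
  have hR0 : 0 ≤ R := Finset.sum_nonneg fun u _ => Finset.sum_nonneg fun w _ =>
    Finset.sum_nonneg fun z _ => (hρ u w z).1
  have one01 : (0:ℝ) ≤ 1 ∧ (1:ℝ) ≤ 1 := ⟨zero_le_one, le_refl 1⟩
  set η : ℝ := Real.sqrt (Real.sqrt δ) with hηdef

  have step1 : (∑ u₀ : V₁, ∑ u₁ : V₁, ∑ w₀ : V₂, ∑ w₁ : V₂, ∑ z₀ : V₃, ∑ z₁ : V₃,
        ρ u₀ w₀ z₀ * ρ u₁ w₁ z₁ * f12 u₀ w₁ * f12 u₁ w₀ * f13 u₀ z₁ * f13 u₁ z₀ * f23 w₀ z₁ * f23 w₁ z₀)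
      = (∑ u₀ : V₁, ∑ u₁ : V₁, ∑ w₀ : V₂, ∑ w₁ : V₂, ∑ z₀ : V₃, ∑ z₁ : V₃,
        ρ u₀ w₀ z₀ * ρ u₁ w₁ z₁ * d12 * f12 u₁ w₀ * f13 u₀ z₁ * f13 u₁ z₀ * f23 w₀ z₁ * f23 w₁ z₀)
        + (∑ u₀ : V₁, ∑ u₁ : V₁, ∑ w₀ : V₂, ∑ w₁ : V₂, ∑ z₀ : V₃, ∑ z₁ : V₃,
        ρ u₀ w₀ z₀ * ρ u₁ w₁ z₁ * g12 u₀ w₁ * f12 u₁ w₀ * f13 u₀ z₁ * f13 u₁ z₀ * f23 w₀ z₁ * f23 w₁ z₀) :=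
    sum6_split _ _ _ (fun u₀ u₁ w₀ w₁ z₀ z₁ => by rw [hf12 u₀ w₁]; ring)
  have step2 : (∑ u₀ : V₁, ∑ u₁ : V₁, ∑ w₀ : V₂, ∑ w₁ : V₂, ∑ z₀ : V₃, ∑ z₁ : V₃,
        ρ u₀ w₀ z₀ * ρ u₁ w₁ z₁ * d12 * f12 u₁ w₀ * f13 u₀ z₁ * f13 u₁ z₀ * f23 w₀ z₁ * f23 w₁ z₀)
      = (∑ u₀ : V₁, ∑ u₁ : V₁, ∑ w₀ : V₂, ∑ w₁ : V₂, ∑ z₀ : V₃, ∑ z₁ : V₃,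
        ρ u₀ w₀ z₀ * ρ u₁ w₁ z₁ * d12 * d12 * f13 u₀ z₁ * f13 u₁ z₀ * f23 w₀ z₁ * f23 w₁ z₀)
        + (∑ u₀ : V₁, ∑ u₁ : V₁, ∑ w₀ : V₂, ∑ w₁ : V₂, ∑ z₀ : V₃, ∑ z₁ : V₃,
        ρ u₀ w₀ z₀ * ρ u₁ w₁ z₁ * d12 * g12 u₁ w₀ * f13 u₀ z₁ * f13 u₁ z₀ * f23 w₀ z₁ * f23 w₁ z₀) :=
    sum6_split _ _ _ (fun u₀ u₁ w₀ w₁ z₀ z₁ => by rw [hf12 u₁ w₀]; ring)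
  have step3 : (∑ u₀ : V₁, ∑ u₁ : V₁, ∑ w₀ : V₂, ∑ w₁ : V₂, ∑ z₀ : V₃, ∑ z₁ : V₃,
        ρ u₀ w₀ z₀ * ρ u₁ w₁ z₁ * d12 * d12 * f13 u₀ z₁ * f13 u₁ z₀ * f23 w₀ z₁ * f23 w₁ z₀)
      = (∑ u₀ : V₁, ∑ u₁ : V₁, ∑ w₀ : V₂, ∑ w₁ : V₂, ∑ z₀ : V₃, ∑ z₁ : V₃,
        ρ u₀ w₀ z₀ * ρ u₁ w₁ z₁ * d12 * d12 * d13 * f13 u₁ z₀ * f23 w₀ z₁ * f23 w₁ z₀)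
        + (∑ u₀ : V₁, ∑ u₁ : V₁, ∑ w₀ : V₂, ∑ w₁ : V₂, ∑ z₀ : V₃, ∑ z₁ : V₃,
        ρ u₀ w₀ z₀ * ρ u₁ w₁ z₁ * d12 * d12 * g13 u₀ z₁ * f13 u₁ z₀ * f23 w₀ z₁ * f23 w₁ z₀) :=
    sum6_split _ _ _ (fun u₀ u₁ w₀ w₁ z₀ z₁ => by rw [hf13 u₀ z₁]; ring)
  have step4 : (∑ u₀ : V₁, ∑ u₁ : V₁, ∑ w₀ : V₂, ∑ w₁ : V₂, ∑ z₀ : V₃, ∑ z₁ : V₃,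
        ρ u₀ w₀ z₀ * ρ u₁ w₁ z₁ * d12 * d12 * d13 * f13 u₁ z₀ * f23 w₀ z₁ * f23 w₁ z₀)
      = (∑ u₀ : V₁, ∑ u₁ : V₁, ∑ w₀ : V₂, ∑ w₁ : V₂, ∑ z₀ : V₃, ∑ z₁ : V₃,
        ρ u₀ w₀ z₀ * ρ u₁ w₁ z₁ * d12 * d12 * d13 * d13 * f23 w₀ z₁ * f23 w₁ z₀)
        + (∑ u₀ : V₁, ∑ u₁ : V₁, ∑ w₀ : V₂, ∑ w₁ : V₂, ∑ z₀ : V₃, ∑ z₁ : V₃,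
        ρ u₀ w₀ z₀ * ρ u₁ w₁ z₁ * d12 * d12 * d13 * g13 u₁ z₀ * f23 w₀ z₁ * f23 w₁ z₀) :=
    sum6_split _ _ _ (fun u₀ u₁ w₀ w₁ z₀ z₁ => by rw [hf13 u₁ z₀]; ring)
  have step5 : (∑ u₀ : V₁, ∑ u₁ : V₁, ∑ w₀ : V₂, ∑ w₁ : V₂, ∑ z₀ : V₃, ∑ z₁ : V₃,
        ρ u₀ w₀ z₀ * ρ u₁ w₁ z₁ * d12 * d12 * d13 * d13 * f23 w₀ z₁ * f23 w₁ z₀)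
      = (∑ u₀ : V₁, ∑ u₁ : V₁, ∑ w₀ : V₂, ∑ w₁ : V₂, ∑ z₀ : V₃, ∑ z₁ : V₃,
        ρ u₀ w₀ z₀ * ρ u₁ w₁ z₁ * d12 * d12 * d13 * d13 * d23 * f23 w₁ z₀)
        + (∑ u₀ : V₁, ∑ u₁ : V₁, ∑ w₀ : V₂, ∑ w₁ : V₂, ∑ z₀ : V₃, ∑ z₁ : V₃,
        ρ u₀ w₀ z₀ * ρ u₁ w₁ z₁ * d12 * d12 * d13 * d13 * g23 w₀ z₁ * f23 w₁ z₀) :=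
    sum6_split _ _ _ (fun u₀ u₁ w₀ w₁ z₀ z₁ => by rw [hf23 w₀ z₁]; ring)
  have step6 : (∑ u₀ : V₁, ∑ u₁ : V₁, ∑ w₀ : V₂, ∑ w₁ : V₂, ∑ z₀ : V₃, ∑ z₁ : V₃,
        ρ u₀ w₀ z₀ * ρ u₁ w₁ z₁ * d12 * d12 * d13 * d13 * d23 * f23 w₁ z₀)
      = (∑ u₀ : V₁, ∑ u₁ : V₁, ∑ w₀ : V₂, ∑ w₁ : V₂, ∑ z₀ : V₃, ∑ z₁ : V₃,
        ρ u₀ w₀ z₀ * ρ u₁ w₁ z₁ * d12 * d12 * d13 * d13 * d23 * d23)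
        + (∑ u₀ : V₁, ∑ u₁ : V₁, ∑ w₀ : V₂, ∑ w₁ : V₂, ∑ z₀ : V₃, ∑ z₁ : V₃,
        ρ u₀ w₀ z₀ * ρ u₁ w₁ z₁ * d12 * d12 * d13 * d13 * d23 * g23 w₁ z₀) :=
    sum6_split _ _ _ (fun u₀ u₁ w₀ w₁ z₀ z₁ => by rw [hf23 w₁ z₀]; ring)
  have hE1 : (∑ u₀ : V₁, ∑ u₁ : V₁, ∑ w₀ : V₂, ∑ w₁ : V₂, ∑ z₀ : V₃, ∑ z₁ : V₃,
        ρ u₀ w₀ z₀ * ρ u₁ w₁ z₁ * g12 u₀ w₁ * f12 u₁ w₀ * f13 u₀ z₁ * f13 u₁ z₀ * f23 w₀ z₁ * f23 w₁ z₀)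
      ≤ η * (R * (n1*n2*n3)) := by
    calc (∑ u₀ : V₁, ∑ u₁ : V₁, ∑ w₀ : V₂, ∑ w₁ : V₂, ∑ z₀ : V₃, ∑ z₁ : V₃,
        ρ u₀ w₀ z₀ * ρ u₁ w₁ z₁ * g12 u₀ w₁ * f12 u₁ w₀ * f13 u₀ z₁ * f13 u₁ z₀ * f23 w₀ z₁ * f23 w₁ z₀)
        = (∑ w₀ : V₂, ∑ z₀ : V₃, ∑ u₁ : V₁, ∑ z₁ : V₃, ∑ u₀ : V₁, ∑ w₁ : V₂,
        ρ u₀ w₀ z₀ * ρ u₁ w₁ z₁ * g12 u₀ w₁ * f12 u₁ w₀ * f13 u₀ z₁ * f13 u₁ z₀ * f23 w₀ z₁ * f23 w₁ z₀) := r6A _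
      _ ≤ Real.sqrt (n2 * n3 * R) * Real.sqrt (n1 * n3 * R)
            * Real.sqrt (Real.sqrt (δ * n1^2 * n2^2)) := by
          refine werr g12 _
            (fun w₀ z₀ u₁ z₁ u₀ => ρ u₀ w₀ z₀ * (f13 u₀ z₁ * (f12 u₁ w₀ * (f13 u₁ z₀ * f23 w₀ z₁))))
            (fun w₀ z₀ u₁ z₁ w₁ => ρ u₁ w₁ z₁ * f23 w₁ z₀)
            (fun w₀ z₀ => ∑ u : V₁, ρ u w₀ z₀) (fun u₁ z₁ => ∑ w : V₂, ρ u₁ w z₁) R R (δ * n1^2 * n2^2)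
            (fun o1 o2 o3 o4 x y => by ring)
            ?_ ?_ ?_ ?_ (le_of_eq (r3a ρ)) (le_of_eq (r3b ρ)) hS12 (by positivity)
          · intro w₀ z₀ u₁ z₁
            refine Finset.sum_le_sum fun u₀ _ => ?_
            exact sq_le_self01 (hρ _ _ _).1 (hρ _ _ _).2 (mul01 (hb13 u₀ z₁) (mul01 (hb12 u₁ w₀) (mul01 (hb13 u₁ z₀) (hb23 w₀ z₁)))).1 (mul01 (hb13 u₀ z₁) (mul01 (hb12 u₁ w₀) (mul01 (hb13 u₁ z₀) (hb23 w₀ z₁)))).2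
          · intro w₀ z₀ u₁ z₁
            refine Finset.sum_le_sum fun w₁ _ => ?_
            exact sq_le_self01 (hρ _ _ _).1 (hρ _ _ _).2 (hb23 w₁ z₀).1 (hb23 w₁ z₀).2
          · intro o1 o2; exact Finset.sum_nonneg fun x _ => (hρ _ _ _).1
          · intro o3 o4; exact Finset.sum_nonneg fun x _ => (hρ _ _ _).1
      _ = η * (R * (n1*n2*n3)) := by
          rw [hηdef]
          exact alg1 (n2*n3) (n1*n3) n1 n2 R δ (n1*n2*n3) (by positivity) (by positivity)
            (by positivity) hR0 hδ (by positivity) (by ring)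
  have hE2 : (∑ u₀ : V₁, ∑ u₁ : V₁, ∑ w₀ : V₂, ∑ w₁ : V₂, ∑ z₀ : V₃, ∑ z₁ : V₃,
        ρ u₀ w₀ z₀ * ρ u₁ w₁ z₁ * d12 * g12 u₁ w₀ * f13 u₀ z₁ * f13 u₁ z₀ * f23 w₀ z₁ * f23 w₁ z₀)
      ≤ η * (R * (n1*n2*n3)) := by
    calc (∑ u₀ : V₁, ∑ u₁ : V₁, ∑ w₀ : V₂, ∑ w₁ : V₂, ∑ z₀ : V₃, ∑ z₁ : V₃,
        ρ u₀ w₀ z₀ * ρ u₁ w₁ z₁ * d12 * g12 u₁ w₀ * f13 u₀ z₁ * f13 u₁ z₀ * f23 w₀ z₁ * f23 w₁ z₀)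
        = (∑ w₁ : V₂, ∑ z₁ : V₃, ∑ u₀ : V₁, ∑ z₀ : V₃, ∑ u₁ : V₁, ∑ w₀ : V₂,
        ρ u₀ w₀ z₀ * ρ u₁ w₁ z₁ * d12 * g12 u₁ w₀ * f13 u₀ z₁ * f13 u₁ z₀ * f23 w₀ z₁ * f23 w₁ z₀) := r6B _
      _ ≤ Real.sqrt (n2 * n3 * R) * Real.sqrt (n1 * n3 * R)
            * Real.sqrt (Real.sqrt (δ * n1^2 * n2^2)) := by
          refine werr g12 _
            (fun w₁ z₁ u₀ z₀ u₁ => ρ u₁ w₁ z₁ * (f13 u₁ z₀ * (d12 * (f13 u₀ z₁ * f23 w₁ z₀))))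
            (fun w₁ z₁ u₀ z₀ w₀ => ρ u₀ w₀ z₀ * f23 w₀ z₁)
            (fun w₁ z₁ => ∑ u : V₁, ρ u w₁ z₁) (fun u₀ z₀ => ∑ w : V₂, ρ u₀ w z₀) R R (δ * n1^2 * n2^2)
            (fun o1 o2 o3 o4 x y => by ring)
            ?_ ?_ ?_ ?_ (le_of_eq (r3a ρ)) (le_of_eq (r3b ρ)) hS12 (by positivity)
          · intro w₁ z₁ u₀ z₀
            refine Finset.sum_le_sum fun u₁ _ => ?_
            exact sq_le_self01 (hρ _ _ _).1 (hρ _ _ _).2 (mul01 (hb13 u₁ z₀) (mul01 hd12 (mul01 (hb13 u₀ z₁) (hb23 w₁ z₀)))).1 (mul01 (hb13 u₁ z₀) (mul01 hd12 (mul01 (hb13 u₀ z₁) (hb23 w₁ z₀)))).2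
          · intro w₁ z₁ u₀ z₀
            refine Finset.sum_le_sum fun w₀ _ => ?_
            exact sq_le_self01 (hρ _ _ _).1 (hρ _ _ _).2 (hb23 w₀ z₁).1 (hb23 w₀ z₁).2
          · intro o1 o2; exact Finset.sum_nonneg fun x _ => (hρ _ _ _).1
          · intro o3 o4; exact Finset.sum_nonneg fun x _ => (hρ _ _ _).1
      _ = η * (R * (n1*n2*n3)) := by
          rw [hηdef]
          exact alg1 (n2*n3) (n1*n3) n1 n2 R δ (n1*n2*n3) (by positivity) (by positivity)
            (by positivity) hR0 hδ (by positivity) (by ring)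
  have hE3 : (∑ u₀ : V₁, ∑ u₁ : V₁, ∑ w₀ : V₂, ∑ w₁ : V₂, ∑ z₀ : V₃, ∑ z₁ : V₃,
        ρ u₀ w₀ z₀ * ρ u₁ w₁ z₁ * d12 * d12 * g13 u₀ z₁ * f13 u₁ z₀ * f23 w₀ z₁ * f23 w₁ z₀)
      ≤ η * (R * (n1*n2*n3)) := by
    calc (∑ u₀ : V₁, ∑ u₁ : V₁, ∑ w₀ : V₂, ∑ w₁ : V₂, ∑ z₀ : V₃, ∑ z₁ : V₃,
        ρ u₀ w₀ z₀ * ρ u₁ w₁ z₁ * d12 * d12 * g13 u₀ z₁ * f13 u₁ z₀ * f23 w₀ z₁ * f23 w₁ z₀)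
        = (∑ w₀ : V₂, ∑ z₀ : V₃, ∑ u₁ : V₁, ∑ w₁ : V₂, ∑ u₀ : V₁, ∑ z₁ : V₃,
        ρ u₀ w₀ z₀ * ρ u₁ w₁ z₁ * d12 * d12 * g13 u₀ z₁ * f13 u₁ z₀ * f23 w₀ z₁ * f23 w₁ z₀) := r6C _
      _ ≤ Real.sqrt (n2 * n3 * R) * Real.sqrt (n1 * n2 * R)
            * Real.sqrt (Real.sqrt (δ * n1^2 * n3^2)) := by
          refine werr g13 _
            (fun w₀ z₀ u₁ w₁ u₀ => ρ u₀ w₀ z₀ * (d12 * (d12 * (f13 u₁ z₀ * f23 w₁ z₀))))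
            (fun w₀ z₀ u₁ w₁ z₁ => ρ u₁ w₁ z₁ * f23 w₀ z₁)
            (fun w₀ z₀ => ∑ u : V₁, ρ u w₀ z₀) (fun u₁ w₁ => ∑ z : V₃, ρ u₁ w₁ z) R R (δ * n1^2 * n3^2)
            (fun o1 o2 o3 o4 x y => by ring)
            ?_ ?_ ?_ ?_ (le_of_eq (r3a ρ)) (le_refl _) hS13 (by positivity)
          · intro w₀ z₀ u₁ w₁
            refine Finset.sum_le_sum fun u₀ _ => ?_
            exact sq_le_self01 (hρ _ _ _).1 (hρ _ _ _).2 (mul01 hd12 (mul01 hd12 (mul01 (hb13 u₁ z₀) (hb23 w₁ z₀)))).1 (mul01 hd12 (mul01 hd12 (mul01 (hb13 u₁ z₀) (hb23 w₁ z₀)))).2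
          · intro w₀ z₀ u₁ w₁
            refine Finset.sum_le_sum fun z₁ _ => ?_
            exact sq_le_self01 (hρ _ _ _).1 (hρ _ _ _).2 (hb23 w₀ z₁).1 (hb23 w₀ z₁).2
          · intro o1 o2; exact Finset.sum_nonneg fun x _ => (hρ _ _ _).1
          · intro o3 o4; exact Finset.sum_nonneg fun x _ => (hρ _ _ _).1
      _ = η * (R * (n1*n2*n3)) := by
          rw [hηdef]
          exact alg1 (n2*n3) (n1*n2) n1 n3 R δ (n1*n2*n3) (by positivity) (by positivity)
            (by positivity) hR0 hδ (by positivity) (by ring)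
  have hE4 : (∑ u₀ : V₁, ∑ u₁ : V₁, ∑ w₀ : V₂, ∑ w₁ : V₂, ∑ z₀ : V₃, ∑ z₁ : V₃,
        ρ u₀ w₀ z₀ * ρ u₁ w₁ z₁ * d12 * d12 * d13 * g13 u₁ z₀ * f23 w₀ z₁ * f23 w₁ z₀)
      ≤ η * (R * (n1*n2*n3)) := by
    calc (∑ u₀ : V₁, ∑ u₁ : V₁, ∑ w₀ : V₂, ∑ w₁ : V₂, ∑ z₀ : V₃, ∑ z₁ : V₃,
        ρ u₀ w₀ z₀ * ρ u₁ w₁ z₁ * d12 * d12 * d13 * g13 u₁ z₀ * f23 w₀ z₁ * f23 w₁ z₀)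
        = (∑ w₁ : V₂, ∑ z₁ : V₃, ∑ u₀ : V₁, ∑ w₀ : V₂, ∑ u₁ : V₁, ∑ z₀ : V₃,
        ρ u₀ w₀ z₀ * ρ u₁ w₁ z₁ * d12 * d12 * d13 * g13 u₁ z₀ * f23 w₀ z₁ * f23 w₁ z₀) := r6D _
      _ ≤ Real.sqrt (n2 * n3 * R) * Real.sqrt (n1 * n2 * R)
            * Real.sqrt (Real.sqrt (δ * n1^2 * n3^2)) := by
          refine werr g13 _
            (fun w₁ z₁ u₀ w₀ u₁ => ρ u₁ w₁ z₁ * (d12 * (d12 * (d13 * f23 w₀ z₁))))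
            (fun w₁ z₁ u₀ w₀ z₀ => ρ u₀ w₀ z₀ * f23 w₁ z₀)
            (fun w₁ z₁ => ∑ u : V₁, ρ u w₁ z₁) (fun u₀ w₀ => ∑ z : V₃, ρ u₀ w₀ z) R R (δ * n1^2 * n3^2)
            (fun o1 o2 o3 o4 x y => by ring)
            ?_ ?_ ?_ ?_ (le_of_eq (r3a ρ)) (le_refl _) hS13 (by positivity)
          · intro w₁ z₁ u₀ w₀
            refine Finset.sum_le_sum fun u₁ _ => ?_
            exact sq_le_self01 (hρ _ _ _).1 (hρ _ _ _).2 (mul01 hd12 (mul01 hd12 (mul01 hd13 (hb23 w₀ z₁)))).1 (mul01 hd12 (mul01 hd12 (mul01 hd13 (hb23 w₀ z₁)))).2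
          · intro w₁ z₁ u₀ w₀
            refine Finset.sum_le_sum fun z₀ _ => ?_
            exact sq_le_self01 (hρ _ _ _).1 (hρ _ _ _).2 (hb23 w₁ z₀).1 (hb23 w₁ z₀).2
          · intro o1 o2; exact Finset.sum_nonneg fun x _ => (hρ _ _ _).1
          · intro o3 o4; exact Finset.sum_nonneg fun x _ => (hρ _ _ _).1
      _ = η * (R * (n1*n2*n3)) := by
          rw [hηdef]
          exact alg1 (n2*n3) (n1*n2) n1 n3 R δ (n1*n2*n3) (by positivity) (by positivity)
            (by positivity) hR0 hδ (by positivity) (by ring)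
  have hE5 : (∑ u₀ : V₁, ∑ u₁ : V₁, ∑ w₀ : V₂, ∑ w₁ : V₂, ∑ z₀ : V₃, ∑ z₁ : V₃,
        ρ u₀ w₀ z₀ * ρ u₁ w₁ z₁ * d12 * d12 * d13 * d13 * g23 w₀ z₁ * f23 w₁ z₀)
      ≤ η * (R * (n1*n2*n3)) := by
    calc (∑ u₀ : V₁, ∑ u₁ : V₁, ∑ w₀ : V₂, ∑ w₁ : V₂, ∑ z₀ : V₃, ∑ z₁ : V₃,
        ρ u₀ w₀ z₀ * ρ u₁ w₁ z₁ * d12 * d12 * d13 * d13 * g23 w₀ z₁ * f23 w₁ z₀)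
        = (∑ u₀ : V₁, ∑ z₀ : V₃, ∑ u₁ : V₁, ∑ w₁ : V₂, ∑ w₀ : V₂, ∑ z₁ : V₃,
        ρ u₀ w₀ z₀ * ρ u₁ w₁ z₁ * d12 * d12 * d13 * d13 * g23 w₀ z₁ * f23 w₁ z₀) := r6E _
      _ ≤ Real.sqrt (n1 * n3 * R) * Real.sqrt (n1 * n2 * R)
            * Real.sqrt (Real.sqrt (δ * n2^2 * n3^2)) := by
          refine werr g23 _
            (fun u₀ z₀ u₁ w₁ w₀ => ρ u₀ w₀ z₀ * (d12 * (d12 * (d13 * (d13 * f23 w₁ z₀)))))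
            (fun u₀ z₀ u₁ w₁ z₁ => ρ u₁ w₁ z₁ * 1)
            (fun u₀ z₀ => ∑ w : V₂, ρ u₀ w z₀) (fun u₁ w₁ => ∑ z : V₃, ρ u₁ w₁ z) R R (δ * n2^2 * n3^2)
            (fun o1 o2 o3 o4 x y => by ring)
            ?_ ?_ ?_ ?_ (le_of_eq (r3b ρ)) (le_refl _) hS23 (by positivity)
          · intro u₀ z₀ u₁ w₁
            refine Finset.sum_le_sum fun w₀ _ => ?_
            exact sq_le_self01 (hρ _ _ _).1 (hρ _ _ _).2 (mul01 hd12 (mul01 hd12 (mul01 hd13 (mul01 hd13 (hb23 w₁ z₀))))).1 (mul01 hd12 (mul01 hd12 (mul01 hd13 (mul01 hd13 (hb23 w₁ z₀))))).2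
          · intro u₀ z₀ u₁ w₁
            refine Finset.sum_le_sum fun z₁ _ => ?_
            exact sq_le_self01 (hρ _ _ _).1 (hρ _ _ _).2 (one01).1 (one01).2
          · intro o1 o2; exact Finset.sum_nonneg fun x _ => (hρ _ _ _).1
          · intro o3 o4; exact Finset.sum_nonneg fun x _ => (hρ _ _ _).1
      _ = η * (R * (n1*n2*n3)) := by
          rw [hηdef]
          exact alg1 (n1*n3) (n1*n2) n2 n3 R δ (n1*n2*n3) (by positivity) (by positivity)
            (by positivity) hR0 hδ (by positivity) (by ring)
  have hE6 : (∑ u₀ : V₁, ∑ u₁ : V₁, ∑ w₀ : V₂, ∑ w₁ : V₂, ∑ z₀ : V₃, ∑ z₁ : V₃,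
        ρ u₀ w₀ z₀ * ρ u₁ w₁ z₁ * d12 * d12 * d13 * d13 * d23 * g23 w₁ z₀)
      ≤ η * (R * (n1*n2*n3)) := by
    calc (∑ u₀ : V₁, ∑ u₁ : V₁, ∑ w₀ : V₂, ∑ w₁ : V₂, ∑ z₀ : V₃, ∑ z₁ : V₃,
        ρ u₀ w₀ z₀ * ρ u₁ w₁ z₁ * d12 * d12 * d13 * d13 * d23 * g23 w₁ z₀)
        = (∑ u₁ : V₁, ∑ z₁ : V₃, ∑ u₀ : V₁, ∑ w₀ : V₂, ∑ w₁ : V₂, ∑ z₀ : V₃,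
        ρ u₀ w₀ z₀ * ρ u₁ w₁ z₁ * d12 * d12 * d13 * d13 * d23 * g23 w₁ z₀) := r6F _
      _ ≤ Real.sqrt (n1 * n3 * R) * Real.sqrt (n1 * n2 * R)
            * Real.sqrt (Real.sqrt (δ * n2^2 * n3^2)) := by
          refine werr g23 _
            (fun u₁ z₁ u₀ w₀ w₁ => ρ u₁ w₁ z₁ * (d12 * (d12 * (d13 * (d13 * d23)))))
            (fun u₁ z₁ u₀ w₀ z₀ => ρ u₀ w₀ z₀ * 1)
            (fun u₁ z₁ => ∑ w : V₂, ρ u₁ w z₁) (fun u₀ w₀ => ∑ z : V₃, ρ u₀ w₀ z) R R (δ * n2^2 * n3^2)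
            (fun o1 o2 o3 o4 x y => by ring)
            ?_ ?_ ?_ ?_ (le_of_eq (r3b ρ)) (le_refl _) hS23 (by positivity)
          · intro u₁ z₁ u₀ w₀
            refine Finset.sum_le_sum fun w₁ _ => ?_
            exact sq_le_self01 (hρ _ _ _).1 (hρ _ _ _).2 (mul01 hd12 (mul01 hd12 (mul01 hd13 (mul01 hd13 hd23)))).1 (mul01 hd12 (mul01 hd12 (mul01 hd13 (mul01 hd13 hd23)))).2
          · intro u₁ z₁ u₀ w₀
            refine Finset.sum_le_sum fun z₀ _ => ?_
            exact sq_le_self01 (hρ _ _ _).1 (hρ _ _ _).2 (one01).1 (one01).2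
          · intro o1 o2; exact Finset.sum_nonneg fun x _ => (hρ _ _ _).1
          · intro o3 o4; exact Finset.sum_nonneg fun x _ => (hρ _ _ _).1
      _ = η * (R * (n1*n2*n3)) := by
          rw [hηdef]
          exact alg1 (n1*n3) (n1*n2) n2 n3 R δ (n1*n2*n3) (by positivity) (by positivity)
            (by positivity) hR0 hδ (by positivity) (by ring)
  have hS6 : (∑ u₀ : V₁, ∑ u₁ : V₁, ∑ w₀ : V₂, ∑ w₁ : V₂, ∑ z₀ : V₃, ∑ z₁ : V₃,
        ρ u₀ w₀ z₀ * ρ u₁ w₁ z₁ * d12 * d12 * d13 * d13 * d23 * d23)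
      = d12^2 * d13^2 * d23^2 * R^2 := by
    have := sum6_factor ρ (d12 * d12 * (d13 * d13) * (d23 * d23))
    calc (∑ u₀ : V₁, ∑ u₁ : V₁, ∑ w₀ : V₂, ∑ w₁ : V₂, ∑ z₀ : V₃, ∑ z₁ : V₃,
        ρ u₀ w₀ z₀ * ρ u₁ w₁ z₁ * d12 * d12 * d13 * d13 * d23 * d23)
        = (∑ u₀ : V₁, ∑ u₁ : V₁, ∑ w₀ : V₂, ∑ w₁ : V₂, ∑ z₀ : V₃, ∑ z₁ : V₃,
            ρ u₀ w₀ z₀ * ρ u₁ w₁ z₁ * (d12 * d12 * (d13 * d13) * (d23 * d23))) :=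
          Finset.sum_congr rfl fun u₀ _ => Finset.sum_congr rfl fun u₁ _ =>
            Finset.sum_congr rfl fun w₀ _ => Finset.sum_congr rfl fun w₁ _ =>
              Finset.sum_congr rfl fun z₀ _ => Finset.sum_congr rfl fun z₁ _ => by ring
      _ = R^2 * (d12 * d12 * (d13 * d13) * (d23 * d23)) := sum6_factor ρ _
      _ = d12^2 * d13^2 * d23^2 * R^2 := by ring
  have hη0 : 0 ≤ η := Real.sqrt_nonneg _
  linarith [step1, step2, step3, step4, step5, step6, hE1, hE2, hE3, hE4, hE5, hE6, hS6]

private lemma sum3_split (F G H : V₁ → V₂ → V₃ → ℝ)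
    (h : ∀ u w z, F u w z = G u w z + H u w z) :
    (∑ u : V₁, ∑ w : V₂, ∑ z : V₃, F u w z)
      = (∑ u : V₁, ∑ w : V₂, ∑ z : V₃, G u w z)
        + ∑ u : V₁, ∑ w : V₂, ∑ z : V₃, H u w z := by
  have he : (∑ u : V₁, ∑ w : V₂, ∑ z : V₃, F u w z)
      = ∑ u : V₁, ∑ w : V₂, ∑ z : V₃, (G u w z + H u w z) :=
    Finset.sum_congr rfl fun u _ => Finset.sum_congr rfl fun w _ =>
      Finset.sum_congr rfl fun z _ => h u w z
  rw [he]
  simp only [Finset.sum_add_distrib]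

private lemma tri_bound
    (f12 g12 : V₁ → V₂ → ℝ) (f13 g13 : V₁ → V₃ → ℝ) (f23 g23 : V₂ → V₃ → ℝ)
    (d12 d13 d23 δ : ℝ)
    (hf12 : ∀ u w, f12 u w = d12 + g12 u w)
    (hf13 : ∀ u z, f13 u z = d13 + g13 u z)
    (hf23 : ∀ w z, f23 w z = d23 + g23 w z)
    (hb13 : ∀ u z, 0 ≤ f13 u z ∧ f13 u z ≤ 1)
    (hb23 : ∀ w z, 0 ≤ f23 w z ∧ f23 w z ≤ 1)
    (hd12 : 0 ≤ d12 ∧ d12 ≤ 1) (hd13 : 0 ≤ d13 ∧ d13 ≤ 1) (hδ : 0 ≤ δ)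
    (hS12 : ∑ w₀ : V₂, ∑ w₁ : V₂, (∑ u : V₁, g12 u w₀ * g12 u w₁)^2
        ≤ δ * (Fintype.card V₁ : ℝ)^2 * (Fintype.card V₂ : ℝ)^2)
    (hS13 : ∑ z₀ : V₃, ∑ z₁ : V₃, (∑ u : V₁, g13 u z₀ * g13 u z₁)^2
        ≤ δ * (Fintype.card V₁ : ℝ)^2 * (Fintype.card V₃ : ℝ)^2)
    (hS23 : ∑ z₀ : V₃, ∑ z₁ : V₃, (∑ w : V₂, g23 w z₀ * g23 w z₁)^2
        ≤ δ * (Fintype.card V₂ : ℝ)^2 * (Fintype.card V₃ : ℝ)^2) :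
    (∑ u : V₁, ∑ w : V₂, ∑ z : V₃, f12 u w * f13 u z * f23 w z)
      ≤ d12 * d13 * d23 * ((Fintype.card V₁ : ℝ) * (Fintype.card V₂ : ℝ) * (Fintype.card V₃ : ℝ))
        + 3 * Real.sqrt (Real.sqrt δ) *
            ((Fintype.card V₁ : ℝ) * (Fintype.card V₂ : ℝ) * (Fintype.card V₃ : ℝ)) := by
  set n1 : ℝ := (Fintype.card V₁ : ℝ) with hn1
  set n2 : ℝ := (Fintype.card V₂ : ℝ) with hn2
  set n3 : ℝ := (Fintype.card V₃ : ℝ) with hn3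
  have hn1' : 0 ≤ n1 := by rw [hn1]; positivity
  have hn2' : 0 ≤ n2 := by rw [hn2]; positivity
  have hn3' : 0 ≤ n3 := by rw [hn3]; positivity
  set η : ℝ := Real.sqrt (Real.sqrt δ) with hηdef
  have sq1 : ∀ {x : ℝ}, 0 ≤ x → x ≤ 1 → x^2 ≤ 1 := fun hx0 hx1 => by nlinarith
  have step1 : (∑ u : V₁, ∑ w : V₂, ∑ z : V₃, f12 u w * f13 u z * f23 w z)
      = (∑ u : V₁, ∑ w : V₂, ∑ z : V₃, d12 * f13 u z * f23 w z)
        + ∑ u : V₁, ∑ w : V₂, ∑ z : V₃, g12 u w * f13 u z * f23 w z :=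
    sum3_split _ _ _ (fun u w z => by rw [hf12 u w]; ring)
  have step2 : (∑ u : V₁, ∑ w : V₂, ∑ z : V₃, d12 * f13 u z * f23 w z)
      = (∑ u : V₁, ∑ w : V₂, ∑ z : V₃, d12 * d13 * f23 w z)
        + ∑ u : V₁, ∑ w : V₂, ∑ z : V₃, d12 * g13 u z * f23 w z :=
    sum3_split _ _ _ (fun u w z => by rw [hf13 u z]; ring)
  have step3 : (∑ u : V₁, ∑ w : V₂, ∑ z : V₃, d12 * d13 * f23 w z)
      = (∑ u : V₁, ∑ w : V₂, ∑ z : V₃, d12 * d13 * d23)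
        + ∑ u : V₁, ∑ w : V₂, ∑ z : V₃, d12 * d13 * g23 w z :=
    sum3_split _ _ _ (fun u w z => by rw [hf23 w z]; ring)
  have hmain : (∑ _u : V₁, ∑ _w : V₂, ∑ _z : V₃, d12 * d13 * d23)
      = d12 * d13 * d23 * (n1 * n2 * n3) := by
    simp [Finset.sum_const, Finset.card_univ, hn1, hn2, hn3]
    ring
  have hE1 : (∑ u : V₁, ∑ w : V₂, ∑ z : V₃, g12 u w * f13 u z * f23 w z)
      ≤ η * (n1 * n2 * n3) := by
    calc (∑ u : V₁, ∑ w : V₂, ∑ z : V₃, g12 u w * f13 u z * f23 w z)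
        = ∑ z : V₃, ∑ u : V₁, ∑ w : V₂, g12 u w * f13 u z * f23 w z := (r3c _).symm
      _ ≤ n3 * (Real.sqrt (n1 * n2) * Real.sqrt (Real.sqrt (δ * n1^2 * n2^2))) := by
          refine serr g12 _ (fun z u => f13 u z) (fun z w => f23 w z) (δ * n1^2 * n2^2)
            (fun o x y => by ring) ?_ ?_ hS12 (by positivity)
          · intro z u; exact sq1 (hb13 u z).1 (hb13 u z).2
          · intro z w; exact sq1 (hb23 w z).1 (hb23 w z).2
      _ = η * (n1 * n2 * n3) := by
          rw [hηdef, alg2 δ n1 n2 hδ hn1' hn2']; ring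
  have hE2 : (∑ u : V₁, ∑ w : V₂, ∑ z : V₃, d12 * g13 u z * f23 w z)
      ≤ η * (n1 * n2 * n3) := by
    calc (∑ u : V₁, ∑ w : V₂, ∑ z : V₃, d12 * g13 u z * f23 w z)
        = ∑ w : V₂, ∑ u : V₁, ∑ z : V₃, d12 * g13 u z * f23 w z := (r3d _).symm
      _ ≤ n2 * (Real.sqrt (n1 * n3) * Real.sqrt (Real.sqrt (δ * n1^2 * n3^2))) := by
          refine serr g13 _ (fun w u => d12) (fun w z => f23 w z) (δ * n1^2 * n3^2)
            (fun o x y => by ring) ?_ ?_ hS13 (by positivity)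
          · intro w u; exact sq1 hd12.1 hd12.2
          · intro w z; exact sq1 (hb23 w z).1 (hb23 w z).2
      _ = η * (n1 * n2 * n3) := by
          rw [hηdef, alg2 δ n1 n3 hδ hn1' hn3']; ring
  have hE3 : (∑ u : V₁, ∑ w : V₂, ∑ z : V₃, d12 * d13 * g23 w z)
      ≤ η * (n1 * n2 * n3) := by
    calc (∑ u : V₁, ∑ w : V₂, ∑ z : V₃, d12 * d13 * g23 w z)
        ≤ n1 * (Real.sqrt (n2 * n3) * Real.sqrt (Real.sqrt (δ * n2^2 * n3^2))) := by
          refine serr g23 _ (fun u w => d12 * d13) (fun u z => 1) (δ * n2^2 * n3^2)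
            (fun o x y => by ring) ?_ ?_ hS23 (by positivity)
          · intro u w
            have h1 : 0 ≤ d12 * d13 := mul_nonneg hd12.1 hd13.1
            have h2 : d12 * d13 ≤ 1 := by nlinarith [hd12.1, hd12.2, hd13.1, hd13.2]
            exact sq1 h1 h2
          · intro u z; norm_num
      _ = η * (n1 * n2 * n3) := by
          rw [hηdef, alg2 δ n2 n3 hδ hn2' hn3']; ring
  linarith [step1, step2, step3, hmain, hE1, hE2, hE3]


private lemma step8 {ε P T R hv τv rv : ℝ} (hPT : |P| ≤ T) (hP : P ≤ ε*T + R)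
    (hT : 0 ≤ T) (hR : 0 ≤ R) (hε0 : 0 ≤ ε) (hε1 : ε ≤ 1)
    (hdi : (0 ≤ hv ∧ hv ≤ 1 ∧ τv = 1 ∧ rv = 1) ∨ (|hv| ≤ ε*τv ∧ 0 ≤ τv ∧ τv ≤ 1 ∧ rv = 0)) :
    |P * hv| ≤ T*τv ∧ P*hv ≤ ε*(T*τv) + R*rv ∧ 0 ≤ T*τv ∧ 0 ≤ R*rv := by
  have habsP : 0 ≤ |P| := abs_nonneg P
  rcases hdi with ⟨h0,h1,hτ,hr⟩|⟨hh,hτ0,hτ1,hr⟩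
  · subst hτ; subst hr
    refine ⟨?_, ?_, by simp only [mul_one]; exact hT, by simp only [mul_one]; exact hR⟩
    · rw [abs_mul, abs_of_nonneg h0, mul_one]
      nlinarith
    · rw [mul_one, mul_one]
      have h2 : P*hv ≤ (ε*T + R)*hv := mul_le_mul_of_nonneg_right hP h0
      have hTR : 0 ≤ ε*T + R := add_nonneg (mul_nonneg hε0 hT) hR
      have h3 : (ε*T + R)*hv ≤ ε*T + R := by nlinarith [mul_nonneg hTR (sub_nonneg.mpr h1)]
      linarith
  · subst hr
    have habsh : 0 ≤ |hv| := abs_nonneg hv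
    have hhτ : |hv| ≤ τv := by nlinarith
    refine ⟨?_, ?_, mul_nonneg hT hτ0, by simp⟩
    · rw [abs_mul]
      exact mul_le_mul hPT hhτ habsh hT
    · rw [mul_zero, add_zero]
      have h2 : P*hv ≤ |P * hv| := le_abs_self _
      have h3 : |P * hv| = |P| * |hv| := abs_mul P hv
      have h4 : |P| * |hv| ≤ T*(ε*τv) := mul_le_mul hPT hh habsh hT
      nlinarith
private lemma base8 {ε hv τv rv : ℝ} (hε0 : 0 ≤ ε) (hε1 : ε ≤ 1)
    (hdi : (0 ≤ hv ∧ hv ≤ 1 ∧ τv = 1 ∧ rv = 1) ∨ (|hv| ≤ ε*τv ∧ 0 ≤ τv ∧ τv ≤ 1 ∧ rv = 0)) :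
    |hv| ≤ τv ∧ hv ≤ ε*τv + rv ∧ 0 ≤ τv ∧ 0 ≤ rv := by
  rcases hdi with ⟨h0,h1,hτ,hr⟩|⟨hh,hτ0,hτ1,hr⟩
  · subst hτ; subst hr
    exact ⟨by rw [abs_of_nonneg h0]; linarith, by nlinarith, by linarith, by linarith⟩
  · subst hr
    have := le_abs_self hv
    have habsh : 0 ≤ |hv| := abs_nonneg hv
    exact ⟨by nlinarith, by nlinarith, hτ0, le_refl 0⟩

private lemma mul8_le {a₁ a₂ a₃ a₄ a₅ a₆ a₇ a₈ b₁ b₂ b₃ b₄ b₅ b₆ b₇ b₈ : ℝ}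
    (h₁ : a₁ ≤ b₁) (h₂ : a₂ ≤ b₂) (h₃ : a₃ ≤ b₃) (h₄ : a₄ ≤ b₄)
    (h₅ : a₅ ≤ b₅) (h₆ : a₆ ≤ b₆) (h₇ : a₇ ≤ b₇) (h₈ : a₈ ≤ b₈)
    (n₁ : 0 ≤ a₁) (n₂ : 0 ≤ a₂) (n₃ : 0 ≤ a₃) (n₄ : 0 ≤ a₄)
    (n₅ : 0 ≤ a₅) (n₆ : 0 ≤ a₆) (n₇ : 0 ≤ a₇) (n₈ : 0 ≤ a₈) :
    a₁*a₂*a₃*a₄*a₅*a₆*a₇*a₈ ≤ b₁*b₂*b₃*b₄*b₅*b₆*b₇*b₈ := by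
  have m₁ : 0 ≤ b₁ := n₁.trans h₁
  have m₂ : 0 ≤ b₁*b₂ := mul_nonneg m₁ (n₂.trans h₂)
  have m₃ : 0 ≤ b₁*b₂*b₃ := mul_nonneg m₂ (n₃.trans h₃)
  have m₄ : 0 ≤ b₁*b₂*b₃*b₄ := mul_nonneg m₃ (n₄.trans h₄)
  have m₅ : 0 ≤ b₁*b₂*b₃*b₄*b₅ := mul_nonneg m₄ (n₅.trans h₅)
  have m₆ : 0 ≤ b₁*b₂*b₃*b₄*b₅*b₆ := mul_nonneg m₅ (n₆.trans h₆)
  have m₇ : 0 ≤ b₁*b₂*b₃*b₄*b₅*b₆*b₇ := mul_nonneg m₆ (n₇.trans h₇)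
  have k₂ : a₁*a₂ ≤ b₁*b₂ := mul_le_mul h₁ h₂ n₂ m₁
  have k₃ : a₁*a₂*a₃ ≤ b₁*b₂*b₃ := mul_le_mul k₂ h₃ n₃ m₂
  have k₄ : a₁*a₂*a₃*a₄ ≤ b₁*b₂*b₃*b₄ := mul_le_mul k₃ h₄ n₄ m₃
  have k₅ : a₁*a₂*a₃*a₄*a₅ ≤ b₁*b₂*b₃*b₄*b₅ := mul_le_mul k₄ h₅ n₅ m₄
  have k₆ : a₁*a₂*a₃*a₄*a₅*a₆ ≤ b₁*b₂*b₃*b₄*b₅*b₆ := mul_le_mul k₅ h₆ n₆ m₅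
  have k₇ : a₁*a₂*a₃*a₄*a₅*a₆*a₇ ≤ b₁*b₂*b₃*b₄*b₅*b₆*b₇ := mul_le_mul k₆ h₇ n₇ m₆
  exact mul_le_mul k₇ h₈ n₈ m₇

private lemma r4' {X Y : Type} [Fintype X] [Fintype Y] (f : X → X → Y → Y → ℝ) :
    (∑ y₀ : Y, ∑ y₁ : Y, ∑ x₀ : X, ∑ x₁ : X, f x₀ x₁ y₀ y₁)
    = ∑ x₀ : X, ∑ x₁ : X, ∑ y₀ : Y, ∑ y₁ : Y, f x₀ x₁ y₀ y₁ := by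
  have h1 : (∑ y₀ : Y, ∑ y₁ : Y, ∑ x₀ : X, ∑ x₁ : X, f x₀ x₁ y₀ y₁)
      = ∑ p : Y × Y × X × X, f p.2.2.1 p.2.2.2 p.1 p.2.1 := by
    simp only [Fintype.sum_prod_type]
  have h2 : (∑ q : X × X × Y × Y, f q.1 q.2.1 q.2.2.1 q.2.2.2)
      = ∑ x₀ : X, ∑ x₁ : X, ∑ y₀ : Y, ∑ y₁ : Y, f x₀ x₁ y₀ y₁ := by
    simp only [Fintype.sum_prod_type]
  rw [h1, ← h2]
  exact Fintype.sum_equiv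
    ⟨fun p => (p.2.2.1, p.2.2.2, p.1, p.2.1),
     fun q => (q.2.2.1, q.2.2.2, q.1, q.2.1),
     fun ⟨a,b,c,d⟩ => rfl, fun ⟨a,b,c,d⟩ => rfl⟩ _ _ (fun ⟨a,b,c,d⟩ => rfl)

private lemma quad_eq {X Y : Type} [Fintype X] [Fintype Y] (g : X → Y → ℝ) :
    (∑ y₀ : Y, ∑ y₁ : Y, (∑ x : X, g x y₀ * g x y₁)^2)
      = ∑ x₀ : X, ∑ x₁ : X, ∑ y₀ : Y, ∑ y₁ : Y, g x₀ y₀ * g x₀ y₁ * g x₁ y₀ * g x₁ y₁ := by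
  calc (∑ y₀ : Y, ∑ y₁ : Y, (∑ x : X, g x y₀ * g x y₁)^2)
      = ∑ y₀ : Y, ∑ y₁ : Y, ∑ x₀ : X, ∑ x₁ : X,
          g x₀ y₀ * g x₀ y₁ * g x₁ y₀ * g x₁ y₁ := by
        refine Finset.sum_congr rfl fun y₀ _ => Finset.sum_congr rfl fun y₁ _ => ?_
        rw [sq, Finset.sum_mul_sum]
        exact Finset.sum_congr rfl fun x₀ _ => Finset.sum_congr rfl fun x₁ _ => by ring
    _ = _ := r4' (fun x₀ x₁ y₀ y₁ => g x₀ y₀ * g x₀ y₁ * g x₁ y₀ * g x₁ y₁)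

private lemma density01 {α β : Type} [Fintype α] [Fintype β] (E : Finset (α × β)) :
    0 ≤ density E ∧ density E ≤ 1 := by
  constructor
  · unfold density; positivity
  · unfold density
    apply div_le_one_of_le₀
    · have h1 : E.card ≤ Fintype.card (α × β) := Finset.card_le_univ E
      rw [Fintype.card_prod] at h1
      calc (E.card : ℝ) ≤ ((Fintype.card α * Fintype.card β : ℕ) : ℝ) := by exact_mod_cast h1
      _ = (Fintype.card α : ℝ) * (Fintype.card β : ℝ) := by push_cast; ring
    · positivity

private lemma gfun_eq {α β : Type} [Fintype α] [Fintype β] [DecidableEq α] [DecidableEq β]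
    (E : Finset (α × β)) (u : α) (w : β) :
    (if (u,w) ∈ E then (1:ℝ) else 0) = density E + gfun E u w := by
  unfold gfun
  by_cases h : (u,w) ∈ E <;> simp [h]



set_option maxHeartbeats 1600000 in
private lemma final_arith (ε d₂ δ η d12 d13 d23 Tc Rc Q : ℝ)
    (hε0 : 0 < ε) (hε2 : ε < 1/2) (hd2 : 0 < d₂) (hδ0 : 0 < δ) (hδ48 : δ ≤ (d₂/2)^48)
    (hη0 : 0 ≤ η) (hη : η ≤ (d₂/2)^12)
    (h12a : 0 ≤ d12) (h12b : d12 ≤ 1) (h12c : |d12 - d₂| < δ)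
    (h13a : 0 ≤ d13) (h13b : d13 ≤ 1) (h13c : |d13 - d₂| < δ)
    (h23a : 0 ≤ d23) (h23b : d23 ≤ 1) (h23c : |d23 - d₂| < δ)
    (hQ : 0 ≤ Q) (hTc0 : 0 ≤ Tc) (hTcQ : Tc ≤ Q)
    (hTc : Tc ≤ d12*d13*d23*Q + 3*η*Q)
    (hRc0 : 0 ≤ Rc) (hRc : Rc ≤ ε*Tc) :
    ε * (d12^2*d13^2*d23^2 * Tc^2 + 6*η*Tc*Q) + (d12^2*d13^2*d23^2*Rc^2 + 6*η*Rc*Q)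
      ≤ 6*ε*d₂^12*Q^2 := by
  set p : ℝ := d12*d13*d23 with hpdef
  have hp0 : 0 ≤ p := by rw [hpdef]; positivity
  have hp1 : p ≤ 1 := by
    rw [hpdef]
    exact mul_le_one₀ (mul_le_one₀ h12b h13a h13b) h23a h23b
  have hRcQ : Rc ≤ ε*Q := le_trans hRc (mul_le_mul_of_nonneg_left hTcQ hε0.le)
  have hppow : d12^2*d13^2*d23^2 = p^2 := by rw [hpdef]; ring
  rw [hppow]
  rcases le_or_gt 1 d₂ with hq1 | hq1
  · -- d₂ ≥ 1 : crude bounds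
    set m : ℝ := (d₂/2)^12 with hmdef
    have hm0 : 0 < m := by rw [hmdef]; positivity
    have hm4096 : d₂^12 = 4096 * m := by rw [hmdef]; ring
    have hmge : (1:ℝ)/4096 ≤ m := by
      rw [hmdef]
      have h12 : (1:ℝ)/2 ≤ d₂/2 := by linarith
      calc (1:ℝ)/4096 = ((1:ℝ)/2)^12 := by norm_num
      _ ≤ (d₂/2)^12 := pow_le_pow_left₀ (by norm_num) h12 12
    rw [hm4096]
    clear hTc hδ48 hδ0 h12c h13c h23c h12a h12b h13a h13b h23a h23b hη0 hppow hq1 hd2 hm4096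
    clear_value p m
    clear hpdef hmdef
    have hεQ2 : 0 ≤ ε*Q^2 := by positivity
    have hp2 : p^2 ≤ 1 := by nlinarith
    have hTc2 : Tc^2 ≤ Q^2 := by nlinarith
    have t1 : p^2*Tc^2 ≤ Q^2 := by
      calc p^2*Tc^2 ≤ 1*Tc^2 := mul_le_mul_of_nonneg_right hp2 (sq_nonneg Tc)
      _ = Tc^2 := one_mul _
      _ ≤ Q^2 := hTc2
    have t2 : 6*η*Tc*Q ≤ 6*m*Q^2 := by
      have k1 : η*Tc ≤ m*Q := mul_le_mul hη hTcQ hTc0 hm0.le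
      nlinarith [mul_le_mul_of_nonneg_right k1 hQ]
    have t3 : p^2*Rc^2 ≤ (1/2)*ε*Q^2 := by
      have k1 : Rc^2 ≤ (ε*Q)^2 := by nlinarith
      have k2 : p^2*Rc^2 ≤ 1*Rc^2 := mul_le_mul_of_nonneg_right hp2 (sq_nonneg Rc)
      have k4 : ε^2*Q^2 ≤ ((1/2)*ε)*Q^2 := by nlinarith [sq_nonneg Q]
      nlinarith
    have t4 : 6*η*Rc*Q ≤ 6*m*ε*Q^2 := by
      have k1 : η*Rc ≤ m*(ε*Q) := mul_le_mul hη hRcQ hRc0 hm0.le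
      nlinarith [mul_le_mul_of_nonneg_right k1 hQ]
    have e1 : ε*(p^2*Tc^2 + 6*η*Tc*Q) ≤ ε*(Q^2 + 6*m*Q^2) :=
      mul_le_mul_of_nonneg_left (by linarith) hε0.le
    have aux : ε*Q^2*(3/2) ≤ ε*Q^2*(6144*m) := by
      nlinarith [mul_nonneg hεQ2 (sub_nonneg.mpr hmge)]
    nlinarith [e1, t3, t4, aux, hεQ2, mul_nonneg hεQ2 hm0.le]
  · -- d₂ < 1
    set a : ℝ := d₂^3 with hadef
    have ha0 : 0 < a := by rw [hadef]; positivity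
    have ha1 : a ≤ 1 := by
      rw [hadef]
      calc d₂^3 ≤ 1^3 := pow_le_pow_left₀ hd2.le hq1.le 3
      _ = 1 := by norm_num
    have ha4 : d₂^12 = a^4 := by rw [hadef]; ring
    have hδq : δ ≤ d₂ / 128 := by
      have hh : d₂/2 ≤ 1 := by linarith
      have h7 : d₂^7 ≤ d₂ := by
        calc d₂^7 ≤ d₂^1 := pow_le_pow_of_le_one hd2.le hq1.le (by norm_num)
        _ = d₂ := pow_one d₂
      calc δ ≤ (d₂/2)^48 := hδ48
      _ ≤ (d₂/2)^7 := pow_le_pow_of_le_one (by positivity) hh (by norm_num)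
      _ = d₂^7/128 := by ring
      _ ≤ d₂/128 := by linarith
    have hd12' : d12 ≤ (81/80)*d₂ := by
      have h := (abs_lt.mp h12c).2
      linarith
    have hd13' : d13 ≤ (81/80)*d₂ := by
      have h := (abs_lt.mp h13c).2
      linarith
    have hd23' : d23 ≤ (81/80)*d₂ := by
      have h := (abs_lt.mp h23c).2
      linarith
    have hp' : p ≤ (21/20)*a := by
      rw [hpdef, hadef]
      have k1 : d12*d13 ≤ ((81/80)*d₂)*((81/80)*d₂) :=
        mul_le_mul hd12' hd13' h13a (by positivity)
      have k2 : d12*d13*d23 ≤ ((81/80)*d₂)*((81/80)*d₂)*((81/80)*d₂) :=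
        mul_le_mul k1 hd23' h23a (by positivity)
      nlinarith [pow_pos hd2 3, k2]
    have hη' : η ≤ a^4/4096 := by
      calc η ≤ (d₂/2)^12 := hη
      _ = d₂^12/4096 := by rw [div_pow]; norm_num
      _ = a^4/4096 := by rw [ha4]
    rw [ha4]
    clear hδ48 hδ0 h12c h13c h23c h12a h12b h13a h13b h23a h23b hη hδq hd12' hd13' hd23'
      hppow hq1 hd2 ha4
    clear_value p a
    clear hpdef hadef
    have ha41 : a^4 ≤ a := by nlinarith [sq_nonneg a, sq_nonneg (a-1), sq_nonneg (a^2-a)]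
    have hTc' : Tc ≤ (11/10)*a*Q := by
      have k1 : p*Q ≤ ((21/20)*a)*Q := mul_le_mul_of_nonneg_right hp' hQ
      have k2 : η*Q ≤ (a^4/4096)*Q := mul_le_mul_of_nonneg_right hη' hQ
      have k3 : a^4*Q ≤ a*Q := mul_le_mul_of_nonneg_right ha41 hQ
      nlinarith [mul_nonneg ha0.le hQ]
    have t1 : p^2*Tc^2 ≤ (707/500)*(a^4*Q^2) := by
      have k1 : p^2 ≤ ((21/20)*a)^2 := by nlinarith
      have k2 : Tc^2 ≤ ((11/10)*a*Q)^2 := by nlinarith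
      calc p^2*Tc^2 ≤ ((21/20)*a)^2 * ((11/10)*a*Q)^2 :=
            mul_le_mul k1 k2 (sq_nonneg Tc) (by positivity)
      _ = (441/400)*(121/100)*(a^4*Q^2) := by ring
      _ ≤ (707/500)*(a^4*Q^2) := by nlinarith [mul_nonneg (pow_nonneg ha0.le 4) (sq_nonneg Q)]
    have t2 : 6*η*Tc*Q ≤ (7/4096)*(a^4*Q^2) := by
      have k1 : η*Tc ≤ (a^4/4096)*((11/10)*a*Q) :=
        mul_le_mul hη' hTc' hTc0 (by positivity)
      have k3 : a^4*a ≤ a^4 := by nlinarith [pow_nonneg ha0.le 4]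
      have k4 : η*Tc*Q ≤ (a^4/4096)*((11/10)*a*Q)*Q := mul_le_mul_of_nonneg_right k1 hQ
      nlinarith [mul_nonneg (mul_nonneg (pow_nonneg ha0.le 4) ha0.le) (sq_nonneg Q),
        mul_le_mul_of_nonneg_right (mul_le_mul_of_nonneg_right k3 (sq_nonneg Q)) (by norm_num : (0:ℝ) ≤ 33/20480)]
    have hRc' : Rc ≤ ε*((11/10)*a*Q) := le_trans hRc (mul_le_mul_of_nonneg_left hTc' hε0.le)
    have t3 : p^2*Rc^2 ≤ ε*(3/4)*(a^4*Q^2) := by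
      have k1 : p^2 ≤ ((21/20)*a)^2 := by nlinarith
      have k2 : Rc^2 ≤ (ε*((11/10)*a*Q))^2 := by nlinarith
      have k3 : p^2*Rc^2 ≤ ((21/20)*a)^2 * (ε*((11/10)*a*Q))^2 :=
        mul_le_mul k1 k2 (sq_nonneg Rc) (by positivity)
      have k4 : ((21/20)*a)^2 * (ε*((11/10)*a*Q))^2 = ε^2*((441/400)*(121/100))*(a^4*Q^2) := by
        ring
      have k5 : ε^2 ≤ ε*(1/2) := by nlinarith
      nlinarith [mul_nonneg (pow_nonneg ha0.le 4) (sq_nonneg Q), sq_nonneg ε,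
        mul_le_mul_of_nonneg_right k5 (mul_nonneg (pow_nonneg ha0.le 4) (sq_nonneg Q))]
    have t4 : 6*η*Rc*Q ≤ ε*(1/100)*(a^4*Q^2) := by
      have k1 : η*Rc ≤ (a^4/4096)*(ε*((11/10)*a*Q)) :=
        mul_le_mul hη' hRc' hRc0 (by positivity)
      have k3 : a^4*a ≤ a^4 := by nlinarith [pow_nonneg ha0.le 4]
      have k4 : η*Rc*Q ≤ (a^4/4096)*(ε*((11/10)*a*Q))*Q := mul_le_mul_of_nonneg_right k1 hQ
      nlinarith [mul_nonneg (mul_nonneg (pow_nonneg ha0.le 4) ha0.le) (sq_nonneg Q),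
        mul_le_mul_of_nonneg_right
          (mul_le_mul_of_nonneg_left k3 hε0.le)
          (mul_nonneg (by norm_num : (0:ℝ) ≤ 33/20480) (sq_nonneg Q)), hε0.le,
        mul_nonneg (mul_nonneg hε0.le (mul_nonneg (pow_nonneg ha0.le 4) ha0.le)) (sq_nonneg Q)]
    have e1 : ε*(p^2*Tc^2 + 6*η*Tc*Q) ≤ ε*((707/500)*(a^4*Q^2) + (7/4096)*(a^4*Q^2)) :=
      mul_le_mul_of_nonneg_left (by linarith) hε0.le
    have haQ : 0 ≤ ε*(a^4*Q^2) := by positivity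
    nlinarith [e1, t3, t4, haQ]

end AuxLemmas

set_option maxHeartbeats 3200000 in
/-- A 3-partite 3-graph whose underlying quasirandom 3-partite graph `G` carries few edges
of `R` satisfies `dev_{2,3}(δ, 6ε)`: there is `d₂` such that each bipartite piece has
`dev₂(δ, d₂)` and the deviation sum is at most `6ε·d₂¹²|V₁|²|V₂|²|V₃|²`. -/
theorem sparse_implies_dev23 :
    ∀ (ε d₂ δ : ℝ), 0 < ε → ε < 1/2 → 0 < d₂ → 0 < δ → δ ≤ (d₂ / 2) ^ 48 →
    ∃ N : ℕ, ∀ (V₁ V₂ V₃ : Type) [Fintype V₁] [Fintype V₂] [Fintype V₃]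
      [DecidableEq V₁] [DecidableEq V₂] [DecidableEq V₃]
      (R : Finset (V₁ × V₂ × V₃))
      (E12 : Finset (V₁ × V₂)) (E13 : Finset (V₁ × V₃)) (E23 : Finset (V₂ × V₃)),
      N ≤ Fintype.card V₁ + Fintype.card V₂ + Fintype.card V₃ →
      |(Fintype.card V₁ : ℝ) - (Fintype.card V₂ : ℝ)|
          ≤ δ * min (Fintype.card V₁ : ℝ) (Fintype.card V₂ : ℝ) →
      |(Fintype.card V₁ : ℝ) - (Fintype.card V₃ : ℝ)|
          ≤ δ * min (Fintype.card V₁ : ℝ) (Fintype.card V₃ : ℝ) →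
      |(Fintype.card V₂ : ℝ) - (Fintype.card V₃ : ℝ)|
          ≤ δ * min (Fintype.card V₂ : ℝ) (Fintype.card V₃ : ℝ) →
      dev2 E12 δ d₂ → dev2 E13 δ d₂ → dev2 E23 δ d₂ →
      ((R ∩ triangles E12 E13 E23).card : ℝ) ≤ ε * ((triangles E12 E13 E23).card : ℝ) →
      ∃ d : ℝ, dev2 E12 δ d ∧ dev2 E13 δ d ∧ dev2 E23 δ d ∧
        (∑ u₀ : V₁, ∑ u₁ : V₁, ∑ w₀ : V₂, ∑ w₁ : V₂, ∑ z₀ : V₃, ∑ z₁ : V₃,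
            hfun (R ∩ triangles E12 E13 E23) (triangles E12 E13 E23)
                (((R ∩ triangles E12 E13 E23).card : ℝ) /
                  ((triangles E12 E13 E23).card : ℝ)) u₀ w₀ z₀ *
            hfun (R ∩ triangles E12 E13 E23) (triangles E12 E13 E23)
                (((R ∩ triangles E12 E13 E23).card : ℝ) /
                  ((triangles E12 E13 E23).card : ℝ)) u₀ w₀ z₁ *
            hfun (R ∩ triangles E12 E13 E23) (triangles E12 E13 E23)
                (((R ∩ triangles E12 E13 E23).card : ℝ) /
                  ((triangles E12 E13 E23).card : ℝ)) u₀ w₁ z₀ *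
            hfun (R ∩ triangles E12 E13 E23) (triangles E12 E13 E23)
                (((R ∩ triangles E12 E13 E23).card : ℝ) /
                  ((triangles E12 E13 E23).card : ℝ)) u₀ w₁ z₁ *
            hfun (R ∩ triangles E12 E13 E23) (triangles E12 E13 E23)
                (((R ∩ triangles E12 E13 E23).card : ℝ) /
                  ((triangles E12 E13 E23).card : ℝ)) u₁ w₀ z₀ *
            hfun (R ∩ triangles E12 E13 E23) (triangles E12 E13 E23)
                (((R ∩ triangles E12 E13 E23).card : ℝ) /
                  ((triangles E12 E13 E23).card : ℝ)) u₁ w₀ z₁ *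
            hfun (R ∩ triangles E12 E13 E23) (triangles E12 E13 E23)
                (((R ∩ triangles E12 E13 E23).card : ℝ) /
                  ((triangles E12 E13 E23).card : ℝ)) u₁ w₁ z₀ *
            hfun (R ∩ triangles E12 E13 E23) (triangles E12 E13 E23)
                (((R ∩ triangles E12 E13 E23).card : ℝ) /
                  ((triangles E12 E13 E23).card : ℝ)) u₁ w₁ z₁)
          ≤ 6 * ε * d ^ 12 * (Fintype.card V₁ : ℝ) ^ 2 * (Fintype.card V₂ : ℝ) ^ 2 *
              (Fintype.card V₃ : ℝ) ^ 2 := by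
  intro ε d₂ δ hε0 hε2 hd2 hδ0 hδ48
  refine ⟨0, ?_⟩
  intro V₁ V₂ V₃ _i1 _i2 _i3 _dq1 _dq2 _dq3 R E12 E13 E23 _hN _hc1 _hc2 _hc3
    hdev12 hdev13 hdev23 hsparse
  refine ⟨d₂, hdev12, hdev13, hdev23, ?_⟩
  set T : Finset (V₁ × V₂ × V₃) := triangles E12 E13 E23 with hTdef
  set RT : Finset (V₁ × V₂ × V₃) := R ∩ T with hRTdef
  set Tc : ℝ := (T.card : ℝ) with hTcdef
  set Rc : ℝ := (RT.card : ℝ) with hRcdef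
  set d₃ : ℝ := Rc / Tc with hd₃def
  set n1 : ℝ := (Fintype.card V₁ : ℝ) with hn1
  set n2 : ℝ := (Fintype.card V₂ : ℝ) with hn2
  set n3 : ℝ := (Fintype.card V₃ : ℝ) with hn3
  have hn1' : 0 ≤ n1 := by rw [hn1]; positivity
  have hn2' : 0 ≤ n2 := by rw [hn2]; positivity
  have hn3' : 0 ≤ n3 := by rw [hn3]; positivity
  set η : ℝ := Real.sqrt (Real.sqrt δ) with hηdef
  have hη0 : 0 ≤ η := Real.sqrt_nonneg _
  have hε1 : ε ≤ 1 := by linarith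
  -- indicator functions
  set f12 : V₁ → V₂ → ℝ := fun u w => if (u,w) ∈ E12 then 1 else 0 with hf12def
  set f13 : V₁ → V₃ → ℝ := fun u z => if (u,z) ∈ E13 then 1 else 0 with hf13def
  set f23 : V₂ → V₃ → ℝ := fun w z => if (w,z) ∈ E23 then 1 else 0 with hf23def
  set τ : V₁ → V₂ → V₃ → ℝ := fun x y z => if (x,y,z) ∈ T then 1 else 0 with hτdef
  set rr : V₁ → V₂ → V₃ → ℝ := fun x y z => if (x,y,z) ∈ RT then 1 else 0 with hrrdef
  have hb12 : ∀ u w, 0 ≤ f12 u w ∧ f12 u w ≤ 1 := by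
    intro u w; rw [hf12def]; dsimp only; split <;> norm_num
  have hb13 : ∀ u z, 0 ≤ f13 u z ∧ f13 u z ≤ 1 := by
    intro u z; rw [hf13def]; dsimp only; split <;> norm_num
  have hb23 : ∀ w z, 0 ≤ f23 w z ∧ f23 w z ≤ 1 := by
    intro w z; rw [hf23def]; dsimp only; split <;> norm_num
  have hfg12 : ∀ u w, f12 u w = density E12 + gfun E12 u w := fun u w => by
    rw [hf12def]; exact gfun_eq E12 u w
  have hfg13 : ∀ u z, f13 u z = density E13 + gfun E13 u z := fun u z => by
    rw [hf13def]; exact gfun_eq E13 u z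
  have hfg23 : ∀ w z, f23 w z = density E23 + gfun E23 w z := fun w z => by
    rw [hf23def]; exact gfun_eq E23 w z
  have hd12 := density01 E12
  have hd13 := density01 E13
  have hd23 := density01 E23
  have hS12 : ∑ w₀ : V₂, ∑ w₁ : V₂, (∑ u : V₁, gfun E12 u w₀ * gfun E12 u w₁)^2
      ≤ δ * n1^2 * n2^2 := by
    rw [quad_eq]; exact hdev12.2
  have hS13 : ∑ z₀ : V₃, ∑ z₁ : V₃, (∑ u : V₁, gfun E13 u z₀ * gfun E13 u z₁)^2
      ≤ δ * n1^2 * n3^2 := by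
    rw [quad_eq]; exact hdev13.2
  have hS23 : ∑ z₀ : V₃, ∑ z₁ : V₃, (∑ w : V₂, gfun E23 w z₀ * gfun E23 w z₁)^2
      ≤ δ * n2^2 * n3^2 := by
    rw [quad_eq]; exact hdev23.2
  -- triangle membership facts
  have hmemT : ∀ x y z, (x,y,z) ∈ T → (x,y) ∈ E12 ∧ (x,z) ∈ E13 ∧ (y,z) ∈ E23 := by
    intro x y z h
    rw [hTdef] at h
    exact (Finset.mem_filter.mp h).2
  have hsubRT : RT ⊆ T := by rw [hRTdef]; exact Finset.inter_subset_right
  have hbτ : ∀ x y z, 0 ≤ τ x y z ∧ τ x y z ≤ 1 := by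
    intro x y z; rw [hτdef]; dsimp only; split <;> norm_num
  have hbrr : ∀ x y z, 0 ≤ rr x y z ∧ rr x y z ≤ 1 := by
    intro x y z; rw [hrrdef]; dsimp only; split <;> norm_num
  have hτ12 : ∀ x y z, τ x y z ≤ f12 x y := by
    intro x y z; rw [hτdef, hf12def]; dsimp only
    by_cases h : (x,y,z) ∈ T
    · rw [if_pos h, if_pos (hmemT x y z h).1]
    · rw [if_neg h]; split <;> norm_num
  have hτ13 : ∀ x y z, τ x y z ≤ f13 x z := by
    intro x y z; rw [hτdef, hf13def]; dsimp only
    by_cases h : (x,y,z) ∈ T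
    · rw [if_pos h, if_pos (hmemT x y z h).2.1]
    · rw [if_neg h]; split <;> norm_num
  have hτ23 : ∀ x y z, τ x y z ≤ f23 y z := by
    intro x y z; rw [hτdef, hf23def]; dsimp only
    by_cases h : (x,y,z) ∈ T
    · rw [if_pos h, if_pos (hmemT x y z h).2.2]
    · rw [if_neg h]; split <;> norm_num
  have hrr12 : ∀ x y z, rr x y z ≤ f12 x y := by
    intro x y z; rw [hrrdef, hf12def]; dsimp only
    by_cases h : (x,y,z) ∈ RT
    · rw [if_pos h, if_pos (hmemT x y z (hsubRT h)).1]
    · rw [if_neg h]; split <;> norm_num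
  have hrr13 : ∀ x y z, rr x y z ≤ f13 x z := by
    intro x y z; rw [hrrdef, hf13def]; dsimp only
    by_cases h : (x,y,z) ∈ RT
    · rw [if_pos h, if_pos (hmemT x y z (hsubRT h)).2.1]
    · rw [if_neg h]; split <;> norm_num
  have hrr23 : ∀ x y z, rr x y z ≤ f23 y z := by
    intro x y z; rw [hrrdef, hf23def]; dsimp only
    by_cases h : (x,y,z) ∈ RT
    · rw [if_pos h, if_pos (hmemT x y z (hsubRT h)).2.2]
    · rw [if_neg h]; split <;> norm_num
  have hτrr : ∀ x y z, rr x y z ≤ τ x y z := by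
    intro x y z; rw [hrrdef, hτdef]; dsimp only
    by_cases h : (x,y,z) ∈ RT
    · rw [if_pos h, if_pos (hsubRT h)]
    · rw [if_neg h]; split <;> norm_num
  have hτprod : ∀ x y z, τ x y z = f12 x y * f13 x z * f23 y z := by
    intro x y z
    rw [hτdef, hf12def, hf13def, hf23def, hTdef]; dsimp only
    simp only [triangles, Finset.mem_filter, Finset.mem_univ, true_and]
    by_cases h1 : (x,y) ∈ E12 <;> by_cases h2 : (x,z) ∈ E13 <;>
      by_cases h3 : (y,z) ∈ E23 <;> simp [h1, h2, h3]
  -- card identities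
  have cardsum : ∀ (S : Finset (V₁ × V₂ × V₃)),
      (∑ x : V₁, ∑ y : V₂, ∑ z : V₃, (if (x,y,z) ∈ S then (1:ℝ) else 0)) = (S.card : ℝ) := by
    intro S
    calc (∑ x : V₁, ∑ y : V₂, ∑ z : V₃, (if (x,y,z) ∈ S then (1:ℝ) else 0))
        = ∑ p : V₁ × V₂ × V₃, (if p ∈ S then (1:ℝ) else 0) := by
          simp only [Fintype.sum_prod_type]
      _ = (S.card : ℝ) := by simp [Finset.sum_boole]
  have hTc : (∑ x : V₁, ∑ y : V₂, ∑ z : V₃, τ x y z) = Tc := by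
    rw [hTcdef, hτdef]; exact cardsum T
  have hRcsum : (∑ x : V₁, ∑ y : V₂, ∑ z : V₃, rr x y z) = Rc := by
    rw [hRcdef, hrrdef]; exact cardsum RT
  have hTc0 : 0 ≤ Tc := by rw [hTcdef]; positivity
  have hRc0 : 0 ≤ Rc := by rw [hRcdef]; positivity
  have hTcQ : Tc ≤ n1 * n2 * n3 := by
    rw [← hTc]
    calc (∑ x : V₁, ∑ y : V₂, ∑ z : V₃, τ x y z)
        ≤ ∑ _x : V₁, ∑ _y : V₂, ∑ _z : V₃, (1:ℝ) := by
          refine Finset.sum_le_sum fun x _ => Finset.sum_le_sum fun y _ =>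
            Finset.sum_le_sum fun z _ => (hbτ x y z).2
      _ = n1 * n2 * n3 := by
          simp [Finset.sum_const, Finset.card_univ, hn1, hn2, hn3]; ring
  -- d₃ facts
  have hd₃0 : 0 ≤ d₃ := by rw [hd₃def]; positivity
  have hd₃ε : d₃ ≤ ε := by
    rw [hd₃def]
    rcases eq_or_lt_of_le hTc0 with h0 | h0
    · rw [← h0, div_zero]; exact hε0.le
    · rw [div_le_iff₀ h0]
      exact hsparse
  -- dichotomy for hfun
  have hdi : ∀ (x : V₁) (y : V₂) (z : V₃),
      (0 ≤ hfun RT T d₃ x y z ∧ hfun RT T d₃ x y z ≤ 1 ∧ τ x y z = 1 ∧ rr x y z = 1)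
      ∨ (|hfun RT T d₃ x y z| ≤ ε * τ x y z ∧ 0 ≤ τ x y z ∧ τ x y z ≤ 1 ∧ rr x y z = 0) := by
    intro x y z
    by_cases hm : (x,y,z) ∈ RT
    · left
      refine ⟨?_, ?_, ?_, ?_⟩
      · simp only [hfun]; rw [if_pos hm]; linarith
      · simp only [hfun]; rw [if_pos hm]; linarith
      · rw [hτdef]; dsimp only; rw [if_pos (hsubRT hm)]
      · rw [hrrdef]; dsimp only; rw [if_pos hm]
    · right
      refine ⟨?_, (hbτ x y z).1, (hbτ x y z).2, ?_⟩
      · simp only [hfun]; rw [if_neg hm, hτdef]; dsimp only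
        by_cases ht : (x,y,z) ∈ T
        · rw [if_pos ht, if_pos ht, abs_neg, abs_of_nonneg hd₃0, mul_one]; exact hd₃ε
        · rw [if_neg ht, if_neg ht, abs_zero, mul_zero]
      · rw [hrrdef]; dsimp only; rw [if_neg hm]
  -- pointwise bound for the 8-fold product
  have hpoint : ∀ (u₀ u₁ : V₁) (w₀ w₁ : V₂) (z₀ z₁ : V₃),
      hfun RT T d₃ u₀ w₀ z₀ * hfun RT T d₃ u₀ w₀ z₁ * hfun RT T d₃ u₀ w₁ z₀ *
        hfun RT T d₃ u₀ w₁ z₁ * hfun RT T d₃ u₁ w₀ z₀ * hfun RT T d₃ u₁ w₀ z₁ *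
        hfun RT T d₃ u₁ w₁ z₀ * hfun RT T d₃ u₁ w₁ z₁
      ≤ ε * (τ u₀ w₀ z₀ * τ u₁ w₁ z₁ * f12 u₀ w₁ * f12 u₁ w₀ * f13 u₀ z₁ * f13 u₁ z₀ *
              f23 w₀ z₁ * f23 w₁ z₀)
        + rr u₀ w₀ z₀ * rr u₁ w₁ z₁ * f12 u₀ w₁ * f12 u₁ w₀ * f13 u₀ z₁ * f13 u₁ z₀ *
            f23 w₀ z₁ * f23 w₁ z₀ := by
    intro u₀ u₁ w₀ w₁ z₀ z₁
    have b0 := base8 hε0.le hε1 (hdi u₀ w₀ z₀)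
    have s1 := step8 b0.1 b0.2.1 b0.2.2.1 b0.2.2.2 hε0.le hε1 (hdi u₀ w₀ z₁)
    have s2 := step8 s1.1 s1.2.1 s1.2.2.1 s1.2.2.2 hε0.le hε1 (hdi u₀ w₁ z₀)
    have s3 := step8 s2.1 s2.2.1 s2.2.2.1 s2.2.2.2 hε0.le hε1 (hdi u₀ w₁ z₁)
    have s4 := step8 s3.1 s3.2.1 s3.2.2.1 s3.2.2.2 hε0.le hε1 (hdi u₁ w₀ z₀)
    have s5 := step8 s4.1 s4.2.1 s4.2.2.1 s4.2.2.2 hε0.le hε1 (hdi u₁ w₀ z₁)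
    have s6 := step8 s5.1 s5.2.1 s5.2.2.1 s5.2.2.2 hε0.le hε1 (hdi u₁ w₁ z₀)
    have s7 := step8 s6.1 s6.2.1 s6.2.2.1 s6.2.2.2 hε0.le hε1 (hdi u₁ w₁ z₁)
    have hτbound : τ u₀ w₀ z₀ * τ u₀ w₀ z₁ * τ u₀ w₁ z₀ * τ u₀ w₁ z₁ * τ u₁ w₀ z₀ *
        τ u₁ w₀ z₁ * τ u₁ w₁ z₀ * τ u₁ w₁ z₁
        ≤ τ u₀ w₀ z₀ * τ u₁ w₁ z₁ * f12 u₀ w₁ * f12 u₁ w₀ * f13 u₀ z₁ * f13 u₁ z₀ *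
            f23 w₀ z₁ * f23 w₁ z₀ := by
      calc τ u₀ w₀ z₀ * τ u₀ w₀ z₁ * τ u₀ w₁ z₀ * τ u₀ w₁ z₁ * τ u₁ w₀ z₀ *
          τ u₁ w₀ z₁ * τ u₁ w₁ z₀ * τ u₁ w₁ z₁
          ≤ τ u₀ w₀ z₀ * f13 u₀ z₁ * f23 w₁ z₀ * f12 u₀ w₁ * f12 u₁ w₀ *
              f23 w₀ z₁ * f13 u₁ z₀ * τ u₁ w₁ z₁ :=
            mul8_le (le_refl _) (hτ13 u₀ w₀ z₁) (hτ23 u₀ w₁ z₀) (hτ12 u₀ w₁ z₁)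
              (hτ12 u₁ w₀ z₀) (hτ23 u₁ w₀ z₁) (hτ13 u₁ w₁ z₀) (le_refl _)
              (hbτ _ _ _).1 (hbτ _ _ _).1 (hbτ _ _ _).1 (hbτ _ _ _).1
              (hbτ _ _ _).1 (hbτ _ _ _).1 (hbτ _ _ _).1 (hbτ _ _ _).1
        _ = τ u₀ w₀ z₀ * τ u₁ w₁ z₁ * f12 u₀ w₁ * f12 u₁ w₀ * f13 u₀ z₁ * f13 u₁ z₀ *
              f23 w₀ z₁ * f23 w₁ z₀ := by ring
    have hrrbound : rr u₀ w₀ z₀ * rr u₀ w₀ z₁ * rr u₀ w₁ z₀ * rr u₀ w₁ z₁ * rr u₁ w₀ z₀ *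
        rr u₁ w₀ z₁ * rr u₁ w₁ z₀ * rr u₁ w₁ z₁
        ≤ rr u₀ w₀ z₀ * rr u₁ w₁ z₁ * f12 u₀ w₁ * f12 u₁ w₀ * f13 u₀ z₁ * f13 u₁ z₀ *
            f23 w₀ z₁ * f23 w₁ z₀ := by
      calc rr u₀ w₀ z₀ * rr u₀ w₀ z₁ * rr u₀ w₁ z₀ * rr u₀ w₁ z₁ * rr u₁ w₀ z₀ *
          rr u₁ w₀ z₁ * rr u₁ w₁ z₀ * rr u₁ w₁ z₁
          ≤ rr u₀ w₀ z₀ * f13 u₀ z₁ * f23 w₁ z₀ * f12 u₀ w₁ * f12 u₁ w₀ *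
              f23 w₀ z₁ * f13 u₁ z₀ * rr u₁ w₁ z₁ :=
            mul8_le (le_refl _) (hrr13 u₀ w₀ z₁) (hrr23 u₀ w₁ z₀) (hrr12 u₀ w₁ z₁)
              (hrr12 u₁ w₀ z₀) (hrr23 u₁ w₀ z₁) (hrr13 u₁ w₁ z₀) (le_refl _)
              (hbrr _ _ _).1 (hbrr _ _ _).1 (hbrr _ _ _).1 (hbrr _ _ _).1
              (hbrr _ _ _).1 (hbrr _ _ _).1 (hbrr _ _ _).1 (hbrr _ _ _).1
        _ = rr u₀ w₀ z₀ * rr u₁ w₁ z₁ * f12 u₀ w₁ * f12 u₁ w₀ * f13 u₀ z₁ * f13 u₁ z₀ *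
              f23 w₀ z₁ * f23 w₁ z₀ := by ring
    calc hfun RT T d₃ u₀ w₀ z₀ * hfun RT T d₃ u₀ w₀ z₁ * hfun RT T d₃ u₀ w₁ z₀ *
        hfun RT T d₃ u₀ w₁ z₁ * hfun RT T d₃ u₁ w₀ z₀ * hfun RT T d₃ u₁ w₀ z₁ *
        hfun RT T d₃ u₁ w₁ z₀ * hfun RT T d₃ u₁ w₁ z₁
        ≤ ε * (τ u₀ w₀ z₀ * τ u₀ w₀ z₁ * τ u₀ w₁ z₀ * τ u₀ w₁ z₁ * τ u₁ w₀ z₀ *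
            τ u₁ w₀ z₁ * τ u₁ w₁ z₀ * τ u₁ w₁ z₁)
          + rr u₀ w₀ z₀ * rr u₀ w₀ z₁ * rr u₀ w₁ z₀ * rr u₀ w₁ z₁ * rr u₁ w₀ z₀ *
              rr u₁ w₀ z₁ * rr u₁ w₁ z₀ * rr u₁ w₁ z₁ := s7.2.1
      _ ≤ _ := add_le_add (mul_le_mul_of_nonneg_left hτbound hε0.le) hrrbound
  -- sum the pointwise bound
  have hsum1 : (∑ u₀ : V₁, ∑ u₁ : V₁, ∑ w₀ : V₂, ∑ w₁ : V₂, ∑ z₀ : V₃, ∑ z₁ : V₃,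
      hfun RT T d₃ u₀ w₀ z₀ * hfun RT T d₃ u₀ w₀ z₁ * hfun RT T d₃ u₀ w₁ z₀ *
        hfun RT T d₃ u₀ w₁ z₁ * hfun RT T d₃ u₁ w₀ z₀ * hfun RT T d₃ u₁ w₀ z₁ *
        hfun RT T d₃ u₁ w₁ z₀ * hfun RT T d₃ u₁ w₁ z₁)
      ≤ ∑ u₀ : V₁, ∑ u₁ : V₁, ∑ w₀ : V₂, ∑ w₁ : V₂, ∑ z₀ : V₃, ∑ z₁ : V₃,
          (ε * (τ u₀ w₀ z₀ * τ u₁ w₁ z₁ * f12 u₀ w₁ * f12 u₁ w₀ * f13 u₀ z₁ * f13 u₁ z₀ *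
              f23 w₀ z₁ * f23 w₁ z₀)
            + rr u₀ w₀ z₀ * rr u₁ w₁ z₁ * f12 u₀ w₁ * f12 u₁ w₀ * f13 u₀ z₁ * f13 u₁ z₀ *
                f23 w₀ z₁ * f23 w₁ z₀) := by
    refine Finset.sum_le_sum fun u₀ _ => Finset.sum_le_sum fun u₁ _ =>
      Finset.sum_le_sum fun w₀ _ => Finset.sum_le_sum fun w₁ _ =>
        Finset.sum_le_sum fun z₀ _ => Finset.sum_le_sum fun z₁ _ =>
          hpoint u₀ u₁ w₀ w₁ z₀ z₁
  have hsplit : (∑ u₀ : V₁, ∑ u₁ : V₁, ∑ w₀ : V₂, ∑ w₁ : V₂, ∑ z₀ : V₃, ∑ z₁ : V₃,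
      (ε * (τ u₀ w₀ z₀ * τ u₁ w₁ z₁ * f12 u₀ w₁ * f12 u₁ w₀ * f13 u₀ z₁ * f13 u₁ z₀ *
          f23 w₀ z₁ * f23 w₁ z₀)
        + rr u₀ w₀ z₀ * rr u₁ w₁ z₁ * f12 u₀ w₁ * f12 u₁ w₀ * f13 u₀ z₁ * f13 u₁ z₀ *
            f23 w₀ z₁ * f23 w₁ z₀))
      = (∑ u₀ : V₁, ∑ u₁ : V₁, ∑ w₀ : V₂, ∑ w₁ : V₂, ∑ z₀ : V₃, ∑ z₁ : V₃,
          ε * (τ u₀ w₀ z₀ * τ u₁ w₁ z₁ * f12 u₀ w₁ * f12 u₁ w₀ * f13 u₀ z₁ * f13 u₁ z₀ *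
            f23 w₀ z₁ * f23 w₁ z₀))
        + ∑ u₀ : V₁, ∑ u₁ : V₁, ∑ w₀ : V₂, ∑ w₁ : V₂, ∑ z₀ : V₃, ∑ z₁ : V₃,
            rr u₀ w₀ z₀ * rr u₁ w₁ z₁ * f12 u₀ w₁ * f12 u₁ w₀ * f13 u₀ z₁ * f13 u₁ z₀ *
              f23 w₀ z₁ * f23 w₁ z₀ :=
    sum6_split _ _ _ (fun _ _ _ _ _ _ => rfl)
  have hcmul : (∑ u₀ : V₁, ∑ u₁ : V₁, ∑ w₀ : V₂, ∑ w₁ : V₂, ∑ z₀ : V₃, ∑ z₁ : V₃,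
      ε * (τ u₀ w₀ z₀ * τ u₁ w₁ z₁ * f12 u₀ w₁ * f12 u₁ w₀ * f13 u₀ z₁ * f13 u₁ z₀ *
        f23 w₀ z₁ * f23 w₁ z₀))
      = ε * ∑ u₀ : V₁, ∑ u₁ : V₁, ∑ w₀ : V₂, ∑ w₁ : V₂, ∑ z₀ : V₃, ∑ z₁ : V₃,
          τ u₀ w₀ z₀ * τ u₁ w₁ z₁ * f12 u₀ w₁ * f12 u₁ w₀ * f13 u₀ z₁ * f13 u₁ z₀ *
            f23 w₀ z₁ * f23 w₁ z₀ := by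
    simp only [← Finset.mul_sum]
  -- apply the two cross bounds
  have hcrossτ := cross_bound f12 (gfun E12) f13 (gfun E13) f23 (gfun E23)
    (density E12) (density E13) (density E23) δ τ hfg12 hfg13 hfg23 hb12 hb13 hb23
    hd12 hd13 hd23 hbτ hδ0.le hS12 hS13 hS23
  have hcrossr := cross_bound f12 (gfun E12) f13 (gfun E13) f23 (gfun E23)
    (density E12) (density E13) (density E23) δ rr hfg12 hfg13 hfg23 hb12 hb13 hb23
    hd12 hd13 hd23 hbrr hδ0.le hS12 hS13 hS23
  rw [hTc] at hcrossτ
  rw [hRcsum] at hcrossr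
  -- triangle count
  have htri := tri_bound f12 (gfun E12) f13 (gfun E13) f23 (gfun E23)
    (density E12) (density E13) (density E23) δ hfg12 hfg13 hfg23 hb13 hb23
    hd12 hd13 hδ0.le hS12 hS13 hS23
  have htri' : Tc ≤ density E12 * density E13 * density E23 * (n1*n2*n3) + 3*η*(n1*n2*n3) := by
    rw [← hTc]
    have he : (∑ x : V₁, ∑ y : V₂, ∑ z : V₃, τ x y z)
        = ∑ x : V₁, ∑ y : V₂, ∑ z : V₃, f12 x y * f13 x z * f23 y z :=
      Finset.sum_congr rfl fun x _ => Finset.sum_congr rfl fun y _ =>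
        Finset.sum_congr rfl fun z _ => hτprod x y z
    rw [he, hηdef]
    exact htri
  -- η bound
  have hηle : η ≤ (d₂/2)^12 := by
    rw [hηdef]
    have h1 : Real.sqrt δ ≤ (d₂/2)^24 := by
      calc Real.sqrt δ ≤ Real.sqrt ((d₂/2)^48) := Real.sqrt_le_sqrt hδ48
      _ = (d₂/2)^24 := by
          rw [show ((d₂/2):ℝ)^48 = (((d₂/2))^24)^2 by ring]
          exact Real.sqrt_sq (by positivity)
    calc Real.sqrt (Real.sqrt δ) ≤ Real.sqrt ((d₂/2)^24) := Real.sqrt_le_sqrt h1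
    _ = (d₂/2)^12 := by
        rw [show ((d₂/2):ℝ)^24 = (((d₂/2))^12)^2 by ring]
        exact Real.sqrt_sq (by positivity)
  -- final arithmetic
  have hfin := final_arith ε d₂ δ η (density E12) (density E13) (density E23) Tc Rc (n1*n2*n3)
    hε0 hε2 hd2 hδ0 hδ48 hη0 hηle
    hd12.1 hd12.2 hdev12.1 hd13.1 hd13.2 hdev13.1 hd23.1 hd23.2 hdev23.1
    (by positivity) hTc0 hTcQ htri' hRc0 hsparse
  calc (∑ u₀ : V₁, ∑ u₁ : V₁, ∑ w₀ : V₂, ∑ w₁ : V₂, ∑ z₀ : V₃, ∑ z₁ : V₃,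
      hfun RT T d₃ u₀ w₀ z₀ * hfun RT T d₃ u₀ w₀ z₁ * hfun RT T d₃ u₀ w₁ z₀ *
        hfun RT T d₃ u₀ w₁ z₁ * hfun RT T d₃ u₁ w₀ z₀ * hfun RT T d₃ u₁ w₀ z₁ *
        hfun RT T d₃ u₁ w₁ z₀ * hfun RT T d₃ u₁ w₁ z₁)
      ≤ ε * (∑ u₀ : V₁, ∑ u₁ : V₁, ∑ w₀ : V₂, ∑ w₁ : V₂, ∑ z₀ : V₃, ∑ z₁ : V₃,
          τ u₀ w₀ z₀ * τ u₁ w₁ z₁ * f12 u₀ w₁ * f12 u₁ w₀ * f13 u₀ z₁ * f13 u₁ z₀ *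
            f23 w₀ z₁ * f23 w₁ z₀)
        + ∑ u₀ : V₁, ∑ u₁ : V₁, ∑ w₀ : V₂, ∑ w₁ : V₂, ∑ z₀ : V₃, ∑ z₁ : V₃,
            rr u₀ w₀ z₀ * rr u₁ w₁ z₁ * f12 u₀ w₁ * f12 u₁ w₀ * f13 u₀ z₁ * f13 u₁ z₀ *
              f23 w₀ z₁ * f23 w₁ z₀ := by
        rw [← hcmul, ← hsplit]; exact hsum1
    _ ≤ ε * (density E12^2 * density E13^2 * density E23^2 * Tc^2 + 6*η*Tc*(n1*n2*n3))
        + (density E12^2 * density E13^2 * density E23^2 * Rc^2 + 6*η*Rc*(n1*n2*n3)) := by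
        have h1 : (∑ u₀ : V₁, ∑ u₁ : V₁, ∑ w₀ : V₂, ∑ w₁ : V₂, ∑ z₀ : V₃, ∑ z₁ : V₃,
            τ u₀ w₀ z₀ * τ u₁ w₁ z₁ * f12 u₀ w₁ * f12 u₁ w₀ * f13 u₀ z₁ * f13 u₁ z₀ *
              f23 w₀ z₁ * f23 w₁ z₀)
            ≤ density E12^2 * density E13^2 * density E23^2 * Tc^2 + 6*η*Tc*(n1*n2*n3) := by
          calc _ ≤ _ := hcrossτ
          _ = density E12^2 * density E13^2 * density E23^2 * Tc^2 + 6*η*Tc*(n1*n2*n3) := by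
              rw [hηdef]
        have h2 : (∑ u₀ : V₁, ∑ u₁ : V₁, ∑ w₀ : V₂, ∑ w₁ : V₂, ∑ z₀ : V₃, ∑ z₁ : V₃,
            rr u₀ w₀ z₀ * rr u₁ w₁ z₁ * f12 u₀ w₁ * f12 u₁ w₀ * f13 u₀ z₁ * f13 u₁ z₀ *
              f23 w₀ z₁ * f23 w₁ z₀)
            ≤ density E12^2 * density E13^2 * density E23^2 * Rc^2 + 6*η*Rc*(n1*n2*n3) := by
          calc _ ≤ _ := hcrossr
          _ = density E12^2 * density E13^2 * density E23^2 * Rc^2 + 6*η*Rc*(n1*n2*n3) := by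
              rw [hηdef]
        exact add_le_add (mul_le_mul_of_nonneg_left h1 hε0.le) h2
    _ ≤ 6*ε*d₂^12*(n1*n2*n3)^2 := hfin
    _ = 6 * ε * d₂ ^ 12 * n1 ^ 2 * n2 ^ 2 * n3 ^ 2 := by ring
end

section
/- Let B be a finite set and let R₀, R₁, R₂ partition (a superset of) pairs with elements c₀, c₁ ∈ C and a set B₃ ⊆ B, such that |N_{R₁}(c₁) ∩ N_{R₀}(c₀) ∩ B₃| ≥ (1 − 2√10 δ^{1/64})|B₃| and |B₃| ≥ δ^{1/32}|B|/8 and |N_{R₁}(c₁) Δ N_{R₁}(c₀)| ≤ 2δ^{1/16}|B|. Then, provided δ is small enough that (1 − 2√10 δ^{1/64})δ^{1/32}/8 > 2δ^{1/16}, this is a contradiction: no such configuration exists, since N_{R₁}(c₁) ∩ N_{R₀}(c₀) ⊆ N_{R₁}(c₁) Δ N_{R₁}(c₀). -/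
open Finset

/-- The final contradiction step: since the color classes at `c₀` are disjoint,
`N_{R₁}(c₁) ∩ N_{R₀}(c₀) ⊆ N_{R₁}(c₁) Δ N_{R₁}(c₀)`, and the stated size bounds are
incompatible, so no such configuration exists. -/
theorem no_such_configuration (α : Type) [DecidableEq α]
    (B B₃ : Finset α) (hBne : B.Nonempty) (hB₃ : B₃ ⊆ B)
    (N₁c₁ N₁c₀ N₀c₀ : Finset α) (δ : ℝ) (hδ : 0 < δ)
    (hdisj : Disjoint N₁c₀ N₀c₀)
    (h1 : (1 - 2 * Real.sqrt 10 * δ ^ ((1:ℝ)/64)) * (B₃.card : ℝ)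
        ≤ ((N₁c₁ ∩ N₀c₀ ∩ B₃).card : ℝ))
    (h2 : δ ^ ((1:ℝ)/32) * (B.card : ℝ) / 8 ≤ (B₃.card : ℝ))
    (h3 : ((symmDiff N₁c₁ N₁c₀).card : ℝ) ≤ 2 * δ ^ ((1:ℝ)/16) * (B.card : ℝ))
    (hsmall : 2 * δ ^ ((1:ℝ)/16)
        < (1 - 2 * Real.sqrt 10 * δ ^ ((1:ℝ)/64)) * δ ^ ((1:ℝ)/32) / 8) :
    False := by
  set a : ℝ := 1 - 2 * Real.sqrt 10 * δ ^ ((1:ℝ)/64) with ha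
  clear_value a
  have hpos : (0:ℝ) < 2 * δ ^ ((1:ℝ)/16) := by positivity
  have haδ : 0 < a * δ ^ ((1:ℝ)/32) / 8 := lt_trans hpos hsmall
  have hδ32 : (0:ℝ) < δ ^ ((1:ℝ)/32) := by positivity
  have hapos : 0 < a := by
    by_contra h
    push_neg at h
    have := mul_nonpos_of_nonpos_of_nonneg (mul_nonpos_of_nonpos_of_nonneg h hδ32.le) (by norm_num : (0:ℝ) ≤ 1/8)
    linarith [haδ]
  have hsub : N₁c₁ ∩ N₀c₀ ∩ B₃ ⊆ symmDiff N₁c₁ N₁c₀ := by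
    intro x hx
    simp only [mem_inter] at hx
    have hx1 : x ∈ N₁c₁ := hx.1.1
    have hx0 : x ∉ N₁c₀ := fun h => (Finset.disjoint_left.mp hdisj h) hx.1.2
    simp [Finset.mem_symmDiff, hx1, hx0]
  have hcard : ((N₁c₁ ∩ N₀c₀ ∩ B₃).card : ℝ) ≤ ((symmDiff N₁c₁ N₁c₀).card : ℝ) := by
    exact_mod_cast Finset.card_le_card hsub
  have hBpos : (0:ℝ) < B.card := by
    exact_mod_cast Finset.card_pos.mpr hBne
  have c1 : a * (δ ^ ((1:ℝ)/32) * (B.card : ℝ) / 8) ≤ a * (B₃.card : ℝ) :=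
    mul_le_mul_of_nonneg_left h2 hapos.le
  have key := mul_lt_mul_of_pos_right hsmall hBpos
  nlinarith [key, c1, hcard, h1, h3]
end
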